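/- arXiv:1306.2423 — 7 statements merged into one kernel-verified Lean document; each statement's English description precedes it below -/
import Mathlib

section
/- For an n-by-n complex matrix A and an m-by-m complex matrix B, the numerical radius of the Kronecker product satisfies w(A ⊗ B) ≤ min{‖A‖·w(B), ‖B‖·w(A)}, where ‖·‖ is the operator norm. -/
set_option linter.unusedSectionVars false
set_option maxHeartbeats 1000000
set_option synthInstance.maxHeartbeats 400000

open scoped Kronecker InnerProductSpace
open Module.End Matrix

/-- The operator norm (spectral norm) of a complex matrix, viewed as an operator
on Euclidean space. -/
noncomputable def opNorm {n : Type*} [Fintype n] [DecidableEq n] (A : Matrix n n ℂ) : ℝ :=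
  ‖Matrix.toEuclideanCLM (𝕜 := ℂ) A‖

/-- The numerical radius of a complex matrix: the supremum of `|⟨Ax, x⟩|` over
unit vectors `x`. -/
noncomputable def numRadius {n : Type*} [Fintype n] [DecidableEq n] (A : Matrix n n ℂ) : ℝ :=
  sSup {r : ℝ | ∃ x : EuclideanSpace ℂ n, ‖x‖ = 1 ∧
    r = ‖⟪x, Matrix.toEuclideanLin A x⟫_ℂ‖}

namespace NrAux

variable {ι κ : Type*} [Fintype ι] [DecidableEq ι] [Fintype κ] [DecidableEq κ]

/-- quadratic form as a raw sum -/
noncomputable def Q {α : Type*} [Fintype α] (M : Matrix α α ℂ) (x : α → ℂ) : ℂ :=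
  ∑ i, ∑ j, (starRingEnd ℂ) (x i) * M i j * x j

noncomputable def Nsq {α : Type*} [Fintype α] (x : α → ℂ) : ℝ := ∑ i, Complex.normSq (x i)

lemma Nsq_nonneg {α : Type*} [Fintype α] (x : α → ℂ) : 0 ≤ Nsq x :=
  Finset.sum_nonneg fun i _ => Complex.normSq_nonneg _

lemma inner_eq (x y : EuclideanSpace ℂ ι) : ⟪x, y⟫_ℂ = ∑ i, (starRingEnd ℂ) (x i) * y i := by
  simp [PiLp.inner_apply, RCLike.inner_apply, mul_comm]

lemma toEuclideanLin_apply' (M : Matrix ι ι ℂ) (x : EuclideanSpace ℂ ι) (i : ι) :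
    Matrix.toEuclideanLin M x i = ∑ j, M i j * x j := by
  simp [Matrix.toEuclideanLin_apply, Matrix.mulVec, dotProduct]

lemma bridge_Q (M : Matrix ι ι ℂ) (x : EuclideanSpace ℂ ι) :
    ⟪x, Matrix.toEuclideanLin M x⟫_ℂ = Q M x := by
  rw [inner_eq]
  simp only [Q, toEuclideanLin_apply', Finset.mul_sum, mul_assoc]

lemma bridge_N (x : EuclideanSpace ℂ ι) : ‖x‖ ^ 2 = Nsq x := by
  rw [EuclideanSpace.norm_eq, Real.sq_sqrt (by positivity)]
  simp [Nsq, Complex.sq_norm]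

lemma numRadius_nonneg (B : Matrix ι ι ℂ) : 0 ≤ numRadius B := by
  apply Real.sSup_nonneg
  rintro r ⟨x, hx, rfl⟩
  positivity

lemma bddAbove_numRadius (B : Matrix ι ι ℂ) :
    BddAbove {r : ℝ | ∃ x : EuclideanSpace ℂ ι, ‖x‖ = 1 ∧
      r = ‖⟪x, Matrix.toEuclideanLin B x⟫_ℂ‖} := by
  refine ⟨opNorm B, ?_⟩
  rintro r ⟨x, hx, rfl⟩
  have h1 : ‖⟪x, Matrix.toEuclideanLin B x⟫_ℂ‖ ≤ ‖x‖ * ‖Matrix.toEuclideanLin B x‖ := by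
    simpa using norm_inner_le_norm (𝕜 := ℂ) x (Matrix.toEuclideanLin B x)
  have h2 : ‖Matrix.toEuclideanLin B x‖ ≤ opNorm B * ‖x‖ := by
    have := (Matrix.toEuclideanCLM (𝕜 := ℂ) B).le_opNorm x
    rw [show (Matrix.toEuclideanCLM (𝕜 := ℂ) B) x = Matrix.toEuclideanLin B x from ?_] at this
    · exact this
    · rw [← Matrix.coe_toEuclideanCLM_eq_toEuclideanLin]; rfl
  calc ‖⟪x, Matrix.toEuclideanLin B x⟫_ℂ‖ ≤ ‖x‖ * (opNorm B * ‖x‖) :=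
        h1.trans (by exact mul_le_mul_of_nonneg_left h2 (norm_nonneg x))
    _ = opNorm B := by rw [hx]; ring

lemma abs_Q_le (B : Matrix ι ι ℂ) (y : EuclideanSpace ℂ ι) :
    ‖Q B y‖ ≤ numRadius B * Nsq y := by
  rcases eq_or_ne y 0 with rfl | hy
  · simp [Q, Nsq]
  · set u : EuclideanSpace ℂ ι := (‖y‖⁻¹ : ℂ) • y with hu
    have hnu : ‖u‖ = 1 := by
      rw [hu, norm_smul]
      simp [norm_inv, inv_mul_cancel₀ (norm_ne_zero_iff.mpr hy)]
    have hmem : ‖⟪u, Matrix.toEuclideanLin B u⟫_ℂ‖ ≤ numRadius B :=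
      le_csSup (bddAbove_numRadius B) ⟨u, hnu, rfl⟩
    have hQ : Q B (u : ι → ℂ) = (‖y‖⁻¹ : ℂ)^2 * Q B y := by
      simp only [Q, hu]
      rw [Finset.mul_sum]
      congr 1; ext i
      rw [Finset.mul_sum]
      congr 1; ext j
      have : (starRingEnd ℂ) ((‖y‖⁻¹ : ℂ) * y i) = (‖y‖⁻¹:ℂ) * (starRingEnd ℂ) (y i) := by
        rw [_root_.map_mul]
        congr 1
        simp [Complex.conj_ofReal]
      show (starRingEnd ℂ) ((‖y‖⁻¹ : ℂ) * y i) * B i j * ((‖y‖⁻¹ : ℂ) * y j) = _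
      rw [this]; ring
    rw [bridge_Q, hQ] at hmem
    have hyn : (0:ℝ) < ‖y‖ := norm_pos_iff.mpr hy
    rw [norm_mul] at hmem
    have habs : ‖(‖y‖⁻¹ : ℂ)^2‖ = (‖y‖^2)⁻¹ := by
      rw [norm_pow]
      simp [norm_inv, Complex.norm_real, abs_of_pos hyn, ← inv_pow]
    rw [habs] at hmem
    have h3 : ‖Q B y‖ ≤ numRadius B * ‖y‖^2 := by
      have h2 := mul_le_mul_of_nonneg_right hmem (le_of_lt (by positivity : (0:ℝ) < ‖y‖^2))
      calc ‖Q B y‖ = (‖y‖ ^ 2)⁻¹ * ‖Q B y‖ * ‖y‖^2 := by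
            field_simp
        _ ≤ numRadius B * ‖y‖^2 := h2
    calc ‖Q B y‖ ≤ numRadius B * ‖y‖^2 := h3
      _ = numRadius B * Nsq y := by rw [bridge_N]


section Abstract

variable {E : Type*} [NormedAddCommGroup E] [InnerProductSpace ℂ E] [FiniteDimensional ℂ E]

lemma isometry_eigenbasis (T : E →ₗ[ℂ] E)
    (hinner : ∀ x y : E, ⟪T x, T y⟫_ℂ = ⟪x, y⟫_ℂ) :
    ∃ (b : OrthonormalBasis (Fin (Module.finrank ℂ E)) ℂ E)
      (μ : Fin (Module.finrank ℂ E) → ℂ),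
      (∀ k, ‖μ k‖ = 1) ∧ (∀ k, T (b k) = μ k • b k) := by
  classical
  have hnorm : ∀ x : E, ‖T x‖ = ‖x‖ := by
    intro x
    rw [norm_eq_sqrt_re_inner (𝕜 := ℂ) (T x), norm_eq_sqrt_re_inner (𝕜 := ℂ) x, hinner]
  have hinj : Function.Injective T := by
    intro a b hab
    have h := hnorm (a - b)
    rw [_root_.map_sub, hab, sub_self, norm_zero] at h
    exact sub_eq_zero.mp (norm_eq_zero.mp h.symm)
  have hpre : ∀ (μ : ℂ), ∀ u ∈ eigenspace T μ, ∃ u' ∈ eigenspace T μ, T u' = u := by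
    intro μ u hu
    rcases eq_or_ne μ 0 with rfl | hμ
    · rw [mem_eigenspace_iff, zero_smul] at hu
      have hu0 : u = 0 := hinj (by rw [hu, _root_.map_zero])
      exact ⟨0, Submodule.zero_mem _, by rw [_root_.map_zero, hu0]⟩
    · refine ⟨μ⁻¹ • u, Submodule.smul_mem _ _ hu, ?_⟩
      rw [_root_.map_smul, mem_eigenspace_iff.mp hu, smul_smul, inv_mul_cancel₀ hμ, one_smul]
  have hinv : ∀ v ∈ (⨆ μ, eigenspace T μ)ᗮ, T v ∈ (⨆ μ, eigenspace T μ)ᗮ := by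
    have key : ∀ (μ : ℂ), ∀ v ∈ (eigenspace T μ)ᗮ, T v ∈ (eigenspace T μ)ᗮ := by
      intro μ v hv
      rw [Submodule.mem_orthogonal]
      intro u hu
      obtain ⟨u', hu', hTu'⟩ := hpre μ u hu
      rw [← hTu', hinner]
      exact hv u' hu'
    intro v hv
    rw [← Submodule.iInf_orthogonal] at hv ⊢
    exact T.iInf_invariant key v hv
  have hbot : (⨆ μ, eigenspace T μ)ᗮ = ⊥ := by
    by_contra hne
    haveI : Nontrivial ((⨆ μ, eigenspace T μ)ᗮ : Submodule ℂ E) :=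
      Submodule.nontrivial_iff_ne_bot.mpr hne
    obtain ⟨c, hc⟩ := Module.End.exists_eigenvalue (T.restrict hinv)
    obtain ⟨v, hv, hv0⟩ := hc.exists_hasEigenvector
    have hvE : (v : E) ∈ eigenspace T c :=
      eigenspace_restrict_le_eigenspace T hinv c ⟨v, hv, rfl⟩
    have hvp : (v : E) ∈ (⨆ μ, eigenspace T μ)ᗮ := v.2
    have hv00 : (v : E) = 0 := by
      have h0 : (v : E) ∈ (⨆ μ, eigenspace T μ) := le_iSup (fun μ => eigenspace T μ) c hvE
      exact inner_self_eq_zero.mp ((Submodule.mem_orthogonal _ _).mp hvp (v : E) h0)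
    exact hv0 (Subtype.coe_injective hv00)
  have habs1 : ∀ (μ : ℂ) (v : E), v ∈ eigenspace T μ → v ≠ 0 → ‖μ‖ = 1 := by
    intro μ v hv hv0
    have h := hnorm v
    rw [mem_eigenspace_iff.mp hv, norm_smul] at h
    have hvn : ‖v‖ ≠ 0 := norm_ne_zero_iff.mpr hv0
    have h1 : ‖μ‖ = 1 := by
      rcases mul_eq_mul_right_iff.mp (h.trans (one_mul ‖v‖).symm) with h' | h'
      · exact h'
      · exact absurd h' hvn
    simpa using h1
  have hfam : OrthogonalFamily ℂ (fun μ : ℂ => eigenspace T μ)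
      (fun μ => (eigenspace T μ).subtypeₗᵢ) := by
    rintro μ ν hμν ⟨v, hv⟩ ⟨w, hw⟩
    by_cases hv0 : v = 0
    · simp [hv0]
    by_cases hw0 : w = 0
    · simp [hw0]
    show ⟪v, w⟫_ℂ = 0
    by_contra hvw
    have h1 : ⟪T v, T w⟫_ℂ = ⟪v, w⟫_ℂ := hinner v w
    rw [mem_eigenspace_iff.mp hv, mem_eigenspace_iff.mp hw, inner_smul_left,
      inner_smul_right] at h1
    have h2 : (starRingEnd ℂ) μ * ν = 1 := by
      have h1' : ((starRingEnd ℂ) μ * ν - 1) * ⟪v, w⟫_ℂ = 0 := by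
        rw [sub_mul, one_mul, mul_assoc, h1, sub_self]
      rcases mul_eq_zero.mp h1' with h' | h'
      · linear_combination h'
      · exact absurd h' hvw
    have hμ1 : ‖μ‖ = 1 := habs1 μ v hv hv0
    have h3 : (starRingEnd ℂ) μ * μ = 1 := by
      rw [mul_comm, Complex.mul_conj]
      norm_cast
      rw [Complex.normSq_eq_norm_sq, hμ1]
      norm_num
    have hμ0 : (starRingEnd ℂ) μ ≠ 0 := by
      simp only [ne_eq, map_eq_zero]
      intro h
      rw [h] at hμ1
      simp at hμ1
    exact hμν (mul_left_cancel₀ hμ0 (h2.trans h3.symm)).symm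
  have hfam' : OrthogonalFamily ℂ (fun μ : Eigenvalues T => eigenspace T μ)
      (fun μ => (eigenspace T μ).subtypeₗᵢ) := hfam.comp Subtype.coe_injective
  have hbot' : (⨆ μ : Eigenvalues T, eigenspace T μ)ᗮ = ⊥ := by
    show (⨆ μ : { μ // eigenspace T μ ≠ ⊥ }, eigenspace T μ)ᗮ = ⊥
    rw [iSup_ne_bot_subtype, hbot]
  have hint : DirectSum.IsInternal fun μ : Eigenvalues T => eigenspace T μ :=
    hfam'.isInternal_iff.mpr hbot'
  have hn : Module.finrank ℂ E = Module.finrank ℂ E := rfl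
  let b0 : OrthonormalBasis (Fin (Module.finrank ℂ E)) ℂ E :=
    DirectSum.IsInternal.subordinateOrthonormalBasis hn hint hfam'
  have hsub : ∀ k, b0 k ∈ eigenspace T
      ((DirectSum.IsInternal.subordinateOrthonormalBasisIndex hn hint k hfam' : Eigenvalues T) : ℂ) :=
    fun k => DirectSum.IsInternal.subordinateOrthonormalBasis_subordinate hn hint k hfam'
  refine ⟨b0, fun k =>
    ((DirectSum.IsInternal.subordinateOrthonormalBasisIndex hn hint k hfam' : Eigenvalues T) : ℂ),
    ?_, ?_⟩
  · intro k
    have hb0 : b0 k ≠ 0 := by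
      have hno := b0.orthonormal.1 k
      intro h
      rw [h, norm_zero] at hno
      norm_num at hno
    exact habs1 _ _ (hsub k) hb0
  · intro k
    exact mem_eigenspace_iff.mp (hsub k)

end Abstract

lemma toEuclideanCLM_coe (U : Matrix ι ι ℂ) (x : EuclideanSpace ℂ ι) :
    Matrix.toEuclideanCLM (𝕜 := ℂ) U x = Matrix.toEuclideanLin U x := by
  rw [← Matrix.coe_toEuclideanCLM_eq_toEuclideanLin]; rfl

/-- orthonormal family of vectors gives `Mᴴ * M = 1` for the matrix of columns -/
lemma conjTranspose_mul_self_eq_one (b : ι → EuclideanSpace ℂ ι) (hb : Orthonormal ℂ b) :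
    (Matrix.of fun i k => b k i)ᴴ * (Matrix.of fun i k => b k i) = 1 := by
  ext k l
  rw [Matrix.mul_apply, Matrix.one_apply]
  have := (orthonormal_iff_ite.mp hb) k l
  rw [inner_eq] at this
  simpa [Matrix.conjTranspose_apply] using this

lemma half_unitary (A : Matrix ι ι ℂ) (hA : opNorm A ≤ 1) :
    ∃ U V : Matrix ι ι ℂ, U ∈ Matrix.unitaryGroup ι ℂ ∧ V ∈ Matrix.unitaryGroup ι ℂ ∧
      A = (2⁻¹ : ℂ) • (U + V) := by
  classical
  have hE : 0 = 0 := rfl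
  let C : EuclideanSpace ℂ ι →L[ℂ] EuclideanSpace ℂ ι := Matrix.toEuclideanCLM (𝕜 := ℂ) A
  have hCA : ∀ x, C x = Matrix.toEuclideanLin A x := fun x => toEuclideanCLM_coe A x
  -- the Gram operator
  let P : Matrix ι ι ℂ := Aᴴ * A
  have hPC : (Matrix.toEuclideanCLM (𝕜 := ℂ) P) = star C * C := by
    show Matrix.toEuclideanCLM (𝕜 := ℂ) (Aᴴ * A) = _
    rw [_root_.map_mul, ← Matrix.star_eq_conjTranspose, map_star]
  have hsa : IsSelfAdjoint (Matrix.toEuclideanCLM (𝕜 := ℂ) P) := by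
    rw [hPC]; exact IsSelfAdjoint.star_mul_self C
  have hsym : (Matrix.toEuclideanLin P).IsSymmetric := by
    rw [← Matrix.coe_toEuclideanCLM_eq_toEuclideanLin]
    exact (ContinuousLinearMap.isSelfAdjoint_iff_isSymmetric).mp hsa
  have hgram : ∀ x y : EuclideanSpace ℂ ι, ⟪Matrix.toEuclideanLin A x, Matrix.toEuclideanLin A y⟫_ℂ
      = ⟪x, Matrix.toEuclideanLin P y⟫_ℂ := by
    intro x y
    rw [← hCA, ← hCA, ← toEuclideanCLM_coe, hPC]
    rw [← ContinuousLinearMap.adjoint_inner_right, ← ContinuousLinearMap.star_eq_adjoint]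
    rfl
  -- eigen decomposition of P
  have hn : Module.finrank ℂ (EuclideanSpace ℂ ι) = Fintype.card ι := finrank_euclideanSpace
  let p : OrthonormalBasis ι ℂ (EuclideanSpace ℂ ι) := (hsym.eigenvectorBasis hn).reindex (Fintype.equivFin ι).symm
  let t : ι → ℝ := fun k => hsym.eigenvalues hn ((Fintype.equivFin ι) k)
  have hPp : ∀ k, Matrix.toEuclideanLin P (p k) = (t k : ℂ) • p k := by
    intro k
    have h1 : p k = hsym.eigenvectorBasis hn ((Fintype.equivFin ι) k) := by
      show (hsym.eigenvectorBasis hn).reindex (Fintype.equivFin ι).symm k = _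
      rw [OrthonormalBasis.coe_reindex]
      simp
    rw [h1, hsym.apply_eigenvectorBasis hn]
    rfl
  have hApA : ∀ k l, ⟪Matrix.toEuclideanLin A (p k), Matrix.toEuclideanLin A (p l)⟫_ℂ
      = if k = l then (t k : ℂ) else 0 := by
    intro k l
    rw [hgram, hPp, inner_smul_right, orthonormal_iff_ite.mp p.orthonormal]
    by_cases h : k = l <;> simp [h]
  have hnormt : ∀ k, ‖Matrix.toEuclideanLin A (p k)‖^2 = t k := by
    intro k
    have h1 : ⟪Matrix.toEuclideanLin A (p k), Matrix.toEuclideanLin A (p k)⟫_ℂ = (t k : ℂ) := by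
      simpa using hApA k k
    have h2 : (‖Matrix.toEuclideanLin A (p k)‖ : ℂ)^2 = (t k : ℂ) := by
      rw [← h1, inner_self_eq_norm_sq_to_K]
      norm_cast
    exact_mod_cast h2
  have ht0 : ∀ k, 0 ≤ t k := by
    intro k
    rw [← hnormt k]; positivity
  have ht1 : ∀ k, t k ≤ 1 := by
    intro k
    have h3 := hnormt k
    have h4 : ‖Matrix.toEuclideanLin A (p k)‖ ≤ 1 := by
      rw [← hCA]
      calc ‖C (p k)‖ ≤ ‖C‖ * ‖p k‖ := C.le_opNorm (p k)
        _ ≤ 1 := by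
            rw [p.orthonormal.1 k, mul_one]
            exact hA
    nlinarith [norm_nonneg (Matrix.toEuclideanLin A (p k))]
  -- the partial isometry columns
  let lam : ι → ℝ := fun k => Real.sqrt (t k)
  let q₀ : ι → EuclideanSpace ℂ ι := fun k => ((lam k : ℂ)⁻¹) • Matrix.toEuclideanLin A (p k)
  have hq₀ : Orthonormal ℂ (Set.restrict {k | t k ≠ 0} q₀) := by
    rw [orthonormal_iff_ite]
    rintro ⟨k, hk⟩ ⟨l, hl⟩
    have hk' : t k ≠ 0 := hk
    show ⟪q₀ k, q₀ l⟫_ℂ = _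
    rw [inner_smul_left, inner_smul_right, hApA]
    by_cases h : k = l
    · subst h
      simp only [if_pos rfl, if_true, eq_self_iff_true]
      have hlk : lam k ≠ 0 := by
        intro h0
        exact hk' (le_antisymm (Real.sqrt_eq_zero'.mp h0) (ht0 k))
      rw [_root_.map_inv₀, Complex.conj_ofReal]
      have hkey : ((lam k : ℂ))⁻¹ * (((lam k : ℂ))⁻¹ * (t k : ℂ)) = 1 := by
        have hts : (lam k) * (lam k) = t k := Real.mul_self_sqrt (ht0 k)
        have hlkC : (lam k : ℂ) ≠ 0 := by exact_mod_cast hlk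
        field_simp
        norm_cast
        linarith [hts]
      exact hkey
    · rw [if_neg h, if_neg (by simpa [Subtype.ext_iff] using h)]
      ring
  obtain ⟨q, hq⟩ := hq₀.exists_orthonormalBasis_extension_of_card_eq hn
  have hAp : ∀ k, Matrix.toEuclideanLin A (p k) = (lam k : ℂ) • q k := by
    intro k
    by_cases hk : t k = 0
    · have h1 := hApA k k
      simp only [if_pos rfl, hk] at h1
      have hz : Matrix.toEuclideanLin A (p k) = 0 := by
        rw [← inner_self_eq_zero (𝕜 := ℂ)]
        rw [h1]; norm_num
      have hlamk : (lam k : ℂ) = 0 := by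
        show ((Real.sqrt (t k) : ℝ) : ℂ) = 0
        rw [hk, Real.sqrt_zero]
        norm_num
      rw [hz, hlamk, zero_smul]
    · have hqk : q k = q₀ k := hq k hk
      have hlk : (lam k : ℂ) ≠ 0 := by
        simp only [ne_eq, Complex.ofReal_eq_zero]
        intro h0
        exact hk (le_antisymm (Real.sqrt_eq_zero'.mp h0) (ht0 k))
      rw [hqk]
      show _ = (lam k : ℂ) • (((lam k : ℂ))⁻¹ • Matrix.toEuclideanLin A (p k))
      rw [smul_smul, mul_inv_cancel₀ hlk, one_smul]
  -- matrices
  let Mp : Matrix ι ι ℂ := Matrix.of fun i k => p k i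
  let Mq : Matrix ι ι ℂ := Matrix.of fun i k => q k i
  have hMp1 : Mpᴴ * Mp = 1 := conjTranspose_mul_self_eq_one p p.orthonormal
  have hMq1 : Mqᴴ * Mq = 1 := conjTranspose_mul_self_eq_one q q.orthonormal
  have hMp1' : Mp * Mpᴴ = 1 := mul_eq_one_comm.mp hMp1
  have hMq1' : Mq * Mqᴴ = 1 := mul_eq_one_comm.mp hMq1
  have hAMp : A * Mp = Mq * Matrix.diagonal (fun k => (lam k : ℂ)) := by
    ext i k
    rw [Matrix.mul_apply, Matrix.mul_diagonal]
    have h5 : Matrix.toEuclideanLin A (p k) i = (lam k : ℂ) * q k i := by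
      rw [hAp k]
      rfl
    rw [toEuclideanLin_apply'] at h5
    simpa [Mp, Mq, mul_comm] using h5
  have hAfac : A = Mq * Matrix.diagonal (fun k => (lam k : ℂ)) * Mpᴴ := by
    calc A = A * (Mp * Mpᴴ) := by rw [hMp1', Matrix.mul_one]
      _ = (A * Mp) * Mpᴴ := by rw [Matrix.mul_assoc]
      _ = Mq * Matrix.diagonal (fun k => (lam k : ℂ)) * Mpᴴ := by rw [hAMp]
  -- the unitary phases
  let c : ι → ℂ := fun k => ⟨lam k, Real.sqrt (1 - t k)⟩
  have hlam2 : ∀ k, lam k ^ 2 = t k := fun k => Real.sq_sqrt (ht0 k)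
  have hcc : ∀ k, c k * (starRingEnd ℂ) (c k) = 1 := by
    intro k
    rw [Complex.mul_conj]
    norm_cast
    rw [Complex.normSq_mk]
    have h1 : Real.sqrt (1 - t k) * Real.sqrt (1 - t k) = 1 - t k :=
      Real.mul_self_sqrt (by linarith [ht1 k])
    have h2 : lam k * lam k = t k := Real.mul_self_sqrt (ht0 k)
    rw [h1, h2]; ring
  have hcsum : ∀ k, c k + (starRingEnd ℂ) (c k) = 2 * (lam k : ℂ) := by
    intro k
    rw [Complex.add_conj]
    show ((2 * (c k).re : ℝ) : ℂ) = _
    have hre : (c k).re = lam k := rfl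
    rw [hre]
    push_cast
    ring
  -- sandwich unitarity
  have sandwich : ∀ d : ι → ℂ, (∀ k, d k * (starRingEnd ℂ) (d k) = 1) →
      (Mq * Matrix.diagonal d * Mpᴴ) ∈ Matrix.unitaryGroup ι ℂ := by
    intro d hd
    rw [Matrix.mem_unitaryGroup_iff, Matrix.star_eq_conjTranspose]
    have hct : (Mq * Matrix.diagonal d * Mpᴴ)ᴴ = Mp * Matrix.diagonal (star d) * Mqᴴ := by
      rw [Matrix.conjTranspose_mul, Matrix.conjTranspose_mul, Matrix.conjTranspose_conjTranspose,
        Matrix.diagonal_conjTranspose, Matrix.mul_assoc]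
    rw [hct]
    have hdd : Matrix.diagonal d * Matrix.diagonal (star d) = 1 := by
      rw [Matrix.diagonal_mul_diagonal]
      have he : (fun i => d i * star d i) = (fun _ : ι => (1 : ℂ)) := funext fun k => hd k
      rw [he, Matrix.diagonal_one]
    calc Mq * Matrix.diagonal d * Mpᴴ * (Mp * Matrix.diagonal (star d) * Mqᴴ)
        = Mq * Matrix.diagonal d * (Mpᴴ * Mp) * Matrix.diagonal (star d) * Mqᴴ := by
          simp only [Matrix.mul_assoc]
      _ = Mq * (Matrix.diagonal d * Matrix.diagonal (star d)) * Mqᴴ := by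
          rw [hMp1, Matrix.mul_one]
          simp only [Matrix.mul_assoc]
      _ = 1 := by rw [hdd, Matrix.mul_one, hMq1']
  -- the two unitaries
  refine ⟨Mq * Matrix.diagonal c * Mpᴴ, Mq * Matrix.diagonal (star c) * Mpᴴ,
    sandwich c hcc, sandwich (star c) (by
      intro k
      have := hcc k
      show (starRingEnd ℂ) (c k) * (starRingEnd ℂ) ((starRingEnd ℂ) (c k)) = 1
      rw [Complex.conj_conj]
      linear_combination this), ?_⟩
  have hsum : Mq * Matrix.diagonal c * Mpᴴ + Mq * Matrix.diagonal (star c) * Mpᴴ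
      = Mq * (Matrix.diagonal c + Matrix.diagonal (star c)) * Mpᴴ := by
    rw [Matrix.mul_add, Matrix.add_mul]
  rw [hsum]
  have hdsum : Matrix.diagonal c + Matrix.diagonal (star c)
      = (2 : ℂ) • Matrix.diagonal (fun k => (lam k : ℂ)) := by
    have he : (fun i => c i + star c i) = (2 : ℂ) • (fun k => (lam k : ℂ)) := by
      funext k
      have h := hcsum k
      simpa [Pi.smul_apply, smul_eq_mul] using h
    rw [Matrix.diagonal_add, he, Matrix.diagonal_smul]
  rw [hdsum]
  rw [Matrix.mul_smul, Matrix.smul_mul, smul_smul]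
  norm_num
  exact hAfac


lemma sum_swap4 {α β γ δ : Type*} [Fintype α] [Fintype β] [Fintype γ] [Fintype δ]
    (f : α → β → γ → δ → ℂ) :
    (∑ a, ∑ b, ∑ i, ∑ j, f a b i j) = ∑ i, ∑ j, ∑ a, ∑ b, f a b i j := by
  calc (∑ a, ∑ b, ∑ i, ∑ j, f a b i j)
      = ∑ a, ∑ i, ∑ b, ∑ j, f a b i j := Finset.sum_congr rfl (fun a _ => Finset.sum_comm)
    _ = ∑ i, ∑ a, ∑ b, ∑ j, f a b i j := Finset.sum_comm
    _ = ∑ i, ∑ a, ∑ j, ∑ b, f a b i j := Finset.sum_congr rfl (fun i _ =>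
        Finset.sum_congr rfl (fun a _ => Finset.sum_comm))
    _ = ∑ i, ∑ j, ∑ a, ∑ b, f a b i j := Finset.sum_congr rfl (fun i _ => Finset.sum_comm)

lemma sum_rot3 {α β : Type*} [Fintype α] [Fintype β] (f : α → α → β → ℂ) :
    (∑ i, ∑ j, ∑ k, f i j k) = ∑ k, ∑ i, ∑ j, f i j k := by
  calc (∑ i, ∑ j, ∑ k, f i j k) = ∑ i, ∑ k, ∑ j, f i j k :=
        Finset.sum_congr rfl (fun i _ => Finset.sum_comm)
    _ = ∑ k, ∑ i, ∑ j, f i j k := Finset.sum_comm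

/-- unitary case of the key bound -/
lemma unitary_Q_bound (U : Matrix ι ι ℂ) (hU : U ∈ Matrix.unitaryGroup ι ℂ)
    (B : Matrix κ κ ℂ) (x : (ι × κ) → ℂ) :
    ‖Q (U ⊗ₖ B) x‖ ≤ numRadius B * Nsq x := by
  classical
  -- eigen decomposition of U
  have hsCC : star (Matrix.toEuclideanCLM (𝕜 := ℂ) U) * Matrix.toEuclideanCLM (𝕜 := ℂ) U = 1 := by
    rw [← map_star, ← _root_.map_mul, hU.1, _root_.map_one]
  have hinner : ∀ x y : EuclideanSpace ℂ ι,
      ⟪Matrix.toEuclideanLin U x, Matrix.toEuclideanLin U y⟫_ℂ = ⟪x, y⟫_ℂ := by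
    intro a c
    rw [← toEuclideanCLM_coe, ← toEuclideanCLM_coe, ← ContinuousLinearMap.adjoint_inner_right,
      ← ContinuousLinearMap.star_eq_adjoint]
    have h2 : star (Matrix.toEuclideanCLM (𝕜 := ℂ) U) ((Matrix.toEuclideanCLM (𝕜 := ℂ) U) c)
        = (star (Matrix.toEuclideanCLM (𝕜 := ℂ) U) * Matrix.toEuclideanCLM (𝕜 := ℂ) U) c := rfl
    rw [h2, hsCC]
    rfl
  obtain ⟨b0, μ0, hμ0, heig0⟩ := isometry_eigenbasis (Matrix.toEuclideanLin U) hinner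
  have hn : Module.finrank ℂ (EuclideanSpace ℂ ι) = Fintype.card ι := finrank_euclideanSpace
  let e : Fin (Module.finrank ℂ (EuclideanSpace ℂ ι)) ≃ ι :=
    (Fintype.equivFinOfCardEq hn.symm).symm
  let b : OrthonormalBasis ι ℂ (EuclideanSpace ℂ ι) := b0.reindex e
  let μ : ι → ℂ := fun k => μ0 (e.symm k)
  have hμ : ∀ k, ‖μ k‖ = 1 := fun k => hμ0 _
  have heig : ∀ k, Matrix.toEuclideanLin U (b k) = μ k • b k := by
    intro k
    show Matrix.toEuclideanLin U (b0.reindex e k) = _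
    rw [OrthonormalBasis.coe_reindex]
    exact heig0 (e.symm k)
  -- matrix representation of U
  let M : Matrix ι ι ℂ := Matrix.of fun i k => b k i
  have hM1 : Mᴴ * M = 1 := conjTranspose_mul_self_eq_one b b.orthonormal
  have hM1' : M * Mᴴ = 1 := mul_eq_one_comm.mp hM1
  have hUM : U * M = M * Matrix.diagonal μ := by
    ext i k
    rw [Matrix.mul_apply, Matrix.mul_diagonal]
    have h5 : Matrix.toEuclideanLin U (b k) i = μ k * b k i := by
      rw [heig k]; rfl
    rw [toEuclideanLin_apply'] at h5
    simpa [M, mul_comm] using h5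
  have hUfac : U = M * Matrix.diagonal μ * Mᴴ := by
    calc U = U * (M * Mᴴ) := by rw [hM1', Matrix.mul_one]
      _ = (U * M) * Mᴴ := by rw [Matrix.mul_assoc]
      _ = M * Matrix.diagonal μ * Mᴴ := by rw [hUM]
  have hUij : ∀ i j, U i j = ∑ k, μ k * (b k i * (starRingEnd ℂ) (b k j)) := by
    intro i j
    rw [hUfac]
    rw [Matrix.mul_apply]
    congr 1
    funext k
    rw [Matrix.mul_diagonal, Matrix.conjTranspose_apply]
    simp [M]
    ring
  have hrow : ∀ i j, (∑ k, b k i * (starRingEnd ℂ) (b k j)) = if i = j then 1 else 0 := by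
    intro i j
    have h0 := congrFun (congrFun hM1' i) j
    rw [Matrix.mul_apply] at h0
    rw [show (1 : Matrix ι ι ℂ) i j = if i = j then 1 else 0 from Matrix.one_apply] at h0
    rw [← h0]
    apply Finset.sum_congr rfl
    intro k _
    rw [Matrix.conjTranspose_apply]
    rfl
  -- slices
  let y : ι → κ → ℂ := fun k a => ∑ i, (starRingEnd ℂ) (b k i) * x (i, a)
  -- the G matrix
  let G : ι → ι → ℂ := fun i j => ∑ a, ∑ c, (starRingEnd ℂ) (x (i, a)) * B a c * x (j, c)
  have hQy : ∀ k, Q B (y k) = ∑ i, ∑ j, b k i * (starRingEnd ℂ) (b k j) * G i j := by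
    intro k
    show (∑ a, ∑ c, (starRingEnd ℂ) (y k a) * B a c * y k c) = _
    have hconj : ∀ a, (starRingEnd ℂ) (y k a) = ∑ i, b k i * (starRingEnd ℂ) (x (i, a)) := by
      intro a
      show (starRingEnd ℂ) (∑ i, (starRingEnd ℂ) (b k i) * x (i, a)) = _
      rw [map_sum]
      apply Finset.sum_congr rfl
      intro i _
      rw [_root_.map_mul, Complex.conj_conj]
    calc (∑ a, ∑ c, (starRingEnd ℂ) (y k a) * B a c * y k c)
        = ∑ a, ∑ c, ∑ i, ∑ j, (b k i * (starRingEnd ℂ) (x (i, a))) * B a c *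
            ((starRingEnd ℂ) (b k j) * x (j, c)) := by
          apply Finset.sum_congr rfl; intro a _
          apply Finset.sum_congr rfl; intro c _
          rw [hconj]
          show (∑ i, b k i * (starRingEnd ℂ) (x (i, a))) * B a c *
            (∑ j, (starRingEnd ℂ) (b k j) * x (j, c)) = _
          rw [Finset.sum_mul, Finset.sum_mul]
          apply Finset.sum_congr rfl; intro i _
          rw [Finset.mul_sum]
      _ = ∑ i, ∑ j, ∑ a, ∑ c, (b k i * (starRingEnd ℂ) (x (i, a))) * B a c *
            ((starRingEnd ℂ) (b k j) * x (j, c)) := sum_swap4 _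
      _ = ∑ i, ∑ j, b k i * (starRingEnd ℂ) (b k j) * G i j := by
          apply Finset.sum_congr rfl; intro i _
          apply Finset.sum_congr rfl; intro j _
          show _ = b k i * (starRingEnd ℂ) (b k j) *
            (∑ a, ∑ c, (starRingEnd ℂ) (x (i, a)) * B a c * x (j, c))
          rw [Finset.mul_sum]
          apply Finset.sum_congr rfl; intro a _
          rw [Finset.mul_sum]
          apply Finset.sum_congr rfl; intro c _
          ring
  have hQx : Q (U ⊗ₖ B) x = ∑ k, μ k * Q B (y k) := by
    have h1 : Q (U ⊗ₖ B) x = ∑ i, ∑ j, U i j * G i j := by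
      show (∑ p : ι × κ, ∑ q : ι × κ, (starRingEnd ℂ) (x p) * (U ⊗ₖ B) p q * x q) = _
      rw [Fintype.sum_prod_type]
      apply Finset.sum_congr rfl; intro i _
      rw [show (∑ a, ∑ q : ι × κ, (starRingEnd ℂ) (x (i, a)) * (U ⊗ₖ B) (i, a) q * x q)
          = ∑ q : ι × κ, ∑ a, (starRingEnd ℂ) (x (i, a)) * (U ⊗ₖ B) (i, a) q * x q from
          Finset.sum_comm]
      rw [Fintype.sum_prod_type]
      apply Finset.sum_congr rfl; intro j _
      show (∑ c, ∑ a, (starRingEnd ℂ) (x (i, a)) * (U i j * B a c) * x (j, c)) =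
        U i j * (∑ a, ∑ c, (starRingEnd ℂ) (x (i, a)) * B a c * x (j, c))
      rw [Finset.mul_sum, Finset.sum_comm]
      apply Finset.sum_congr rfl; intro a _
      rw [Finset.mul_sum]
      apply Finset.sum_congr rfl; intro c _
      ring
    rw [h1]
    calc (∑ i, ∑ j, U i j * G i j)
        = ∑ i, ∑ j, ∑ k, μ k * (b k i * (starRingEnd ℂ) (b k j)) * G i j := by
          apply Finset.sum_congr rfl; intro i _
          apply Finset.sum_congr rfl; intro j _
          rw [hUij, Finset.sum_mul]
      _ = ∑ k, ∑ i, ∑ j, μ k * (b k i * (starRingEnd ℂ) (b k j)) * G i j := by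
          rw [sum_rot3 (fun i j k => μ k * (b k i * (starRingEnd ℂ) (b k j)) * G i j)]
      _ = ∑ k, μ k * Q B (y k) := by
          apply Finset.sum_congr rfl; intro k _
          rw [hQy k, Finset.mul_sum]
          apply Finset.sum_congr rfl; intro i _
          rw [Finset.mul_sum]
          apply Finset.sum_congr rfl; intro j _
          ring
  -- norm sum
  have hNy : (∑ k, Nsq (y k)) = Nsq x := by
    have h1 : ((∑ k, Nsq (y k) : ℝ) : ℂ) = ((Nsq x : ℝ) : ℂ) := by
      push_cast [Nsq]
      rw [show (∑ k, ∑ a, (Complex.normSq (y k a) : ℂ))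
          = ∑ k, ∑ a, (starRingEnd ℂ) (y k a) * y k a by
        apply Finset.sum_congr rfl; intro k _
        apply Finset.sum_congr rfl; intro a _
        rw [← Complex.normSq_eq_conj_mul_self]]
      rw [show (∑ p : ι × κ, (Complex.normSq (x p) : ℂ))
          = ∑ p : ι × κ, (starRingEnd ℂ) (x p) * x p by
        apply Finset.sum_congr rfl; intro p _
        rw [← Complex.normSq_eq_conj_mul_self]]
      calc (∑ k, ∑ a, (starRingEnd ℂ) (y k a) * y k a)
          = ∑ k, ∑ a, ∑ i, ∑ j, (b k i * (starRingEnd ℂ) (x (i, a))) *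
              ((starRingEnd ℂ) (b k j) * x (j, a)) := by
            apply Finset.sum_congr rfl; intro k _
            apply Finset.sum_congr rfl; intro a _
            have hconj : (starRingEnd ℂ) (y k a) = ∑ i, b k i * (starRingEnd ℂ) (x (i, a)) := by
              show (starRingEnd ℂ) (∑ i, (starRingEnd ℂ) (b k i) * x (i, a)) = _
              rw [map_sum]
              apply Finset.sum_congr rfl; intro i _
              rw [_root_.map_mul, Complex.conj_conj]
            rw [hconj]
            show (∑ i, b k i * (starRingEnd ℂ) (x (i, a))) *
              (∑ j, (starRingEnd ℂ) (b k j) * x (j, a)) = _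
            rw [Finset.sum_mul]
            apply Finset.sum_congr rfl; intro i _
            rw [Finset.mul_sum]
          _ = ∑ i, ∑ j, ∑ k, ∑ a, (b k i * (starRingEnd ℂ) (x (i, a))) *
              ((starRingEnd ℂ) (b k j) * x (j, a)) := by
            rw [sum_swap4 (fun k a i j => (b k i * (starRingEnd ℂ) (x (i, a))) *
              ((starRingEnd ℂ) (b k j) * x (j, a)))]
          _ = ∑ i, ∑ j, (∑ k, b k i * (starRingEnd ℂ) (b k j)) *
              (∑ a, (starRingEnd ℂ) (x (i, a)) * x (j, a)) := by
            apply Finset.sum_congr rfl; intro i _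
            apply Finset.sum_congr rfl; intro j _
            rw [Finset.sum_mul_sum]
            apply Finset.sum_congr rfl; intro k _
            apply Finset.sum_congr rfl; intro a _
            ring
          _ = ∑ i, (∑ a, (starRingEnd ℂ) (x (i, a)) * x (i, a)) := by
            apply Finset.sum_congr rfl; intro i _
            rw [Finset.sum_eq_single i]
            · rw [hrow, if_pos rfl, one_mul]
            · intro j _ hj
              rw [hrow, if_neg (Ne.symm hj), zero_mul]
            · intro h; exact absurd (Finset.mem_univ i) h
          _ = ∑ p : ι × κ, (starRingEnd ℂ) (x p) * x p := by
            rw [Fintype.sum_prod_type]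
    exact_mod_cast h1
  -- final bound
  rw [hQx]
  calc ‖∑ k, μ k * Q B (y k)‖
      ≤ ∑ k, ‖μ k * Q B (y k)‖ := by
        exact norm_sum_le _ _
    _ = ∑ k, ‖Q B (y k)‖ := by
        apply Finset.sum_congr rfl; intro k _
        rw [norm_mul, hμ, one_mul]
    _ ≤ ∑ k, numRadius B * Nsq (y k) := by
        apply Finset.sum_le_sum
        intro k _
        exact abs_Q_le B (WithLp.toLp 2 (y k))
    _ = numRadius B * Nsq x := by rw [← Finset.mul_sum, hNy]


lemma Q_add_left (M N : Matrix ι ι ℂ) (x : ι → ℂ) : Q (M + N) x = Q M x + Q N x := by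
  simp only [Q, Matrix.add_apply, mul_add, add_mul, Finset.sum_add_distrib]

lemma Q_smul_left (c : ℂ) (M : Matrix ι ι ℂ) (x : ι → ℂ) : Q (c • M) x = c * Q M x := by
  simp only [Q, Matrix.smul_apply, smul_eq_mul, Finset.mul_sum]
  apply Finset.sum_congr rfl; intro i _
  apply Finset.sum_congr rfl; intro j _
  ring

lemma key1 (A : Matrix ι ι ℂ) (hA : opNorm A ≤ 1) (B : Matrix κ κ ℂ) (x : (ι × κ) → ℂ) :
    ‖Q (A ⊗ₖ B) x‖ ≤ numRadius B * Nsq x := by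
  obtain ⟨U, V, hU, hV, hA2⟩ := half_unitary A hA
  have hsplit : A ⊗ₖ B = (2⁻¹ : ℂ) • (U ⊗ₖ B) + (2⁻¹ : ℂ) • (V ⊗ₖ B) := by
    rw [hA2, Matrix.smul_kronecker, Matrix.add_kronecker, smul_add]
  rw [hsplit, Q_add_left, Q_smul_left, Q_smul_left]
  have h1 := unitary_Q_bound U hU B x
  have h2 := unitary_Q_bound V hV B x
  have habs2 : ‖(2⁻¹ : ℂ)‖ = 2⁻¹ := by
    rw [norm_inv]
    norm_num
  calc ‖2⁻¹ * Q (U ⊗ₖ B) x + 2⁻¹ * Q (V ⊗ₖ B) x‖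
      ≤ ‖2⁻¹ * Q (U ⊗ₖ B) x‖ + ‖2⁻¹ * Q (V ⊗ₖ B) x‖ := by
        exact norm_add_le _ _
    _ = 2⁻¹ * ‖Q (U ⊗ₖ B) x‖ + 2⁻¹ * ‖Q (V ⊗ₖ B) x‖ := by
        rw [norm_mul, norm_mul, habs2]
    _ ≤ 2⁻¹ * (numRadius B * Nsq x) + 2⁻¹ * (numRadius B * Nsq x) := by
        apply add_le_add <;> apply mul_le_mul_of_nonneg_left (by assumption) (by norm_num)
    _ = numRadius B * Nsq x := by ring

lemma key2 (A : Matrix ι ι ℂ) (B : Matrix κ κ ℂ) (x : (ι × κ) → ℂ) :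
    ‖Q (A ⊗ₖ B) x‖ ≤ opNorm A * numRadius B * Nsq x := by
  rcases eq_or_ne (opNorm A) 0 with h0 | h0
  · have hA0 : A = 0 := by
      have h1 : Matrix.toEuclideanCLM (𝕜 := ℂ) A = 0 := norm_eq_zero.mp h0
      have h2 : Matrix.toEuclideanCLM (𝕜 := ℂ) A = Matrix.toEuclideanCLM (𝕜 := ℂ) 0 := by
        rw [h1, _root_.map_zero]
      exact (EquivLike.injective _) h2
    rw [h0, hA0, Matrix.zero_kronecker]
    have : Q (0 : Matrix (ι × κ) (ι × κ) ℂ) x = 0 := by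
      simp [Q]
    rw [this]
    simp
  · have hcpos : 0 < opNorm A := lt_of_le_of_ne (norm_nonneg _) (Ne.symm h0)
    set c : ℝ := opNorm A with hc
    set A' : Matrix ι ι ℂ := ((c⁻¹ : ℝ) : ℂ) • A with hA'
    have hopA' : opNorm A' ≤ 1 := by
      have : opNorm A' = c⁻¹ * c := by
        show ‖Matrix.toEuclideanCLM (𝕜 := ℂ) (((c⁻¹ : ℝ) : ℂ) • A)‖ = _
        rw [_root_.map_smul]
        rw [norm_smul ((c⁻¹ : ℝ) : ℂ) (Matrix.toEuclideanCLM (𝕜 := ℂ) A)]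
        congr 1
        rw [show ‖((c⁻¹ : ℝ) : ℂ)‖ = |c⁻¹| from by rw [Complex.norm_real, Real.norm_eq_abs]]
        exact abs_of_pos (inv_pos.mpr hcpos)
      rw [this, inv_mul_cancel₀ (ne_of_gt hcpos)]
    have hAA : A ⊗ₖ B = ((c : ℝ) : ℂ) • (A' ⊗ₖ B) := by
      rw [hA', Matrix.smul_kronecker, smul_smul]
      norm_cast
      rw [mul_inv_cancel₀ (ne_of_gt hcpos), one_smul]
    rw [hAA, Q_smul_left, norm_mul]
    have habsc : ‖((c : ℝ) : ℂ)‖ = c := by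
      rw [Complex.norm_real, Real.norm_eq_abs, abs_of_pos hcpos]
    rw [habsc]
    calc c * ‖Q (A' ⊗ₖ B) x‖ ≤ c * (numRadius B * Nsq x) :=
          mul_le_mul_of_nonneg_left (key1 A' hopA' B x) (le_of_lt hcpos)
      _ = opNorm A * numRadius B * Nsq x := by rw [hc]; ring

lemma Q_swap (A : Matrix ι ι ℂ) (B : Matrix κ κ ℂ) (x : (ι × κ) → ℂ) :
    Q (A ⊗ₖ B) x = Q (B ⊗ₖ A) (fun q => x (q.2, q.1)) := by
  show (∑ p : ι × κ, ∑ q : ι × κ, (starRingEnd ℂ) (x p) * (A ⊗ₖ B) p q * x q)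
    = ∑ p : κ × ι, ∑ q : κ × ι, (starRingEnd ℂ) (x (p.2, p.1)) * (B ⊗ₖ A) p q * x (q.2, q.1)
  apply Fintype.sum_equiv (Equiv.prodComm ι κ)
  intro p
  apply Fintype.sum_equiv (Equiv.prodComm ι κ)
  intro q
  show (starRingEnd ℂ) (x p) * (A p.1 q.1 * B p.2 q.2) * x q
    = (starRingEnd ℂ) (x (p.1, p.2)) * (B p.2 q.2 * A p.1 q.1) * x (q.1, q.2)
  ring

lemma Nsq_swap (x : (ι × κ) → ℂ) : Nsq (fun q : κ × ι => x (q.2, q.1)) = Nsq x := by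
  show (∑ p : κ × ι, Complex.normSq (x (p.2, p.1))) = ∑ p : ι × κ, Complex.normSq (x p)
  exact Fintype.sum_equiv (Equiv.prodComm κ ι) _ _ (fun p => rfl)

end NrAux

open NrAux

theorem stmt0 (n m : ℕ) (A : Matrix (Fin n) (Fin n) ℂ) (B : Matrix (Fin m) (Fin m) ℂ) :
    numRadius (A ⊗ₖ B) ≤ min (opNorm A * numRadius B) (opNorm B * numRadius A) := by
  apply Real.sSup_le
  · rintro r ⟨x, hx, rfl⟩
    rw [bridge_Q]
    have hNx : Nsq (x : (Fin n × Fin m) → ℂ) = 1 := by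
      rw [← bridge_N, hx, one_pow]
    apply le_min
    · have := key2 A B (x : (Fin n × Fin m) → ℂ)
      rwa [hNx, mul_one] at this
    · have h1 := key2 B A (fun q : Fin m × Fin n => x (q.2, q.1))
      rw [← Q_swap] at h1
      rw [Nsq_swap, hNx, mul_one] at h1
      exact h1
  · apply le_min <;> apply mul_nonneg (norm_nonneg _) (numRadius_nonneg _)
end

section
/- For an n-by-n complex matrix A, the following are equivalent: (1) ‖A^k‖ = ‖A‖^k for all k ≥ 1; (2) ‖A‖ = ρ(A), the spectral radius of A; (3) ‖A‖ = w(A), the numerical radius of A. -/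
open scoped Kronecker InnerProductSpace

/-- The spectral radius of a complex matrix: the maximum modulus of its eigenvalues. -/
noncomputable def specRad {n : Type*} [Fintype n] [DecidableEq n] (A : Matrix n n ℂ) : ℝ :=
  sSup {r : ℝ | ∃ μ ∈ spectrum ℂ A, r = ‖μ‖}

namespace Stmt3Aux

variable {n : ℕ}

lemma lin_eq_clm (A : Matrix (Fin n) (Fin n) ℂ) (x : EuclideanSpace ℂ (Fin n)) :
    Matrix.toEuclideanLin A x = Matrix.toEuclideanCLM (𝕜 := ℂ) A x := by
  rw [← Matrix.coe_toEuclideanCLM_eq_toEuclideanLin]; rfl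

lemma spec_eq (A : Matrix (Fin n) (Fin n) ℂ) :
    spectrum ℂ (Matrix.toEuclideanCLM (𝕜 := ℂ) A) = spectrum ℂ A :=
  AlgEquiv.spectrum_eq (Matrix.toEuclideanCLM (n := Fin n) (𝕜 := ℂ)) A

lemma abs_le_op [Nonempty (Fin n)] (A : Matrix (Fin n) (Fin n) ℂ) {μ : ℂ}
    (h : μ ∈ spectrum ℂ A) : ‖μ‖ ≤ opNorm A := by
  rw [← spec_eq A] at h
  exact spectrum.norm_le_norm_of_mem h

/-- unit eigenvector existence -/
lemma eigen (A : Matrix (Fin n) (Fin n) ℂ) {μ : ℂ} (h : μ ∈ spectrum ℂ A) :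
    ∃ x : EuclideanSpace ℂ (Fin n), ‖x‖ = 1 ∧ Matrix.toEuclideanLin A x = μ • x := by
  rw [← AlgEquiv.spectrum_eq (Matrix.toLinAlgEquiv' (n := Fin n) (R := ℂ)) A,
    ← Module.End.hasEigenvalue_iff_mem_spectrum] at h
  obtain ⟨v, hv⟩ := h.exists_hasEigenvector
  have hev : Matrix.toLin' A v = μ • v := hv.apply_eq_smul
  set w : EuclideanSpace ℂ (Fin n) := (WithLp.equiv 2 (Fin n → ℂ)).symm v with hw
  have hw0 : w ≠ 0 := by simpa [hw] using hv.2
  have hmap : Matrix.toEuclideanLin A w = μ • w := by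
    rw [← Matrix.coe_toEuclideanCLM_eq_toEuclideanLin]
    show Matrix.toEuclideanCLM (𝕜 := ℂ) A w = μ • w
    rw [hw]
    erw [Matrix.toEuclideanCLM_toLp]
    rw [← Matrix.toLin'_apply, hev]
    rfl
  refine ⟨(‖w‖ : ℂ)⁻¹ • w, ?_, ?_⟩
  · simp [norm_smul, inv_mul_cancel₀ (norm_ne_zero_iff.mpr hw0)]
  · rw [map_smul, hmap, smul_comm]

lemma num_mem_le (A : Matrix (Fin n) (Fin n) ℂ) {x : EuclideanSpace ℂ (Fin n)}
    (hx : ‖x‖ = 1) : ‖⟪x, Matrix.toEuclideanLin A x⟫_ℂ‖ ≤ opNorm A := by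
  rw [lin_eq_clm]
  calc ‖⟪x, Matrix.toEuclideanCLM (𝕜 := ℂ) A x⟫_ℂ‖
      ≤ ‖x‖ * ‖Matrix.toEuclideanCLM (𝕜 := ℂ) A x‖ := norm_inner_le_norm _ _
    _ ≤ ‖x‖ * (opNorm A * ‖x‖) := by
        gcongr
        exact ContinuousLinearMap.le_opNorm _ _
    _ = opNorm A := by rw [hx]; ring

lemma num_bdd (A : Matrix (Fin n) (Fin n) ℂ) :
    BddAbove {r : ℝ | ∃ x : EuclideanSpace ℂ (Fin n), ‖x‖ = 1 ∧
      r = ‖⟪x, Matrix.toEuclideanLin A x⟫_ℂ‖} := by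
  refine ⟨opNorm A, ?_⟩
  rintro r ⟨x, hx, rfl⟩
  exact num_mem_le A hx

lemma numRadius_le_op (A : Matrix (Fin n) (Fin n) ℂ) : numRadius A ≤ opNorm A := by
  apply Real.sSup_le
  · rintro r ⟨x, hx, rfl⟩
    exact num_mem_le A hx
  · exact norm_nonneg _

lemma specRad_le_num [Nonempty (Fin n)] (A : Matrix (Fin n) (Fin n) ℂ) :
    specRad A ≤ numRadius A := by
  have hnum_nonneg : 0 ≤ numRadius A := by
    set x0 : EuclideanSpace ℂ (Fin n) := EuclideanSpace.single (Classical.arbitrary _) 1 with hx0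
    have hx0n : ‖x0‖ = 1 := by simp [hx0]
    have := le_csSup (num_bdd A) (Set.mem_setOf.mpr ⟨x0, hx0n, rfl⟩)
    exact le_trans (norm_nonneg _) this
  apply Real.sSup_le _ hnum_nonneg
  rintro r ⟨μ, hμ, rfl⟩
  obtain ⟨x, hx, hev⟩ := eigen A hμ
  have hinner : ⟪x, Matrix.toEuclideanLin A x⟫_ℂ = μ := by
    rw [hev, inner_smul_right, inner_self_eq_norm_sq_to_K, hx]
    simp
  have : ‖μ‖ = ‖⟪x, Matrix.toEuclideanLin A x⟫_ℂ‖ := by rw [hinner]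
  rw [this]
  exact le_csSup (num_bdd A) (Set.mem_setOf.mpr ⟨x, hx, rfl⟩)

/-- a maximizing eigenvalue -/
lemma spec_max [Nonempty (Fin n)] (A : Matrix (Fin n) (Fin n) ℂ) :
    ∃ μ ∈ spectrum ℂ A, (∀ ν ∈ spectrum ℂ A, ‖ν‖ ≤ ‖μ‖) ∧
      specRad A = ‖μ‖ := by
  have hcpt : IsCompact (spectrum ℂ A) := spec_eq A ▸ spectrum.isCompact _
  have hne : (spectrum ℂ A).Nonempty := spec_eq A ▸ spectrum.nonempty _
  obtain ⟨μ, hμ, hmax⟩ := hcpt.exists_isMaxOn hne continuous_norm.continuousOn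
  refine ⟨μ, hμ, hmax, le_antisymm ?_ ?_⟩
  · apply Real.sSup_le
    · rintro r ⟨ν, hν, rfl⟩
      exact hmax hν
    · exact norm_nonneg _
  · refine le_csSup ⟨opNorm A, ?_⟩ (Set.mem_setOf.mpr ⟨μ, hμ, rfl⟩)
    rintro r ⟨ν, hν, rfl⟩
    exact abs_le_op A hν

lemma spectralRadius_eq [Nonempty (Fin n)] (A : Matrix (Fin n) (Fin n) ℂ) {μ : ℂ}
    (hμ : μ ∈ spectrum ℂ A) (hmax : ∀ ν ∈ spectrum ℂ A, ‖ν‖ ≤ ‖μ‖) :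
    spectralRadius ℂ (Matrix.toEuclideanCLM (𝕜 := ℂ) A) = (‖μ‖₊ : ENNReal) := by
  rw [spectralRadius]
  apply le_antisymm
  · refine iSup₂_le fun ν hν => ?_
    rw [spec_eq A] at hν
    exact_mod_cast hmax ν hν
  · exact le_iSup₂ (f := fun ν (_ : ν ∈ spectrum ℂ (Matrix.toEuclideanCLM (𝕜 := ℂ) A)) =>
      (‖ν‖₊ : ENNReal)) μ ((spec_eq A).symm ▸ hμ)

end Stmt3Aux

open Stmt3Aux in
theorem stmt3 (n : ℕ) (A : Matrix (Fin n) (Fin n) ℂ) :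
    ((∀ k : ℕ, 1 ≤ k → opNorm (A ^ k) = opNorm A ^ k) ↔ opNorm A = specRad A) ∧
      (opNorm A = specRad A ↔ opNorm A = numRadius A) := by
  rcases Nat.eq_zero_or_pos n with hn | hn
  · subst hn
    have h1 : ∀ B : Matrix (Fin 0) (Fin 0) ℂ, opNorm B = 0 := fun B => by
      rw [opNorm, Subsingleton.elim (Matrix.toEuclideanCLM (𝕜 := ℂ) B) 0, norm_zero]
    have hspec : spectrum ℂ A = ∅ := by
      ext μ
      simp [spectrum.mem_iff, isUnit_of_subsingleton]
    have hsr : specRad A = 0 := by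
      rw [specRad]
      convert Real.sSup_empty
      simp [hspec]
    have hnr : numRadius A = 0 := by
      rw [numRadius]
      convert Real.sSup_empty
      ext r
      simp only [Set.mem_setOf_eq, Set.mem_empty_iff_false, iff_false, not_exists]
      intro x ⟨hx, _⟩
      rw [Subsingleton.elim x 0, norm_zero] at hx
      exact one_ne_zero hx.symm
    refine ⟨⟨fun _ => by simp [h1, hsr], fun _ k hk => ?_⟩, by simp [h1, hsr, hnr]⟩
    simp [h1, zero_pow (by omega : k ≠ 0)]
  · haveI : Nonempty (Fin n) := ⟨⟨0, hn⟩⟩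
    obtain ⟨μ0, hμ0, hmax, hsr⟩ := spec_max A
    have hspecle : specRad A ≤ opNorm A := hsr ▸ abs_le_op A hμ0
    constructor
    · constructor
      · -- (1) → (2)
        intro h
        have hG := spectrum.pow_nnnorm_pow_one_div_tendsto_nhds_spectralRadius
          (Matrix.toEuclideanCLM (𝕜 := ℂ) A)
        set a := Matrix.toEuclideanCLM (𝕜 := ℂ) A with ha
        have hconst : Filter.Tendsto (fun k : ℕ => ((‖a ^ k‖₊ : ENNReal) ^ (1 / k : ℝ)))
            Filter.atTop (nhds (‖a‖₊ : ENNReal)) := by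
          have hev : ∀ᶠ k : ℕ in Filter.atTop,
              ((‖a ^ k‖₊ : ENNReal) ^ (1 / k : ℝ)) = (‖a‖₊ : ENNReal) := by
            filter_upwards [Filter.eventually_ge_atTop 1] with k hk
            have hk' : ‖a ^ k‖ = ‖a‖ ^ k := by
              have := h k hk
              rwa [opNorm, opNorm, map_pow] at this
            have hnn : ‖a ^ k‖₊ = ‖a‖₊ ^ k := by ext; push_cast; exact hk'
            rw [hnn]
            push_cast
            rw [← ENNReal.rpow_natCast ((‖a‖₊ : ENNReal)) k, ← ENNReal.rpow_mul,
              mul_one_div, div_self (by positivity : (k : ℝ) ≠ 0), ENNReal.rpow_one]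
          exact tendsto_const_nhds.congr' (by filter_upwards [hev] with k hk using hk.symm)
        have heq : spectralRadius ℂ a = (‖a‖₊ : ENNReal) := tendsto_nhds_unique hG hconst
        rw [spectralRadius_eq A hμ0 hmax] at heq
        have : ‖a‖₊ = ‖μ0‖₊ := by exact_mod_cast heq.symm
        have : ‖a‖ = ‖μ0‖ := congrArg NNReal.toReal this
        rw [opNorm, ← ha, this, hsr]
      · -- (2) → (1)
        intro h k hk
        apply le_antisymm
        · calc opNorm (A ^ k) = ‖(Matrix.toEuclideanCLM (𝕜 := ℂ) A) ^ k‖ := by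
                rw [opNorm, map_pow]
            _ ≤ ‖Matrix.toEuclideanCLM (𝕜 := ℂ) A‖ ^ k := norm_pow_le' _ hk
            _ = opNorm A ^ k := rfl
        · have hpow : μ0 ^ k ∈ spectrum ℂ (A ^ k) :=
            spectrum.pow_image_subset A k ⟨μ0, hμ0, rfl⟩
          calc opNorm A ^ k = ‖μ0‖ ^ k := by rw [h, hsr]
            _ = ‖μ0 ^ k‖ := (norm_pow μ0 k).symm
            _ ≤ opNorm (A ^ k) := abs_le_op _ hpow
    · constructor
      · -- (2) → (3)
        intro h
        have h1 : specRad A ≤ numRadius A := specRad_le_num A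
        have h2 : numRadius A ≤ opNorm A := numRadius_le_op A
        linarith [h.le, h.ge]
      · -- (3) → (2)
        intro h
        refine le_antisymm ?_ hspecle
        by_cases h0 : opNorm A = 0
        · rw [h0]
          rw [hsr]
          exact norm_nonneg _
        · -- maximizer on the sphere
          set a := Matrix.toEuclideanCLM (𝕜 := ℂ) A with ha
          have hcpt : IsCompact (Metric.sphere (0 : EuclideanSpace ℂ (Fin n)) 1) :=
            isCompact_sphere _ _
          have hne : (Metric.sphere (0 : EuclideanSpace ℂ (Fin n)) 1).Nonempty :=
            NormedSpace.sphere_nonempty.mpr zero_le_one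
          have hcont : Continuous fun x : EuclideanSpace ℂ (Fin n) =>
              ‖⟪x, a x⟫_ℂ‖ :=
            continuous_norm.comp (continuous_id.inner a.continuous)
          obtain ⟨x0, hx0mem, hmax'⟩ := hcpt.exists_isMaxOn hne hcont.continuousOn
          rw [mem_sphere_zero_iff_norm] at hx0mem
          have hnum : numRadius A = ‖⟪x0, a x0⟫_ℂ‖ := by
            apply le_antisymm
            · apply Real.sSup_le
              · rintro r ⟨y, hy, rfl⟩
                rw [lin_eq_clm, ← ha]
                exact hmax' (by rwa [Metric.mem_sphere, dist_zero_right])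
              · exact norm_nonneg _
            · refine le_csSup (num_bdd A) (Set.mem_setOf.mpr ⟨x0, hx0mem, ?_⟩)
              rw [lin_eq_clm, ← ha]
          have hkey : ‖a‖ = ‖⟪x0, a x0⟫_ℂ‖ := by rw [← hnum, ← h]; rfl
          have hcs : ‖⟪x0, a x0⟫_ℂ‖ ≤ ‖x0‖ * ‖a x0‖ := by
            exact norm_inner_le_norm _ _
          have hax0 : ‖a x0‖ ≤ ‖a‖ := by
            calc ‖a x0‖ ≤ ‖a‖ * ‖x0‖ := a.le_opNorm _
              _ = ‖a‖ := by rw [hx0mem, mul_one]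
          have haxeq : ‖a x0‖ = ‖a‖ := by
            apply le_antisymm hax0
            calc ‖a‖ = ‖⟪x0, a x0⟫_ℂ‖ := hkey
              _ ≤ ‖x0‖ * ‖a x0‖ := hcs
              _ = ‖a x0‖ := by rw [hx0mem, one_mul]
          have hcseq : ‖⟪x0, a x0⟫_ℂ‖ = ‖x0‖ * ‖a x0‖ := by
            rw [hx0mem, one_mul, haxeq, ← hkey]
          have hx0ne : x0 ≠ 0 := by
            intro hc; rw [hc, norm_zero] at hx0mem; exact one_ne_zero hx0mem.symm
          have haxne : a x0 ≠ 0 := by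
            intro hc
            rw [hc, norm_zero] at haxeq
            exact h0 haxeq.symm
          obtain ⟨r, hr0, hrx⟩ := (norm_inner_eq_norm_iff hx0ne haxne).mp hcseq
          have hrspec : r ∈ spectrum ℂ A := by
            rw [← spec_eq A, spectrum.mem_iff]
            intro hu
            obtain ⟨u, hu⟩ := hu
            apply hx0ne
            have happ : (algebraMap ℂ _ r - a) x0 = 0 := by
              simp only [ContinuousLinearMap.sub_apply, hrx]
              simp [Algebra.algebraMap_eq_smul_one]
            rw [← ha] at hu
            have hx0' : ((↑u⁻¹ * ↑u :
                EuclideanSpace ℂ (Fin n) →L[ℂ] EuclideanSpace ℂ (Fin n))) x0 = x0 := by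
              rw [u.inv_mul]; rfl
            rw [ContinuousLinearMap.mul_apply, hu, happ, map_zero] at hx0'
            exact hx0'.symm
          have hinner : ⟪x0, a x0⟫_ℂ = r := by
            rw [hrx, inner_smul_right, inner_self_eq_norm_sq_to_K, hx0mem]
            simp
          have : opNorm A = ‖r‖ := by rw [opNorm, ← ha, hkey, hinner]
          rw [this, hsr]
          exact hmax r hrspec
end

section
/- If A is an n-by-n complex matrix with ‖A‖ = ρ(A) = 1, then A is unitarily similar to a direct sum [λ] ⊕ C for some complex λ with |λ| = 1; in particular A has a unitary direct summand. -/
open scoped Kronecker InnerProductSpace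

/-- `A` and `B` are unitarily similar (as operators on Euclidean spaces, allowing
different index types of the same dimension). -/
def UnitSim {n m : Type*} [Fintype n] [DecidableEq n] [Fintype m] [DecidableEq m]
    (A : Matrix n n ℂ) (B : Matrix m m ℂ) : Prop :=
  ∃ e : EuclideanSpace ℂ n ≃ₗᵢ[ℂ] EuclideanSpace ℂ m,
    ∀ x, Matrix.toEuclideanLin B (e x) = e (Matrix.toEuclideanLin A x)

/-- The matrix of a continuous linear endomorphism with respect to an orthonormal basis
represents the map on coordinates. -/
lemma matrix_rep_aux {ι n : Type*} [Fintype ι] [DecidableEq ι] [Fintype n] [DecidableEq n]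
    (b : OrthonormalBasis ι ℂ (EuclideanSpace ℂ n))
    (T : EuclideanSpace ℂ n →L[ℂ] EuclideanSpace ℂ n) (y : EuclideanSpace ℂ n) :
    Matrix.toEuclideanLin (Matrix.of fun i j => ⟪b i, T (b j)⟫_ℂ) (b.repr y)
      = b.repr (T y) := by
  apply (WithLp.equiv 2 _).injective
  funext i
  have hy : T y = ∑ j, b.repr y j • T (b j) := by
    conv_lhs => rw [← b.sum_repr y]
    rw [map_sum]; simp
  have h1 : ∀ (M : Matrix ι ι ℂ) (v : EuclideanSpace ℂ ι),
      WithLp.equiv 2 (ι → ℂ) (Matrix.toEuclideanLin M v) i = ∑ j, M i j * v j := fun M v => rfl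
  rw [h1]; change _ = b.repr (T y) i; rw [OrthonormalBasis.repr_apply_apply, hy, inner_sum]
  exact Finset.sum_congr rfl fun j _ => by
    rw [inner_smul_right, Matrix.of_apply, mul_comm, OrthonormalBasis.repr_apply_apply]

theorem stmt4 (n : ℕ) (A : Matrix (Fin n) (Fin n) ℂ)
    (h1 : opNorm A = 1) (h2 : specRad A = 1) :
    ∃ (lam : ℂ) (C : Matrix (Fin (n - 1)) (Fin (n - 1)) ℂ), ‖lam‖ = 1 ∧
      UnitSim A (Matrix.fromBlocks (Matrix.diagonal fun _ : Fin 1 => lam) 0 0 C) := by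
  classical
  -- Step 1: find an eigenvalue of modulus 1
  obtain ⟨μ, hμspec, hμabs⟩ : ∃ μ ∈ spectrum ℂ A, ‖μ‖ = 1 := by
    rw [specRad] at h2
    set S := {r : ℝ | ∃ μ ∈ spectrum ℂ A, r = ‖μ‖} with hS
    have hSim : S = (fun μ : ℂ => ‖μ‖) '' spectrum ℂ A := by
      ext r; simp [hS, Set.mem_image, eq_comm]
    have hfin : S.Finite := by rw [hSim]; exact (Matrix.finite_spectrum A).image _
    have hne : S.Nonempty := by
      by_contra h
      rw [Set.not_nonempty_iff_eq_empty] at h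
      rw [h, Real.sSup_empty] at h2; norm_num at h2
    have hmem := hne.csSup_mem hfin
    rw [h2, hSim] at hmem
    obtain ⟨μ, hμ, habs⟩ := hmem
    exact ⟨μ, hμ, habs⟩
  -- Step 2: n is positive
  have hn : 0 < n := by
    rcases Nat.eq_zero_or_pos n with h0 | h0
    · exfalso
      subst h0
      haveI : Subsingleton (Matrix (Fin 0) (Fin 0) ℂ) :=
        ⟨fun a b => by ext i j; exact i.elim0⟩
      exact (spectrum.mem_iff.mp hμspec) (isUnit_of_subsingleton _)
    · exact h0
  set T := Matrix.toEuclideanCLM (𝕜 := ℂ) A with hTdef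
  have hT1 : ‖T‖ = 1 := h1
  -- Step 3: a unit eigenvector
  obtain ⟨x, hx1, hTx⟩ : ∃ x : EuclideanSpace ℂ (Fin n), ‖x‖ = 1 ∧ T x = μ • x := by
    rw [← AlgEquiv.spectrum_eq (Matrix.toLinAlgEquiv' (R := ℂ) (n := Fin n)) A,
      ← Module.End.hasEigenvalue_iff_mem_spectrum] at hμspec
    obtain ⟨v, hv⟩ := hμspec.exists_hasEigenvector
    have hvAv : Matrix.mulVec A v = μ • v := hv.apply_eq_smul
    set x0 : EuclideanSpace ℂ (Fin n) := (WithLp.equiv 2 (Fin n → ℂ)).symm v with hx0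
    have hx0ne : x0 ≠ 0 := by simpa [hx0] using hv.2
    have hTx0 : T x0 = μ • x0 := by
      rw [hTdef, hx0, WithLp.equiv_symm_apply, Matrix.toEuclideanCLM_toLp, hvAv]
      rfl
    have hn0 : (‖x0‖ : ℂ) ≠ 0 := by simpa using norm_ne_zero_iff.mpr hx0ne
    refine ⟨(‖x0‖ : ℂ)⁻¹ • x0, ?_, ?_⟩
    · rw [norm_smul]
      simp [inv_mul_cancel₀ (norm_ne_zero_iff.mpr hx0ne)]
    · rw [map_smul, hTx0, smul_comm]
  have hxx : ⟪x, x⟫_ℂ = 1 := by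
    rw [inner_self_eq_norm_sq_to_K, hx1]; norm_num
  -- Step 4: the adjoint fixes x up to the conjugate eigenvalue
  have hadj : ContinuousLinearMap.adjoint T x = (starRingEnd ℂ μ) • x := by
    set a := ContinuousLinearMap.adjoint T x with ha
    have hax : ⟪a, x⟫_ℂ = μ := by
      rw [ha, ContinuousLinearMap.adjoint_inner_left, hTx, inner_smul_right, hxx, mul_one]
    have hna : ‖a‖ ≤ 1 := by
      calc ‖a‖ ≤ ‖ContinuousLinearMap.adjoint T‖ * ‖x‖ :=
            (ContinuousLinearMap.adjoint T).le_opNorm x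
      _ = 1 := by rw [LinearIsometryEquiv.norm_map, hT1, hx1, mul_one]
    have key : ‖a - (starRingEnd ℂ μ) • x‖ ^ 2 ≤ 0 := by
      rw [@norm_sub_sq ℂ]
      have h2' : ⟪a, (starRingEnd ℂ μ) • x⟫_ℂ = 1 := by
        rw [inner_smul_right, hax, mul_comm, Complex.mul_conj]
        norm_cast
        rw [Complex.normSq_eq_norm_sq, hμabs]; norm_num
      have h3 : ‖(starRingEnd ℂ μ) • x‖ = 1 := by
        rw [norm_smul, hx1, mul_one]
        simpa using hμabs
      rw [h2', h3]
      simp only [RCLike.one_re]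
      nlinarith [norm_nonneg a]
    have hz : a - (starRingEnd ℂ μ) • x = 0 := by
      have h5 := sq_nonneg (‖a - (starRingEnd ℂ μ) • x‖)
      have hz' : ‖a - (starRingEnd ℂ μ) • x‖ = 0 := by nlinarith
      exact norm_eq_zero.mp hz'
    exact sub_eq_zero.mp hz
  -- Step 5: an orthonormal basis starting with x
  have hcard : Module.finrank ℂ (EuclideanSpace ℂ (Fin n))
      = Fintype.card (Fin 1 ⊕ Fin (n - 1)) := by
    simp [finrank_euclideanSpace]
    omega
  have horth : Orthonormal ℂ
      (({Sum.inl 0} : Set (Fin 1 ⊕ Fin (n - 1))).restrict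
        (fun _ : Fin 1 ⊕ Fin (n - 1) => x)) := by
    constructor
    · intro i; exact hx1
    · intro i j hij
      exfalso
      exact hij (Subtype.ext (i.2.trans j.2.symm))
  obtain ⟨b, hb⟩ := horth.exists_orthonormalBasis_extension_of_card_eq hcard
  have hbx : b (Sum.inl 0) = x := hb _ rfl
  set B : Matrix (Fin 1 ⊕ Fin (n - 1)) (Fin 1 ⊕ Fin (n - 1)) ℂ :=
    Matrix.of (fun i j => ⟪b i, T (b j)⟫_ℂ) with hBdef
  refine ⟨μ, Matrix.of (fun i j => B (Sum.inr i) (Sum.inr j)), hμabs, ?_⟩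
  have e0 : ∀ i : Fin 1, i = 0 := fun i => Subsingleton.elim i 0
  -- Step 6: B has the required block form
  have hBform : B = Matrix.fromBlocks (Matrix.diagonal fun _ : Fin 1 => μ) 0 0
      (Matrix.of (fun i j => B (Sum.inr i) (Sum.inr j))) := by
    ext i j
    rcases i with i | i <;> rcases j with j | j
    · rw [e0 i, e0 j]
      simp only [Matrix.fromBlocks_apply₁₁, Matrix.diagonal_apply_eq]
      show ⟪b (Sum.inl 0), T (b (Sum.inl 0))⟫_ℂ = μ
      rw [hbx, hTx, inner_smul_right, hxx, mul_one]
    · rw [e0 i]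
      simp only [Matrix.fromBlocks_apply₁₂, Matrix.zero_apply]
      show ⟪b (Sum.inl 0), T (b (Sum.inr j))⟫_ℂ = 0
      rw [hbx, ← ContinuousLinearMap.adjoint_inner_left, hadj, inner_smul_left, ← hbx]
      rw [b.orthonormal.2 (by simp : (Sum.inl 0 : Fin 1 ⊕ Fin (n - 1)) ≠ Sum.inr j), mul_zero]
    · rw [e0 j]
      simp only [Matrix.fromBlocks_apply₂₁, Matrix.zero_apply]
      show ⟪b (Sum.inr i), T (b (Sum.inl 0))⟫_ℂ = 0
      rw [hbx, hTx, inner_smul_right, ← hbx]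
      rw [b.orthonormal.2 (by simp : (Sum.inr i : Fin 1 ⊕ Fin (n - 1)) ≠ Sum.inl 0), mul_zero]
    · rfl
  -- Step 7: conclude
  refine ⟨b.repr, fun y => ?_⟩
  rw [← hBform]
  have hmat := matrix_rep_aux b T y
  rw [← hBdef] at hmat
  have hTy : T y = Matrix.toEuclideanLin A y := by
    rw [hTdef, ← Matrix.coe_toEuclideanCLM_eq_toEuclideanLin]; rfl
  rw [← hTy]
  exact hmat
end

section
/- If A is an n-by-n complex matrix with ‖A‖ = 1 and ‖A^{m−1}‖ = 1, then A ⊗ J_m is unitarily similar to J_m ⊕ B for some matrix B with w(B) ≤ w(J_m), where J_m is the m-by-m nilpotent Jordan block. -/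
open scoped Kronecker InnerProductSpace

/-- The `m`-by-`m` nilpotent Jordan block: zero diagonal, ones on the superdiagonal. -/
def Jordan (m : ℕ) : Matrix (Fin m) (Fin m) ℂ :=
  fun i j => if (i : ℕ) + 1 = (j : ℕ) then 1 else 0

namespace Stmt7Aux

open Matrix

lemma inner_euclid {N : Type*} [Fintype N] (x y : EuclideanSpace ℂ N) :
    ⟪x, y⟫_ℂ = ∑ i, (starRingEnd ℂ) (x i) * y i := by
  simp [PiLp.inner_apply, RCLike.inner_apply]; exact Finset.sum_congr rfl fun _ _ => mul_comm _ _

lemma lin_apply {N : Type*} [Fintype N] [DecidableEq N] (M : Matrix N N ℂ)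
    (x : EuclideanSpace ℂ N) (i : N) :
    Matrix.toEuclideanLin M x i = ∑ j, M i j * x j := rfl

lemma lin_mul {n : ℕ} (M N : Matrix (Fin n) (Fin n) ℂ) (v : EuclideanSpace ℂ (Fin n)) :
    Matrix.toEuclideanLin (M * N) v = Matrix.toEuclideanLin M (Matrix.toEuclideanLin N v) := by
  show Matrix.toEuclideanCLM (𝕜 := ℂ) (M * N) v = _
  rw [_root_.map_mul]; rfl

lemma lin_one {n : ℕ} (v : EuclideanSpace ℂ (Fin n)) :
    Matrix.toEuclideanLin (1 : Matrix (Fin n) (Fin n) ℂ) v = v := by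
  show Matrix.toEuclideanCLM (𝕜 := ℂ) (1 : Matrix (Fin n) (Fin n) ℂ) v = v
  rw [_root_.map_one]; rfl

lemma norm_sq_eq {N : Type*} [Fintype N] (v : EuclideanSpace ℂ N) :
    ‖v‖ ^ 2 = ∑ i, ‖v i‖ ^ 2 := by
  rw [EuclideanSpace.norm_eq, Real.sq_sqrt (Finset.sum_nonneg fun i _ => sq_nonneg _)]

lemma numRadius_bddAbove {N : Type*} [Fintype N] [DecidableEq N] (M : Matrix N N ℂ) :
    BddAbove {r : ℝ | ∃ x : EuclideanSpace ℂ N, ‖x‖ = 1 ∧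
      r = ‖⟪x, Matrix.toEuclideanLin M x⟫_ℂ‖} := by
  refine ⟨‖Matrix.toEuclideanCLM (𝕜 := ℂ) M‖, ?_⟩
  rintro r ⟨x, hx, rfl⟩
  calc ‖⟪x, Matrix.toEuclideanLin M x⟫_ℂ‖ ≤ ‖x‖ * ‖Matrix.toEuclideanLin M x‖ :=
        norm_inner_le_norm _ _
    _ = ‖Matrix.toEuclideanLin M x‖ := by rw [hx, one_mul]
    _ ≤ ‖Matrix.toEuclideanCLM (𝕜 := ℂ) M‖ * ‖x‖ :=
        (Matrix.toEuclideanCLM (𝕜 := ℂ) M).le_opNorm x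
    _ = ‖Matrix.toEuclideanCLM (𝕜 := ℂ) M‖ := by rw [hx, mul_one]

lemma le_numRadius {N : Type*} [Fintype N] [DecidableEq N] {M : Matrix N N ℂ}
    {x : EuclideanSpace ℂ N} (hx : ‖x‖ = 1) :
    ‖⟪x, Matrix.toEuclideanLin M x⟫_ℂ‖ ≤ numRadius M :=
  le_csSup (numRadius_bddAbove M) ⟨x, hx, rfl⟩

lemma numRadius_nonneg {N : Type*} [Fintype N] [DecidableEq N] (M : Matrix N N ℂ) :
    0 ≤ numRadius M := by
  apply Real.sSup_nonneg
  rintro r ⟨x, hx, rfl⟩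
  exact norm_nonneg _

lemma jordan_sum {m : ℕ} (f : Fin m → ℂ) (j : Fin m) :
    ∑ l, Jordan m j l * f l = if h : (j : ℕ) + 1 < m then f ⟨(j : ℕ) + 1, h⟩ else 0 := by
  split
  case isTrue h =>
    rw [Finset.sum_eq_single (⟨(j : ℕ) + 1, h⟩ : Fin m)]
    · simp [Jordan]
    · intro l _ hl
      have hne : (j : ℕ) + 1 ≠ (l : ℕ) := by
        intro hc
        exact hl (Fin.ext hc.symm)
      simp [Jordan, hne]
    · intro hmem; exact absurd (Finset.mem_univ _) hmem
  case isFalse h =>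
    apply Finset.sum_eq_zero; intro l _
    have hne : (j : ℕ) + 1 ≠ (l : ℕ) := by intro hc; exact h (hc ▸ l.2)
    simp [Jordan, hne]

lemma abs_inner_kron_le {n m : ℕ} (A : Matrix (Fin n) (Fin n) ℂ)
    (hA : ∀ v : EuclideanSpace ℂ (Fin n), ‖Matrix.toEuclideanLin A v‖ ≤ ‖v‖)
    (y : EuclideanSpace ℂ (Fin n × Fin m)) (hy : ‖y‖ = 1) :
    ‖⟪y, Matrix.toEuclideanLin (A ⊗ₖ Jordan m) y⟫_ℂ‖ ≤ numRadius (Jordan m) := by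
  classical
  set z : Fin m → EuclideanSpace ℂ (Fin n) := fun j => WithLp.toLp 2 (fun i => y (i, j)) with hz
  set zs : Fin m → EuclideanSpace ℂ (Fin n) :=
    fun j => WithLp.toLp 2 (fun i => if h : (j : ℕ) + 1 < m then y (i, ⟨(j : ℕ) + 1, h⟩) else 0) with hzs
  have hzs_cases : ∀ j : Fin m, (∃ h : (j : ℕ) + 1 < m, zs j = z ⟨(j : ℕ) + 1, h⟩)
      ∨ (¬ ((j : ℕ) + 1 < m) ∧ zs j = 0) := by
    intro j
    by_cases h : (j : ℕ) + 1 < m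
    · exact Or.inl ⟨h, PiLp.ext fun i => by simp [hzs, hz, dif_pos h]⟩
    · exact Or.inr ⟨h, PiLp.ext fun i => by simp [hzs, dif_neg h]⟩
  have happ : ∀ (i : Fin n) (j : Fin m),
      Matrix.toEuclideanLin (A ⊗ₖ Jordan m) y (i, j) = ∑ k, A i k * zs j k := by
    intro i j
    rw [lin_apply, Fintype.sum_prod_type]
    apply Finset.sum_congr rfl
    intro k _
    have step : ∀ l, (A ⊗ₖ Jordan m) (i, j) (k, l) * y (k, l)
        = A i k * (Jordan m j l * y (k, l)) := by
      intro l; rw [Matrix.kroneckerMap_apply]; ring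
    rw [Finset.sum_congr rfl fun l _ => step l, ← Finset.mul_sum,
        jordan_sum (fun l => y (k, l)) j]
  have hsplit : ⟪y, Matrix.toEuclideanLin (A ⊗ₖ Jordan m) y⟫_ℂ
      = ∑ j : Fin m, ⟪z j, Matrix.toEuclideanLin A (zs j)⟫_ℂ := by
    rw [inner_euclid, Fintype.sum_prod_type, Finset.sum_comm]
    apply Finset.sum_congr rfl; intro j _
    rw [inner_euclid]
    apply Finset.sum_congr rfl; intro i _
    rw [happ i j, lin_apply]
  have step1 : ‖(∑ j : Fin m, ⟪z j, Matrix.toEuclideanLin A (zs j)⟫_ℂ)‖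
      ≤ ∑ j : Fin m, ‖z j‖ * ‖zs j‖ := by
    refine (norm_sum_le _ _).trans (Finset.sum_le_sum fun j _ => ?_)
    calc ‖⟪z j, Matrix.toEuclideanLin A (zs j)⟫_ℂ‖
        ≤ ‖z j‖ * ‖Matrix.toEuclideanLin A (zs j)‖ := norm_inner_le_norm _ _
      _ ≤ ‖z j‖ * ‖zs j‖ := mul_le_mul_of_nonneg_left (hA _) (norm_nonneg _)
  set a : EuclideanSpace ℂ (Fin m) := WithLp.toLp 2 (fun j => (‖z j‖ : ℂ)) with ha
  have hanorm : ‖a‖ = 1 := by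
    have hasq : ‖a‖ ^ 2 = 1 := by
      rw [norm_sq_eq]
      have e1 : ∀ j : Fin m, ‖a j‖ ^ 2 = ‖z j‖ ^ 2 := by
        intro j
        have h' : ‖a j‖ = ‖z j‖ := by
          simp [ha, Complex.norm_real]
        rw [h']
      rw [Finset.sum_congr rfl fun j _ => e1 j]
      have e2 : ∀ j : Fin m, ‖z j‖ ^ 2 = ∑ i, ‖y (i, j)‖ ^ 2 := by
        intro j; rw [norm_sq_eq]
      rw [Finset.sum_congr rfl fun j _ => e2 j]
      calc ∑ j : Fin m, ∑ i : Fin n, ‖y (i, j)‖ ^ 2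
          = ∑ p : Fin n × Fin m, ‖y p‖ ^ 2 := by
            rw [Fintype.sum_prod_type]; exact Finset.sum_comm
        _ = 1 := by rw [← norm_sq_eq, hy, one_pow]
    nlinarith [norm_nonneg a]
  have hJa : ⟪a, Matrix.toEuclideanLin (Jordan m) a⟫_ℂ = ((∑ j : Fin m, ‖z j‖ * ‖zs j‖ : ℝ) : ℂ) := by
    rw [inner_euclid, Complex.ofReal_sum]
    apply Finset.sum_congr rfl
    intro j _
    rw [lin_apply, jordan_sum (fun l => a l) j]
    have hconj : (starRingEnd ℂ) (a j) = ((‖z j‖ : ℝ) : ℂ) := by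
      simp [ha, Complex.conj_ofReal]
    rw [hconj]
    rcases hzs_cases j with ⟨h, hzeq⟩ | ⟨h, hzeq⟩
    · rw [dif_pos h, hzeq]
      have : a ⟨(j : ℕ) + 1, h⟩ = ((‖z ⟨(j : ℕ) + 1, h⟩‖ : ℝ) : ℂ) := rfl
      rw [this]
      push_cast
      ring
    · rw [dif_neg h, hzeq]
      simp
  rw [hsplit]
  calc ‖(∑ j : Fin m, ⟪z j, Matrix.toEuclideanLin A (zs j)⟫_ℂ)‖
      ≤ ∑ j : Fin m, ‖z j‖ * ‖zs j‖ := step1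
    _ = ‖⟪a, Matrix.toEuclideanLin (Jordan m) a⟫_ℂ‖ := by
        rw [hJa, Complex.norm_real, Real.norm_eq_abs,
          abs_of_nonneg (Finset.sum_nonneg fun j _ => mul_nonneg (norm_nonneg _) (norm_nonneg _))]
    _ ≤ numRadius (Jordan m) := le_numRadius hanorm

/-- Embedding of a vector into column `s` of the tensor grid. -/
def emb {n m : ℕ} (c : EuclideanSpace ℂ (Fin n)) (s : Fin m) :
    EuclideanSpace ℂ (Fin n × Fin m) :=
  WithLp.toLp 2 (fun p : Fin n × Fin m => if p.2 = s then c p.1 else 0)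

@[simp] lemma emb_apply {n m : ℕ} (c : EuclideanSpace ℂ (Fin n)) (s : Fin m)
    (p : Fin n × Fin m) : emb c s p = if p.2 = s then c p.1 else 0 := rfl

lemma emb_inner {n m : ℕ} (c d : EuclideanSpace ℂ (Fin n)) (s t : Fin m) :
    ⟪emb c s, emb d t⟫_ℂ = if s = t then ⟪c, d⟫_ℂ else 0 := by
  rw [inner_euclid, Fintype.sum_prod_type, Finset.sum_comm]
  by_cases h : s = t
  · subst h
    rw [if_pos rfl, inner_euclid]
    rw [Finset.sum_eq_single s]
    · apply Finset.sum_congr rfl; intro i _; simp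
    · intro l _ hl
      apply Finset.sum_eq_zero; intro i _
      simp [hl]
    · intro hmem; exact absurd (Finset.mem_univ _) hmem
  · rw [if_neg h]
    apply Finset.sum_eq_zero; intro l _
    apply Finset.sum_eq_zero; intro i _
    by_cases hls : l = s
    · subst hls
      have : l ≠ t := fun hc => h (hc ▸ rfl)
      simp [this]
    · simp [hls]

lemma kron_emb_apply {n m : ℕ} (A : Matrix (Fin n) (Fin n) ℂ)
    (c : EuclideanSpace ℂ (Fin n)) (s : Fin m) (i : Fin n) (l : Fin m) :
    Matrix.toEuclideanLin (A ⊗ₖ Jordan m) (emb c s) (i, l)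
      = Jordan m l s * Matrix.toEuclideanLin A c i := by
  rw [lin_apply, Fintype.sum_prod_type]
  have key : ∀ k : Fin n, ∑ l' : Fin m, (A ⊗ₖ Jordan m) (i, l) (k, l') * emb c s (k, l')
      = Jordan m l s * (A i k * c k) := by
    intro k
    rw [Finset.sum_eq_single s]
    · rw [Matrix.kroneckerMap_apply]
      simp only [emb_apply, eq_self_iff_true, if_true]
      ring
    · intro l' _ hl'; simp [hl']
    · intro hmem; exact absurd (Finset.mem_univ _) hmem
  rw [Finset.sum_congr rfl fun k _ => key k, ← Finset.mul_sum, lin_apply]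

lemma kron_emb_zero {n m : ℕ} (A : Matrix (Fin n) (Fin n) ℂ)
    (c : EuclideanSpace ℂ (Fin n)) (s : Fin m) (hs : (s : ℕ) = 0) :
    Matrix.toEuclideanLin (A ⊗ₖ Jordan m) (emb c s) = 0 := by
  ext p
  obtain ⟨i, l⟩ := p
  rw [show ((0 : EuclideanSpace ℂ (Fin n × Fin m)) (i, l)) = 0 from rfl, kron_emb_apply]
  have : Jordan m l s = 0 := by simp [Jordan, hs]
  rw [this, zero_mul]

lemma kron_emb_succ {n m : ℕ} (A : Matrix (Fin n) (Fin n) ℂ)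
    (c : EuclideanSpace ℂ (Fin n)) (s' s : Fin m) (h : (s' : ℕ) + 1 = (s : ℕ)) :
    Matrix.toEuclideanLin (A ⊗ₖ Jordan m) (emb c s) = emb (Matrix.toEuclideanLin A c) s' := by
  ext p
  obtain ⟨i, l⟩ := p
  rw [kron_emb_apply, emb_apply]
  by_cases hl : l = s'
  · subst hl
    rw [if_pos rfl]
    have : Jordan m l s = 1 := by simp [Jordan, h]
    rw [this, one_mul]
  · rw [if_neg hl]
    have hne : (l : ℕ) + 1 ≠ (s : ℕ) := by
      intro hc; apply hl; apply Fin.ext; omega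
    have : Jordan m l s = 0 := by simp [Jordan, hne]
    rw [this, zero_mul]

lemma kron_adj_emb_apply {n m : ℕ} (A : Matrix (Fin n) (Fin n) ℂ)
    (c : EuclideanSpace ℂ (Fin n)) (s : Fin m) (i : Fin n) (l : Fin m) :
    Matrix.toEuclideanLin ((A ⊗ₖ Jordan m)ᴴ) (emb c s) (i, l)
      = Jordan m s l * Matrix.toEuclideanLin Aᴴ c i := by
  rw [lin_apply, Fintype.sum_prod_type]
  have key : ∀ k : Fin n, ∑ l' : Fin m, ((A ⊗ₖ Jordan m)ᴴ) (i, l) (k, l') * emb c s (k, l')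
      = Jordan m s l * (Aᴴ i k * c k) := by
    intro k
    rw [Finset.sum_eq_single s]
    · simp only [Matrix.conjTranspose_apply, Matrix.kroneckerMap_apply, emb_apply,
        eq_self_iff_true, if_true]
      have h1 : star (Jordan m s l) = Jordan m s l := by
        rw [Complex.star_def]; simp [Jordan, apply_ite (starRingEnd ℂ)]
      rw [star_mul', h1]
      ring
    · intro l' _ hl'; simp [hl']
    · intro hmem; exact absurd (Finset.mem_univ _) hmem
  rw [Finset.sum_congr rfl fun k _ => key k, ← Finset.mul_sum, lin_apply]

lemma kron_adj_emb_last {n m : ℕ} (A : Matrix (Fin n) (Fin n) ℂ)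
    (c : EuclideanSpace ℂ (Fin n)) (s : Fin m) (hs : (s : ℕ) + 1 = m) :
    Matrix.toEuclideanLin ((A ⊗ₖ Jordan m)ᴴ) (emb c s) = 0 := by
  ext p
  obtain ⟨i, l⟩ := p
  rw [show ((0 : EuclideanSpace ℂ (Fin n × Fin m)) (i, l)) = 0 from rfl, kron_adj_emb_apply]
  have hne : (s : ℕ) + 1 ≠ (l : ℕ) := by have := l.2; omega
  have : Jordan m s l = 0 := by simp [Jordan, hne]
  rw [this, zero_mul]

lemma kron_adj_emb_succ {n m : ℕ} (A : Matrix (Fin n) (Fin n) ℂ)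
    (c : EuclideanSpace ℂ (Fin n)) (s s' : Fin m) (h : (s : ℕ) + 1 = (s' : ℕ)) :
    Matrix.toEuclideanLin ((A ⊗ₖ Jordan m)ᴴ) (emb c s) = emb (Matrix.toEuclideanLin Aᴴ c) s' := by
  ext p
  obtain ⟨i, l⟩ := p
  rw [kron_adj_emb_apply, emb_apply]
  by_cases hl : l = s'
  · subst hl
    have : Jordan m s l = 1 := by simp [Jordan, h]
    rw [if_pos rfl, this, one_mul]
  · rw [if_neg hl]
    have hne : (s : ℕ) + 1 ≠ (l : ℕ) := by
      intro hc; apply hl; apply Fin.ext; omega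
    have : Jordan m s l = 0 := by simp [Jordan, hne]
    rw [this, zero_mul]

lemma contraction_fix {n : ℕ} (A : Matrix (Fin n) (Fin n) ℂ)
    (hA : ∀ v : EuclideanSpace ℂ (Fin n), ‖Matrix.toEuclideanLin A v‖ ≤ ‖v‖)
    (u : EuclideanSpace ℂ (Fin n)) (hu : ‖Matrix.toEuclideanLin A u‖ = ‖u‖) :
    Matrix.toEuclideanLin Aᴴ (Matrix.toEuclideanLin A u) = u := by
  set f := Matrix.toEuclideanCLM (𝕜 := ℂ) A with hf
  have hstar : Matrix.toEuclideanCLM (𝕜 := ℂ) Aᴴ = ContinuousLinearMap.adjoint f := by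
    rw [← Matrix.star_eq_conjTranspose, map_star, ContinuousLinearMap.star_eq_adjoint]
  have hfv : ∀ v, f v = Matrix.toEuclideanLin A v := fun v => rfl
  have hadj : ∀ w, ‖ContinuousLinearMap.adjoint f w‖ ≤ ‖w‖ := by
    intro w
    have h1 : ‖ContinuousLinearMap.adjoint f‖ = ‖f‖ :=
      LinearIsometryEquiv.norm_map ContinuousLinearMap.adjoint f
    have h2 : ‖f‖ ≤ 1 :=
      ContinuousLinearMap.opNorm_le_bound _ zero_le_one
        (fun v => by rw [one_mul, hfv]; exact hA v)
    calc ‖ContinuousLinearMap.adjoint f w‖ ≤ ‖ContinuousLinearMap.adjoint f‖ * ‖w‖ :=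
          (ContinuousLinearMap.adjoint f).le_opNorm w
      _ ≤ 1 * ‖w‖ := by
          apply mul_le_mul_of_nonneg_right _ (norm_nonneg w)
          rw [h1]; exact h2
      _ = ‖w‖ := one_mul _
  have key : ‖ContinuousLinearMap.adjoint f (f u) - u‖ ^ 2 ≤ 0 := by
    rw [@norm_sub_sq ℂ]
    have h1 : ⟪ContinuousLinearMap.adjoint f (f u), u⟫_ℂ = ⟪f u, f u⟫_ℂ :=
      ContinuousLinearMap.adjoint_inner_left f u (f u)
    rw [h1]
    have h2 : RCLike.re ⟪f u, f u⟫_ℂ = ‖f u‖ ^ 2 := @inner_self_eq_norm_sq ℂ _ _ _ _ (f u)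
    rw [h2]
    have h3 : ‖f u‖ = ‖u‖ := by rw [hfv]; exact hu
    have h4 : ‖ContinuousLinearMap.adjoint f (f u)‖ ≤ ‖u‖ := by
      calc ‖ContinuousLinearMap.adjoint f (f u)‖ ≤ ‖f u‖ := hadj (f u)
        _ = ‖u‖ := h3
    nlinarith [norm_nonneg (ContinuousLinearMap.adjoint f (f u))]
  have h0 : ContinuousLinearMap.adjoint f (f u) - u = 0 := by
    have hn0 : ‖ContinuousLinearMap.adjoint f (f u) - u‖ = 0 := by
      nlinarith [norm_nonneg (ContinuousLinearMap.adjoint f (f u) - u)]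
    exact norm_eq_zero.mp hn0
  have hfin := sub_eq_zero.mp h0
  calc Matrix.toEuclideanLin Aᴴ (Matrix.toEuclideanLin A u)
      = ContinuousLinearMap.adjoint f (f u) := by rw [← hstar]; rfl
    _ = u := hfin

lemma exists_attains {n : ℕ} (hn : n ≠ 0)
    (g : EuclideanSpace ℂ (Fin n) →L[ℂ] EuclideanSpace ℂ (Fin n))
    (hg : ‖g‖ = 1) : ∃ x : EuclideanSpace ℂ (Fin n), ‖x‖ = 1 ∧ ‖g x‖ = 1 := by
  have hsn : (Metric.sphere (0 : EuclideanSpace ℂ (Fin n)) 1).Nonempty := by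
    refine ⟨EuclideanSpace.single ⟨0, Nat.pos_of_ne_zero hn⟩ 1, ?_⟩
    rw [mem_sphere_zero_iff_norm, EuclideanSpace.norm_single, norm_one]
  obtain ⟨x, hxs, hmax⟩ := (isCompact_sphere (0 : EuclideanSpace ℂ (Fin n)) 1).exists_isMaxOn hsn
      (g.continuous.norm.continuousOn)
  have hx1 : ‖x‖ = 1 := mem_sphere_zero_iff_norm.mp hxs
  have hmax' : ∀ v ∈ Metric.sphere (0 : EuclideanSpace ℂ (Fin n)) 1, ‖g v‖ ≤ ‖g x‖ :=
    fun v hv => hmax hv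
  refine ⟨x, hx1, le_antisymm ?_ ?_⟩
  · calc ‖g x‖ ≤ ‖g‖ * ‖x‖ := g.le_opNorm x
      _ = 1 := by rw [hg, hx1, mul_one]
  · rw [← hg]
    apply ContinuousLinearMap.opNorm_le_bound _ (norm_nonneg _)
    intro v
    rcases eq_or_ne v 0 with rfl | hv
    · simp
    · have hnv : ‖v‖ ≠ 0 := norm_ne_zero_iff.mpr hv
      set c : ℂ := ((‖v‖⁻¹ : ℝ) : ℂ) with hc
      have hcn : ‖c‖ = ‖v‖⁻¹ := by
        rw [hc, Complex.norm_real, norm_inv, norm_norm]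
      have humem : (c • v) ∈ Metric.sphere (0 : EuclideanSpace ℂ (Fin n)) 1 := by
        rw [mem_sphere_zero_iff_norm, norm_smul, hcn]
        field_simp
      have hb := hmax' _ humem
      rw [g.map_smul, norm_smul, hcn] at hb
      calc ‖g v‖ = ‖v‖ * (‖v‖⁻¹ * ‖g v‖) := by field_simp
        _ ≤ ‖v‖ * ‖g x‖ := mul_le_mul_of_nonneg_left hb (norm_nonneg v)
        _ = ‖g x‖ * ‖v‖ := mul_comm _ _

set_option maxHeartbeats 2000000 in
lemma main_aux {n m : ℕ} (A : Matrix (Fin n) (Fin n) ℂ) (hn : 0 < n)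
    (hA : ∀ v : EuclideanSpace ℂ (Fin n), ‖Matrix.toEuclideanLin A v‖ ≤ ‖v‖)
    (x : EuclideanSpace ℂ (Fin n))
    (hx : ∀ k, k ≤ m - 1 → ‖Matrix.toEuclideanLin (A ^ k) x‖ = 1) :
    ∃ B : Matrix (Fin (n * m - m)) (Fin (n * m - m)) ℂ,
      numRadius B ≤ numRadius (Jordan m) ∧
      UnitSim (A ⊗ₖ Jordan m) (Matrix.fromBlocks (Jordan m) 0 0 B) := by
  classical
  set T := Matrix.toEuclideanLin (A ⊗ₖ Jordan m) with hTdef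
  set Ts := Matrix.toEuclideanLin ((A ⊗ₖ Jordan m)ᴴ) with hTsdef
  have hadjinner : ∀ (a b : EuclideanSpace ℂ (Fin n × Fin m)), ⟪a, T b⟫_ℂ = ⟪Ts a, b⟫_ℂ := by
    intro a b
    rw [hTsdef, Matrix.toEuclideanLin_conjTranspose_eq_adjoint, LinearMap.adjoint_inner_left]
  set q : ℕ → EuclideanSpace ℂ (Fin n) := fun k => Matrix.toEuclideanLin (A ^ k) x with hq
  have hqn : ∀ k, k ≤ m - 1 → ‖q k‖ = 1 := hx
  have hqsucc : ∀ k, q (k + 1) = Matrix.toEuclideanLin A (q k) := by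
    intro k
    rw [hq]
    simp only
    rw [pow_succ']
    exact lin_mul A (A ^ k) x
  have hqadj : ∀ k, k + 1 ≤ m - 1 → Matrix.toEuclideanLin Aᴴ (q (k + 1)) = q k := by
    intro k hk
    rw [hqsucc k]
    exact contraction_fix A hA (q k)
      (by rw [← hqsucc k, hqn (k + 1) hk, hqn k (le_trans (Nat.le_succ k) hk)])
  set v : Fin m → EuclideanSpace ℂ (Fin n × Fin m) :=
    fun j => emb (q (m - 1 - (j : ℕ))) j with hvdef
  have hvorth : Orthonormal ℂ v := by
    rw [orthonormal_iff_ite]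
    intro j k
    rw [hvdef]
    simp only
    rw [emb_inner]
    split_ifs with h
    · subst h
      rw [inner_self_eq_norm_sq_to_K, hqn _ (Nat.sub_le _ _)]
      norm_num
    · rfl
  have hTv0 : ∀ j : Fin m, (j : ℕ) = 0 → T (v j) = 0 := fun j hj => kron_emb_zero A _ j hj
  have hTvS : ∀ j j' : Fin m, (j' : ℕ) + 1 = (j : ℕ) → T (v j) = v j' := by
    intro j j' hj
    rw [hTdef, hvdef]
    simp only
    rw [kron_emb_succ A _ j' j hj]
    have h1 : (m - 1 - (j' : ℕ)) = (m - 1 - (j : ℕ)) + 1 := by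
      have := j.2
      omega
    rw [h1, hqsucc]
  have hTsLast : ∀ j : Fin m, (j : ℕ) + 1 = m → Ts (v j) = 0 :=
    fun j hj => kron_adj_emb_last A _ j hj
  have hTsS : ∀ j j' : Fin m, (j : ℕ) + 1 = (j' : ℕ) → Ts (v j) = v j' := by
    intro j j' hj
    rw [hTsdef, hvdef]
    simp only
    rw [kron_adj_emb_succ A _ j j' hj]
    have h1 : m - 1 - (j : ℕ) = (m - 1 - (j' : ℕ)) + 1 := by
      have := j'.2
      omega
    rw [h1, hqadj _ (by have := j'.2; omega)]
  set V := Submodule.span ℂ (Set.range v) with hVdef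
  have hvmem : ∀ j, v j ∈ V := fun j => Submodule.subset_span ⟨j, rfl⟩
  have hdimV : Module.finrank ℂ V = m := by
    rw [hVdef, finrank_span_eq_card hvorth.linearIndependent]
    simp
  have hdimtot : Module.finrank ℂ (EuclideanSpace ℂ (Fin n × Fin m)) = n * m := by
    rw [finrank_euclideanSpace]
    simp
  have hmle : m ≤ n * m := Nat.le_mul_of_pos_left m hn
  have hdimW : Module.finrank ℂ (Vᗮ) = n * m - m := by
    have hsum := Submodule.finrank_add_finrank_orthogonal (K := V)
    rw [hdimV, hdimtot] at hsum
    omega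
  set w : OrthonormalBasis (Fin (n * m - m)) ℂ (Vᗮ : Submodule ℂ (EuclideanSpace ℂ (Fin n × Fin m))) :=
    (stdOrthonormalBasis ℂ _).reindex (finCongr hdimW) with hw
  set u : (Fin m ⊕ Fin (n * m - m)) → EuclideanSpace ℂ (Fin n × Fin m) :=
    Sum.elim v (fun i => ((w i : EuclideanSpace ℂ (Fin n × Fin m)))) with hu
  have hworth : Orthonormal ℂ (fun i => ((w i : EuclideanSpace ℂ (Fin n × Fin m)))) := by
    rw [orthonormal_iff_ite]
    intro i j
    have := orthonormal_iff_ite.mp w.orthonormal i j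
    rwa [Submodule.coe_inner] at this
  have huorth : Orthonormal ℂ u := by
    rw [orthonormal_iff_ite]
    rintro (j | i) (k | l)
    · rw [hu]
      simp only [Sum.elim_inl]
      rw [orthonormal_iff_ite.mp hvorth j k]
      simp
    · rw [hu]
      simp only [Sum.elim_inl, Sum.elim_inr]
      rw [if_neg (by simp)]
      exact Submodule.inner_right_of_mem_orthogonal (hvmem j) (w l).2
    · rw [hu]
      simp only [Sum.elim_inl, Sum.elim_inr]
      rw [if_neg (by simp)]
      exact Submodule.inner_left_of_mem_orthogonal (hvmem k) (w i).2
    · rw [hu]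
      simp only [Sum.elim_inr]
      rw [orthonormal_iff_ite.mp hworth i l]
      simp
  have hcard : Fintype.card (Fin m ⊕ Fin (n * m - m))
      = Module.finrank ℂ (EuclideanSpace ℂ (Fin n × Fin m)) := by
    rw [hdimtot, Fintype.card_sum, Fintype.card_fin, Fintype.card_fin]
    omega
  have hspan : ⊤ ≤ Submodule.span ℂ (Set.range u) :=
    le_of_eq (huorth.linearIndependent.span_eq_top_of_card_eq_finrank' hcard).symm
  set b : OrthonormalBasis (Fin m ⊕ Fin (n * m - m)) ℂ (EuclideanSpace ℂ (Fin n × Fin m)) :=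
    OrthonormalBasis.mk huorth hspan with hb
  have hbu : ∀ s, b s = u s := fun s => by rw [hb, OrthonormalBasis.coe_mk]
  set B : Matrix (Fin (n * m - m)) (Fin (n * m - m)) ℂ :=
    fun k i => ⟪((w k : EuclideanSpace ℂ (Fin n × Fin m))),
      T ((w i : EuclideanSpace ℂ (Fin n × Fin m)))⟫_ℂ with hB
  have hM : ∀ t s, (Matrix.fromBlocks (Jordan m) 0 0 B) t s = ⟪u t, T (u s)⟫_ℂ := by
    rintro (t | t) (s | s)
    · rw [Matrix.fromBlocks_apply₁₁, hu]
      simp only [Sum.elim_inl]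
      rcases Nat.eq_zero_or_pos (s : ℕ) with hs | hs
      · rw [hTv0 s hs, inner_zero_right]
        have hne : (t : ℕ) + 1 ≠ (s : ℕ) := by omega
        simp [Jordan, hne]
      · obtain ⟨a, ha⟩ : ∃ a : ℕ, a + 1 = (s : ℕ) := ⟨(s : ℕ) - 1, by omega⟩
        have ha' : a < m := by have := s.2; omega
        rw [hTvS s ⟨a, ha'⟩ ha]
        rw [orthonormal_iff_ite.mp hvorth t ⟨a, ha'⟩]
        have hiff : ((t : ℕ) + 1 = (s : ℕ)) ↔ (t = (⟨a, ha'⟩ : Fin m)) := by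
          rw [Fin.ext_iff]
          simp only
          omega
        show (if (t : ℕ) + 1 = (s : ℕ) then (1 : ℂ) else 0) = _
        rw [if_congr hiff rfl rfl]
    · rw [Matrix.fromBlocks_apply₁₂, hu]
      simp only [Sum.elim_inl, Sum.elim_inr, Matrix.zero_apply]
      symm
      rw [hadjinner]
      rcases Nat.lt_or_ge ((t : ℕ) + 1) m with hlt | hge
      · rw [hTsS t ⟨(t : ℕ) + 1, hlt⟩ rfl]
        exact Submodule.inner_right_of_mem_orthogonal (hvmem _) (w s).2
      · have hte : (t : ℕ) + 1 = m := by have := t.2; omega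
        rw [hTsLast t hte, inner_zero_left]
    · rw [Matrix.fromBlocks_apply₂₁, hu]
      simp only [Sum.elim_inl, Sum.elim_inr, Matrix.zero_apply]
      symm
      rcases Nat.eq_zero_or_pos (s : ℕ) with hs | hs
      · rw [hTv0 s hs, inner_zero_right]
      · obtain ⟨a, ha⟩ : ∃ a : ℕ, a + 1 = (s : ℕ) := ⟨(s : ℕ) - 1, by omega⟩
        have ha' : a < m := by have := s.2; omega
        rw [hTvS s ⟨a, ha'⟩ ha]
        exact Submodule.inner_left_of_mem_orthogonal (hvmem _) (w t).2
    · rw [Matrix.fromBlocks_apply₂₂, hu]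
      simp only [Sum.elim_inr]
      rfl
  have hsim : ∀ ξ, Matrix.toEuclideanLin (Matrix.fromBlocks (Jordan m) 0 0 B) (b.repr ξ)
      = b.repr (T ξ) := by
    intro ξ
    ext t
    rw [lin_apply]
    rw [OrthonormalBasis.repr_apply_apply, hbu]
    conv_rhs => rw [← b.sum_repr ξ]
    rw [map_sum, inner_sum]
    apply Finset.sum_congr rfl
    intro s _
    rw [_root_.map_smul, inner_smul_right, hbu s, ← hM t s]
    have : b.repr ξ s = (b.repr ξ) s := rfl
    ring
  have hrad : numRadius B ≤ numRadius (Jordan m) := by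
    apply Real.sSup_le _ (numRadius_nonneg _)
    rintro r ⟨xx, hxx, rfl⟩
    set X : EuclideanSpace ℂ (Fin m ⊕ Fin (n * m - m)) :=
      WithLp.toLp 2 (fun s => Sum.elim (fun _ => (0 : ℂ)) xx s) with hX
    have hXn : ‖X‖ = 1 := by
      have h2 : ‖X‖ ^ 2 = ‖xx‖ ^ 2 := by
        rw [norm_sq_eq, norm_sq_eq, Fintype.sum_sum_type]
        simp [hX]
      nlinarith [norm_nonneg X, norm_nonneg xx, hxx]
    set ξ := b.repr.symm X with hxi
    have hξn : ‖ξ‖ = 1 := by rw [hxi, LinearIsometryEquiv.norm_map]; exact hXn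
    have hXi : b.repr ξ = X := by rw [hxi]; exact b.repr.apply_symm_apply X
    have key2 : ∀ t, Matrix.toEuclideanLin (Matrix.fromBlocks (Jordan m) 0 0 B) X (Sum.inr t)
        = Matrix.toEuclideanLin B xx t := by
      intro t
      rw [lin_apply, lin_apply, Fintype.sum_sum_type]
      have hzero : ∀ s : Fin m,
          Matrix.fromBlocks (Jordan m) 0 0 B (Sum.inr t) (Sum.inl s) * X (Sum.inl s) = 0 := by
        intro s; simp [hX]
      rw [Finset.sum_eq_zero fun s _ => hzero s, zero_add]
      apply Finset.sum_congr rfl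
      intro s _
      rw [Matrix.fromBlocks_apply₂₂]
      rfl
    have hinner : ⟪xx, Matrix.toEuclideanLin B xx⟫_ℂ = ⟪ξ, T ξ⟫_ℂ := by
      have h1 : ⟪ξ, T ξ⟫_ℂ = ⟪b.repr ξ, b.repr (T ξ)⟫_ℂ := (b.repr.inner_map_map ξ (T ξ)).symm
      rw [h1, ← hsim, hXi]
      rw [inner_euclid, inner_euclid, Fintype.sum_sum_type]
      have hzero : ∀ s : Fin m, (starRingEnd ℂ) (X (Sum.inl s))
          * (Matrix.toEuclideanLin (Matrix.fromBlocks (Jordan m) 0 0 B) X) (Sum.inl s) = 0 := by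
        intro s; simp [hX]
      rw [Finset.sum_eq_zero fun s _ => hzero s, zero_add]
      symm
      apply Finset.sum_congr rfl
      intro t _
      rw [key2 t]
      rfl
    rw [hinner]
    exact abs_inner_kron_le A hA ξ hξn
  exact ⟨B, hrad, ⟨b.repr, hsim⟩⟩

end Stmt7Aux

theorem stmt7 (n m : ℕ) (A : Matrix (Fin n) (Fin n) ℂ)
    (h1 : opNorm A = 1) (h2 : opNorm (A ^ (m - 1)) = 1) :
    ∃ B : Matrix (Fin (n * m - m)) (Fin (n * m - m)) ℂ, numRadius B ≤ numRadius (Jordan m) ∧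
      UnitSim (A ⊗ₖ Jordan m) (Matrix.fromBlocks (Jordan m) 0 0 B) := by
  have hn : n ≠ 0 := by
    rintro rfl
    have hzero : ∀ xx : EuclideanSpace ℂ (Fin 0), xx = 0 := fun xx => PiLp.ext fun i => i.elim0
    have h1' : ‖Matrix.toEuclideanCLM (𝕜 := ℂ) A‖ = 1 := h1
    have hle : ‖Matrix.toEuclideanCLM (𝕜 := ℂ) A‖ ≤ 0 := by
      apply ContinuousLinearMap.opNorm_le_bound _ le_rfl
      intro xx
      rw [hzero xx]
      simp
    rw [h1'] at hle
    linarith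
  have hA : ∀ v : EuclideanSpace ℂ (Fin n), ‖Matrix.toEuclideanLin A v‖ ≤ ‖v‖ := by
    intro v
    have h := (Matrix.toEuclideanCLM (𝕜 := ℂ) A).le_opNorm v
    have h1' : ‖Matrix.toEuclideanCLM (𝕜 := ℂ) A‖ = 1 := h1
    rw [h1', one_mul] at h
    exact h
  obtain ⟨x, hx1, hx2⟩ := Stmt7Aux.exists_attains hn (Matrix.toEuclideanCLM (𝕜 := ℂ) (A ^ (m - 1))) h2
  have hpow : ∀ (j : ℕ) (v : EuclideanSpace ℂ (Fin n)),
      ‖Matrix.toEuclideanLin (A ^ j) v‖ ≤ ‖v‖ := by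
    intro j
    induction j with
    | zero =>
      intro v
      rw [pow_zero, Stmt7Aux.lin_one]
    | succ k ih =>
      intro v
      rw [pow_succ', Stmt7Aux.lin_mul]
      exact le_trans (hA _) (ih v)
  have hxk : ∀ k, k ≤ m - 1 → ‖Matrix.toEuclideanLin (A ^ k) x‖ = 1 := by
    intro k hk
    refine le_antisymm (le_trans (hpow k x) (le_of_eq hx1)) ?_
    have hsplit : A ^ (m - 1) = A ^ (m - 1 - k) * A ^ k := by
      rw [← pow_add]
      congr 1
      omega
    have hle2 : ‖Matrix.toEuclideanLin (A ^ (m - 1)) x‖ ≤ ‖Matrix.toEuclideanLin (A ^ k) x‖ := by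
      rw [hsplit, Stmt7Aux.lin_mul]
      exact hpow _ _
    have hx2' : ‖Matrix.toEuclideanLin (A ^ (m - 1)) x‖ = 1 := hx2
    rw [hx2'] at hle2
    exact hle2
  exact Stmt7Aux.main_aux A (Nat.pos_of_ne_zero hn) hA x hxk
end

section
/- If A is an n-by-n complex matrix with ‖A‖ = 1 and w(A ⊗ J_m) = w(J_m) = cos(π/(m+1)), then ‖A^{m−1}‖ = 1, where J_m is the m-by-m nilpotent Jordan block. -/
open scoped Kronecker InnerProductSpace

namespace Stmt8aux

/-! ### Trigonometric preliminaries -/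

noncomputable def th (m : ℕ) : ℝ := Real.pi / (m + 1)

noncomputable def S (m j : ℕ) : ℝ := Real.sin (j * th m)

lemma th_pos (m : ℕ) : 0 < th m := by
  have : (0:ℝ) < m + 1 := by positivity
  exact div_pos Real.pi_pos this

lemma th_mul (m : ℕ) : ((m:ℝ)+1) * th m = Real.pi := by
  rw [th]
  field_simp

lemma S_zero (m : ℕ) : S m 0 = 0 := by simp [S]

lemma S_top (m : ℕ) : S m (m+1) = 0 := by
  have h : ((m:ℝ)+1) * th m = Real.pi := th_mul m
  simp only [S]
  push_cast
  rw [h, Real.sin_pi]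

lemma S_nonneg (m : ℕ) {j : ℕ} (hj : j ≤ m + 1) : 0 ≤ S m j := by
  apply Real.sin_nonneg_of_nonneg_of_le_pi
  · exact mul_nonneg (by positivity) (th_pos m).le
  · rw [← th_mul m]
    apply mul_le_mul_of_nonneg_right _ (th_pos m).le
    exact_mod_cast hj

lemma S_pos (m : ℕ) {j : ℕ} (h1 : 1 ≤ j) (h2 : j ≤ m) : 0 < S m j := by
  apply Real.sin_pos_of_pos_of_lt_pi
  · have h1' : (1:ℝ) ≤ j := by exact_mod_cast h1
    nlinarith [th_pos m]
  · rw [← th_mul m]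
    have hj : (j:ℝ) < (m:ℝ) + 1 := by exact_mod_cast Nat.lt_succ_of_le h2
    exact mul_lt_mul_of_pos_right hj (th_pos m)

lemma S_rec (m j : ℕ) : S m j + S m (j+2) = 2 * Real.cos (th m) * S m (j+1) := by
  have h1 : ((j:ℝ)+2) * th m = ((j:ℝ)+1) * th m + th m := by ring
  have h2 : (j:ℝ) * th m = ((j:ℝ)+1) * th m - th m := by ring
  simp only [S]
  push_cast
  rw [h1, h2, Real.sin_add, Real.sin_sub]
  ring

open Finset
/-- per-term AM-GM with weights `u`, `v` with `u*v = 1` -/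
lemma term_expand {u v x y : ℝ} (hu : 0 ≤ u) (hv : 0 ≤ v) (huv : u * v = 1) :
    (1/2) * (Real.sqrt u * x - Real.sqrt v * y)^2
      = (1/2) * (u * x^2 + v * y^2) - x * y := by
  have h1 : Real.sqrt u ^ 2 = u := Real.sq_sqrt hu
  have h2 : Real.sqrt v ^ 2 = v := Real.sq_sqrt hv
  have h3 : Real.sqrt u * Real.sqrt v = 1 := by
    rw [← Real.sqrt_mul hu, huv, Real.sqrt_one]
  linear_combination (x^2/2) * h1 + (y^2/2) * h2 - (x*y) * h3

/-- the reindexed double sum -/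
lemma sum_reindex (m : ℕ) (hm : 1 ≤ m) (a : ℕ → ℝ) :
    ∑ k ∈ range (m-1), (S m (k+2) / S m (k+1) * a k ^ 2
        + S m (k+1) / S m (k+2) * a (k+1) ^ 2)
      = ∑ j ∈ range m, (S m j + S m (j+2)) / S m (j+1) * a j ^ 2 := by
  obtain ⟨M, rfl⟩ : ∃ M, m = M + 1 := ⟨m - 1, (Nat.succ_pred_eq_of_pos hm).symm⟩
  simp only [Nat.add_sub_cancel]
  rw [Finset.sum_add_distrib]
  have h1 : ∑ k ∈ range M, S (M+1) (k+2) / S (M+1) (k+1) * a k ^ 2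
      = ∑ k ∈ range (M+1), S (M+1) (k+2) / S (M+1) (k+1) * a k ^ 2 := by
    rw [Finset.sum_range_succ]
    have : S (M+1) (M+2) = 0 := S_top (M+1)
    simp [this]
  have h2 : ∑ k ∈ range M, S (M+1) (k+1) / S (M+1) (k+2) * a (k+1) ^ 2
      = ∑ j ∈ range (M+1), S (M+1) j / S (M+1) (j+1) * a j ^ 2 := by
    rw [Finset.sum_range_succ' (fun j => S (M+1) j / S (M+1) (j+1) * a j ^ 2) M]
    simp [S_zero]
  rw [h1, h2, ← Finset.sum_add_distrib]
  apply Finset.sum_congr rfl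
  intro j hj
  have hj' : j < M + 1 := Finset.mem_range.mp hj
  have hS : S (M+1) (j+1) ≠ 0 := (S_pos (M+1) (Nat.le_add_left 1 j) (by omega)).ne'
  field_simp
  ring

lemma sos (m : ℕ) (hm : 1 ≤ m) (a : ℕ → ℝ) :
    Real.cos (th m) * ∑ j ∈ range m, a j ^ 2
        - ∑ k ∈ range (m-1), a k * a (k+1)
      = ∑ k ∈ range (m-1), (1/2) *
          (Real.sqrt (S m (k+2) / S m (k+1)) * a k
            - Real.sqrt (S m (k+1) / S m (k+2)) * a (k+1))^2 := by
  have hterm : ∀ k ∈ range (m-1), (1/2) *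
          (Real.sqrt (S m (k+2) / S m (k+1)) * a k
            - Real.sqrt (S m (k+1) / S m (k+2)) * a (k+1))^2
      = (1/2) * (S m (k+2) / S m (k+1) * a k ^ 2 + S m (k+1) / S m (k+2) * a (k+1) ^ 2)
          - a k * a (k+1) := by
    intro k hk
    have hk' : k < m - 1 := Finset.mem_range.mp hk
    have p1 : 0 < S m (k+1) := S_pos m (by omega) (by omega)
    have p2 : 0 < S m (k+2) := S_pos m (by omega) (by omega)
    apply term_expand (by positivity) (by positivity)
    field_simp
  rw [Finset.sum_congr rfl hterm, Finset.sum_sub_distrib, ← Finset.mul_sum,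
    sum_reindex m hm a]
  have hcoef : ∀ j ∈ range m, (S m j + S m (j+2)) / S m (j+1) * a j ^ 2
      = 2 * Real.cos (th m) * a j ^ 2 := by
    intro j hj
    have hj' : j < m := Finset.mem_range.mp hj
    have hS : S m (j+1) ≠ 0 := (S_pos m (by omega) (by omega)).ne'
    rw [S_rec m j]
    field_simp
  rw [Finset.sum_congr rfl hcoef, ← Finset.mul_sum]
  ring

lemma key_ineq (m : ℕ) (hm : 1 ≤ m) (a : ℕ → ℝ) :
    ∑ k ∈ range (m-1), a k * a (k+1)
      ≤ Real.cos (th m) * ∑ j ∈ range m, a j ^ 2 := by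
  have h := sos m hm a
  have : 0 ≤ ∑ k ∈ range (m-1), (1/2) *
      (Real.sqrt (S m (k+2) / S m (k+1)) * a k
        - Real.sqrt (S m (k+1) / S m (k+2)) * a (k+1))^2 :=
    Finset.sum_nonneg fun k _ => by positivity
  linarith

lemma key_pos (m : ℕ) (hm : 1 ≤ m) (a : ℕ → ℝ) (ha : ∀ j, 0 ≤ a j)
    (heq : ∑ k ∈ range (m-1), a k * a (k+1)
        = Real.cos (th m) * ∑ j ∈ range m, a j ^ 2)
    (hnorm : ∑ j ∈ range m, a j ^ 2 = 1) :
    ∀ j, j < m → 0 < a j := by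
  -- from equality, each square term vanishes
  have h := sos m hm a
  rw [heq, sub_self] at h
  have hzero : ∀ k ∈ range (m-1), (1/2) *
      (Real.sqrt (S m (k+2) / S m (k+1)) * a k
        - Real.sqrt (S m (k+1) / S m (k+2)) * a (k+1))^2 = 0 := by
    intro k hk
    have := (Finset.sum_eq_zero_iff_of_nonneg (fun k _ => by positivity)).mp h.symm
    exact this k hk
  -- recurrence : a (k+1) = (S(k+2)/S(k+1)) * a k for k < m-1
  have hrec : ∀ k, k < m - 1 → a (k+1) = S m (k+2) / S m (k+1) * a k := by
    intro k hk
    have hz := hzero k (Finset.mem_range.mpr hk)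
    have p1 : 0 < S m (k+1) := S_pos m (by omega) (by omega)
    have p2 : 0 < S m (k+2) := S_pos m (by omega) (by omega)
    set s1 := Real.sqrt (S m (k+2) / S m (k+1)) with hs1
    set s2 := Real.sqrt (S m (k+1) / S m (k+2)) with hs2
    have hsq : (s1 * a k - s2 * a (k+1))^2 = 0 := by linarith
    have hzz : s1 * a k = s2 * a (k+1) := by
      have := sq_eq_zero_iff.mp hsq
      linarith
    have hprod : s1 * s2 = 1 := by
      rw [hs1, hs2, ← Real.sqrt_mul (by positivity)]
      rw [show S m (k+2) / S m (k+1) * (S m (k+1) / S m (k+2)) = 1 by field_simp]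
      exact Real.sqrt_one
    have hs : s1 ^ 2 = S m (k+2) / S m (k+1) := Real.sq_sqrt (by positivity)
    have key : s1^2 * a k = a (k+1) := by
      calc s1^2 * a k = s1 * (s1 * a k) := by ring
        _ = s1 * (s2 * a (k+1)) := by rw [hzz]
        _ = (s1 * s2) * a (k+1) := by ring
        _ = a (k+1) := by rw [hprod, one_mul]
    rw [← key, hs]
  -- a 0 > 0
  have h0 : a 0 ≠ 0 := by
    intro h0
    have hall : ∀ j, j < m → a j = 0 := by
      intro j hj
      induction j with
      | zero => exact h0
      | succ i ih =>
        have hi : i < m - 1 := by omega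
        rw [hrec i hi, ih (by omega), mul_zero]
    have : ∑ j ∈ range m, a j ^ 2 = 0 := by
      apply Finset.sum_eq_zero
      intro j hj
      rw [hall j (Finset.mem_range.mp hj)]
      ring
    rw [this] at hnorm
    norm_num at hnorm
  intro j hj
  induction j with
  | zero => exact lt_of_le_of_ne (ha 0) (Ne.symm h0)
  | succ i ih =>
    have hi : i < m - 1 := by omega
    rw [hrec i hi]
    have p1 : 0 < S m (i+1) := S_pos m (by omega) (by omega)
    have p2 : 0 < S m (i+2) := S_pos m (by omega) (by omega)
    have := ih (by omega)
    positivity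


/-! ### Attainment of the numerical radius, degenerate cases -/

lemma numRadius_attained {n : Type*} [Fintype n] [DecidableEq n] [Nonempty n]
    (M : Matrix n n ℂ) :
    ∃ x : EuclideanSpace ℂ n, ‖x‖ = 1 ∧
      ‖⟪x, Matrix.toEuclideanLin M x⟫_ℂ‖ = numRadius M := by
  set f : EuclideanSpace ℂ n → ℝ :=
    fun x => ‖⟪x, Matrix.toEuclideanLin M x⟫_ℂ‖ with hf
  have hcont : Continuous f := by
    apply continuous_norm.comp
    exact Continuous.inner continuous_id
      (Matrix.toEuclideanLin M).continuous_of_finiteDimensional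
  have hset : {r : ℝ | ∃ x : EuclideanSpace ℂ n, ‖x‖ = 1 ∧ r = f x}
      = f '' (Metric.sphere (0 : EuclideanSpace ℂ n) 1) := by
    ext r
    simp only [Set.mem_setOf_eq, Set.mem_image, mem_sphere_zero_iff_norm]
    constructor
    · rintro ⟨x, hx, rfl⟩; exact ⟨x, hx, rfl⟩
    · rintro ⟨x, hx, rfl⟩; exact ⟨x, hx, rfl⟩
  have hcomp : IsCompact (f '' (Metric.sphere (0 : EuclideanSpace ℂ n) 1)) :=
    (isCompact_sphere 0 1).image hcont
  have hne : (f '' (Metric.sphere (0 : EuclideanSpace ℂ n) 1)).Nonempty := by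
    obtain ⟨i⟩ := ‹Nonempty n›
    refine ⟨f (EuclideanSpace.single i 1), ⟨EuclideanSpace.single i 1, ?_, rfl⟩⟩
    simp [mem_sphere_zero_iff_norm, EuclideanSpace.norm_single]
  have := hcomp.sSup_mem hne
  rw [numRadius, hset]
  obtain ⟨x, hx, hfx⟩ := this
  exact ⟨x, mem_sphere_zero_iff_norm.mp hx, hfx⟩

lemma numRadius_jordan_zero : numRadius (Jordan 0) = 0 := by
  have : {r : ℝ | ∃ x : EuclideanSpace ℂ (Fin 0), ‖x‖ = 1 ∧
      r = ‖⟪x, Matrix.toEuclideanLin (Jordan 0) x⟫_ℂ‖} = ∅ := by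
    ext r
    simp only [Set.mem_setOf_eq, Set.mem_empty_iff_false, iff_false]
    rintro ⟨x, hx, -⟩
    have : x = 0 := Subsingleton.elim x 0
    rw [this, norm_zero] at hx
    norm_num at hx
  rw [numRadius, this, Real.sSup_empty]

lemma opNorm_zero_of_n_zero (A : Matrix (Fin 0) (Fin 0) ℂ) : opNorm A = 0 := by
  rw [opNorm]
  have : (Matrix.toEuclideanCLM (𝕜 := ℂ) A) = 0 := Subsingleton.elim _ _
  rw [this, norm_zero]


/-! ### Decomposition of the Kronecker inner product -/

variable {n m : ℕ}

noncomputable def xv (ξ : EuclideanSpace ℂ (Fin n × Fin m)) (k : ℕ) :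
    EuclideanSpace ℂ (Fin n) :=
  (WithLp.equiv 2 (Fin n → ℂ)).symm (fun i => if h : k < m then ξ (i, ⟨k, h⟩) else 0)

lemma xv_apply (ξ : EuclideanSpace ℂ (Fin n × Fin m)) (k : ℕ) (i : Fin n) :
    xv ξ k i = if h : k < m then ξ (i, ⟨k, h⟩) else 0 := rfl

lemma fin_if_sum (c : Fin m → ℂ) (k : ℕ) :
    ∑ l : Fin m, (if k + 1 = (l : ℕ) then 1 else 0) * c l
      = if h : k + 1 < m then c ⟨k+1, h⟩ else 0 := by
  by_cases h : k + 1 < m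
  · rw [dif_pos h]
    rw [Finset.sum_eq_single_of_mem (⟨k+1, h⟩ : Fin m) (Finset.mem_univ _)]
    · simp
    · intro l _ hl
      rw [if_neg, zero_mul]
      intro hc
      exact hl (Fin.ext hc.symm)
  · rw [dif_neg h]
    apply Finset.sum_eq_zero
    intro l _
    rw [if_neg, zero_mul]
    intro hc
    exact h (hc ▸ l.2)

lemma inner_kron (hm : 1 ≤ m) (A : Matrix (Fin n) (Fin n) ℂ)
    (ξ : EuclideanSpace ℂ (Fin n × Fin m)) :
    ⟪ξ, Matrix.toEuclideanLin (A ⊗ₖ Jordan m) ξ⟫_ℂ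
      = ∑ k ∈ Finset.range (m-1), ⟪xv ξ k, Matrix.toEuclideanLin A (xv ξ (k+1))⟫_ℂ := by
  have key : ∀ (g : ℕ → ℂ), (g = fun k => ∑ i : Fin n, (starRingEnd ℂ) (xv ξ k i) *
      ∑ j : Fin n, A i j * xv ξ (k+1) j) →
      ⟪ξ, Matrix.toEuclideanLin (A ⊗ₖ Jordan m) ξ⟫_ℂ = ∑ k ∈ Finset.range m, g k := by
    intro g hg
    simp only [PiLp.inner_apply, RCLike.inner_apply', Matrix.toEuclideanLin_apply,
      PiLp.toLp_apply, WithLp.ofLp_toLp, Matrix.mulVec, dotProduct,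
      Matrix.kroneckerMap_apply, Jordan]
    rw [Fintype.sum_prod_type]
    rw [Finset.sum_comm]
    rw [← Fin.sum_univ_eq_sum_range g m]
    apply Finset.sum_congr rfl
    intro k _
    rw [hg]
    simp only
    apply Finset.sum_congr rfl
    intro i _
    congr 1
    · rw [xv_apply, dif_pos k.2]
    · rw [Fintype.sum_prod_type]
      apply Finset.sum_congr rfl
      intro j _
      have : ∑ l : Fin m, (A i j * if (k:ℕ) + 1 = (l:ℕ) then 1 else 0) * ξ (j, l)
          = A i j * ∑ l : Fin m, (if (k:ℕ) + 1 = (l:ℕ) then 1 else 0) * ξ (j, l) := by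
        rw [Finset.mul_sum]
        apply Finset.sum_congr rfl
        intro l _
        ring
      rw [this, fin_if_sum (fun l => ξ (j, l)) k]
      rw [xv_apply]
  have hg := key _ rfl
  rw [hg]
  obtain ⟨M, rfl⟩ : ∃ M, m = M + 1 := ⟨m - 1, (Nat.succ_pred_eq_of_pos hm).symm⟩
  rw [Finset.sum_range_succ]
  have hlast : ∑ i : Fin n, (starRingEnd ℂ) (xv ξ M i) *
      ∑ j : Fin n, A i j * xv ξ (M+1) j = 0 := by
    apply Finset.sum_eq_zero
    intro i _
    have : ∀ j, xv ξ (M+1) j = 0 := by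
      intro j
      rw [xv_apply, dif_neg (by omega)]
    simp [this]
  rw [hlast, add_zero, Nat.add_sub_cancel]
  apply Finset.sum_congr rfl
  intro k _
  simp only [PiLp.inner_apply, RCLike.inner_apply', Matrix.toEuclideanLin_apply,
    PiLp.toLp_apply, WithLp.ofLp_toLp, Matrix.mulVec, dotProduct]

lemma norm_decomp (ξ : EuclideanSpace ℂ (Fin n × Fin m)) (hξ : ‖ξ‖ = 1) :
    ∑ k ∈ Finset.range m, ‖xv ξ k‖ ^ 2 = 1 := by
  have h1 : ‖ξ‖ ^ 2 = ∑ p : Fin n × Fin m, ‖ξ p‖ ^ 2 := PiLp.norm_sq_eq_of_L2 _ ξ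
  have h2 : ∀ k : ℕ, ‖xv ξ k‖ ^ 2 = ∑ i : Fin n, ‖xv ξ k i‖ ^ 2 :=
    fun k => PiLp.norm_sq_eq_of_L2 _ (xv ξ k)
  rw [hξ, one_pow] at h1
  conv_rhs => rw [h1]
  rw [Fintype.sum_prod_type_right (f := fun p : Fin n × Fin m => ‖ξ p‖^2)]
  rw [← Fin.sum_univ_eq_sum_range (fun k => ‖xv ξ k‖ ^ 2) m]
  apply Finset.sum_congr rfl
  intro k _
  rw [h2]
  apply Finset.sum_congr rfl
  intro i _
  rw [xv_apply, dif_pos k.2]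

end Stmt8aux

open Stmt8aux Finset

theorem stmt8 (n m : ℕ) (A : Matrix (Fin n) (Fin n) ℂ)
    (h1 : opNorm A = 1)
    (h2 : numRadius (A ⊗ₖ Jordan m) = numRadius (Jordan m))
    (h3 : numRadius (Jordan m) = Real.cos (Real.pi / (m + 1))) :
    opNorm (A ^ (m - 1)) = 1 := by
  -- rule out `m = 0`
  rcases Nat.eq_zero_or_pos m with rfl | hm
  · rw [numRadius_jordan_zero] at h3
    rw [Nat.cast_zero, zero_add, div_one, Real.cos_pi] at h3
    norm_num at h3
  -- rule out `n = 0`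
  rcases Nat.eq_zero_or_pos n with rfl | hn
  · rw [opNorm_zero_of_n_zero] at h1
    norm_num at h1
  haveI : Nonempty (Fin n) := ⟨⟨0, hn⟩⟩
  haveI : Nonempty (Fin m) := ⟨⟨0, hm⟩⟩
  set c : ℝ := Real.cos (th m) with hc
  set L : EuclideanSpace ℂ (Fin n) →L[ℂ] EuclideanSpace ℂ (Fin n) :=
    Matrix.toEuclideanCLM (𝕜 := ℂ) A with hL
  have hLapp : ∀ y : EuclideanSpace ℂ (Fin n), Matrix.toEuclideanLin A y = L y := by
    intro y
    rw [hL, ← Matrix.coe_toEuclideanCLM_eq_toEuclideanLin]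
    rfl
  have hLle : ∀ y : EuclideanSpace ℂ (Fin n), ‖L y‖ ≤ ‖y‖ := by
    intro y
    have := L.le_opNorm y
    rw [show ‖L‖ = 1 from h1, one_mul] at this
    exact this
  -- the maximizing vector
  obtain ⟨ξ, hξ, hmax⟩ := numRadius_attained (A ⊗ₖ Jordan m)
  have hval : ‖⟪ξ, Matrix.toEuclideanLin (A ⊗ₖ Jordan m) ξ⟫_ℂ‖ = c := by
    rw [hmax, h2, h3]
    rfl
  set a : ℕ → ℝ := fun k => ‖xv ξ k‖ with ha
  have hnorm1 : ∑ j ∈ range m, a j ^ 2 = 1 := norm_decomp ξ hξ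
  have hdecomp : ⟪ξ, Matrix.toEuclideanLin (A ⊗ₖ Jordan m) ξ⟫_ℂ
      = ∑ k ∈ range (m-1), ⟪xv ξ k, L (xv ξ (k+1))⟫_ℂ := by
    rw [inner_kron hm A ξ]
    exact Finset.sum_congr rfl fun k _ => by rw [hLapp]
  -- the chain of inequalities
  have hterm_le : ∀ k ∈ range (m-1), ‖⟪xv ξ k, L (xv ξ (k+1))⟫_ℂ‖ ≤ a k * a (k+1) := by
    intro k _
    calc ‖⟪xv ξ k, L (xv ξ (k+1))⟫_ℂ‖ ≤ ‖xv ξ k‖ * ‖L (xv ξ (k+1))‖ :=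
          norm_inner_le_norm _ _
      _ ≤ a k * a (k+1) := by
          exact mul_le_mul_of_nonneg_left (hLle _) (norm_nonneg _)
  have hchain1 : c ≤ ∑ k ∈ range (m-1), ‖⟪xv ξ k, L (xv ξ (k+1))⟫_ℂ‖ := by
    rw [← hval, hdecomp]
    exact norm_sum_le _ _
  have hchain2 : ∑ k ∈ range (m-1), ‖⟪xv ξ k, L (xv ξ (k+1))⟫_ℂ‖
      ≤ ∑ k ∈ range (m-1), a k * a (k+1) := Finset.sum_le_sum hterm_le
  have hchain3 : ∑ k ∈ range (m-1), a k * a (k+1) ≤ c := by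
    have := key_ineq m hm a
    rw [hnorm1, mul_one] at this
    exact this
  have heq2 : ∑ k ∈ range (m-1), ‖⟪xv ξ k, L (xv ξ (k+1))⟫_ℂ‖
      = ∑ k ∈ range (m-1), a k * a (k+1) := le_antisymm hchain2 (by linarith)
  have heq3 : ∑ k ∈ range (m-1), a k * a (k+1) = c := le_antisymm hchain3 (by linarith)
  have htermeq : ∀ k ∈ range (m-1), ‖⟪xv ξ k, L (xv ξ (k+1))⟫_ℂ‖ = a k * a (k+1) :=
    (Finset.sum_eq_sum_iff_of_le hterm_le).mp heq2
  have hpos : ∀ j, j < m → 0 < a j := by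
    apply key_pos m hm a (fun j => norm_nonneg _) _ hnorm1
    rw [hnorm1, mul_one, heq3]
  -- Cauchy-Schwarz equality analysis
  have step : ∀ k, k < m - 1 → ∃ r : ℂ, L (xv ξ (k+1)) = r • xv ξ k
      ∧ ‖L (xv ξ (k+1))‖ = a (k+1) := by
    intro k hk
    have h1k := htermeq k (Finset.mem_range.mpr hk)
    have hak : 0 < a k := hpos k (by omega)
    have hak1 : 0 < a (k+1) := hpos (k+1) (by omega)
    have le1 : ‖⟪xv ξ k, L (xv ξ (k+1))⟫_ℂ‖ ≤ a k * ‖L (xv ξ (k+1))‖ :=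
      norm_inner_le_norm _ _
    have le2 : ‖L (xv ξ (k+1))‖ ≤ a (k+1) := hLle _
    have hLn : ‖L (xv ξ (k+1))‖ = a (k+1) := by nlinarith
    have hx0 : xv ξ k ≠ 0 := by
      intro h
      rw [ha] at hak
      simp only [h, norm_zero] at hak
      exact lt_irrefl 0 hak
    have hy0 : L (xv ξ (k+1)) ≠ 0 := by
      intro h
      rw [h, norm_zero] at hLn
      linarith
    have hinner_eq : ‖⟪xv ξ k, L (xv ξ (k+1))⟫_ℂ‖ = ‖xv ξ k‖ * ‖L (xv ξ (k+1))‖ := by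
      rw [h1k, hLn]
    obtain ⟨r, _, hr⟩ := (norm_inner_eq_norm_iff hx0 hy0).mp hinner_eq
    exact ⟨r, hr, hLn⟩
  -- iterate
  have iter : ∀ j, j ≤ m - 1 → ∃ d : ℂ, (L ^ j) (xv ξ (m-1)) = d • xv ξ (m-1-j)
      ∧ ‖d‖ * a (m-1-j) = a (m-1) := by
    intro j
    induction j with
    | zero =>
      intro _
      refine ⟨1, ?_, by simp⟩
      simp
    | succ i ih =>
      intro hi
      obtain ⟨d, hd, hnd⟩ := ih (by omega)
      set k := m - 1 - (i+1) with hk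
      have hkk : m - 1 - i = k + 1 := by omega
      have hkm : k < m - 1 := by omega
      obtain ⟨r, hr, hnr⟩ := step k hkm
      refine ⟨d * r, ?_, ?_⟩
      · rw [pow_succ']
        rw [ContinuousLinearMap.mul_apply, hd, hkk]
        rw [map_smul, hr, smul_smul]
      · have h1 : ‖r‖ * a k = a (k+1) := by
          have h2 : ‖r • xv ξ k‖ = ‖L (xv ξ (k+1))‖ := by rw [hr]
          rw [norm_smul] at h2
          exact h2.trans hnr
        rw [hkk] at hnd
        rw [norm_mul]
        calc ‖d‖ * ‖r‖ * a k = ‖d‖ * (‖r‖ * a k) := by ring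
          _ = ‖d‖ * a (k+1) := by rw [h1]
          _ = a (m-1) := hnd
  -- conclude
  obtain ⟨d, hd, hnd⟩ := iter (m-1) le_rfl
  have hnormpow : ‖(L ^ (m-1)) (xv ξ (m-1))‖ = a (m-1) := by
    rw [hd, norm_smul]
    simpa using hnd
  have hfin : 0 < a (m-1) := hpos (m-1) (by omega)
  have hpowle : ∀ (j : ℕ) (x : EuclideanSpace ℂ (Fin n)), ‖(L ^ j) x‖ ≤ ‖x‖ := by
    intro j
    induction j with
    | zero => intro x; simp
    | succ i ih =>
      intro x
      rw [pow_succ, ContinuousLinearMap.mul_apply]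
      exact le_trans (ih (L x)) (hLle x)
  have hub : ‖L ^ (m-1)‖ ≤ 1 :=
    ContinuousLinearMap.opNorm_le_bound _ zero_le_one
      (fun x => by rw [one_mul]; exact hpowle _ x)
  have hlb : 1 ≤ ‖L ^ (m-1)‖ := by
    have := (L ^ (m-1)).le_opNorm (xv ξ (m-1))
    rw [hnormpow] at this
    have haa : a (m-1) = ‖xv ξ (m-1)‖ := rfl
    rw [← haa] at this
    nlinarith
  have : opNorm (A ^ (m-1)) = ‖L ^ (m-1)‖ := by
    rw [opNorm, map_pow]
  rw [this]
  linarith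
end

section
/- For positive integers n and m, the numerical range of J_n ⊗ J_m equals the numerical range of J_ℓ where ℓ = min{n, m}; in particular w(J_n ⊗ J_m) = cos(π/(ℓ+1)) = min{w(J_n), w(J_m)}. -/
open scoped Kronecker InnerProductSpace

/-- The numerical range of a complex matrix: `{⟨Ax, x⟩ : ‖x‖ = 1}`. -/
noncomputable def numRange {n : Type*} [Fintype n] [DecidableEq n] (A : Matrix n n ℂ) : Set ℂ :=
  {z : ℂ | ∃ x : EuclideanSpace ℂ n, ‖x‖ = 1 ∧ z = ⟪x, Matrix.toEuclideanLin A x⟫_ℂ}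

/-! ### Auxiliary material -/

section Aux

/-- successor map on `Fin k` (identity at the top). -/
def nxt {k : ℕ} (i : Fin k) : Fin k := if h : (i:ℕ)+1 < k then ⟨(i:ℕ)+1, h⟩ else i

lemma nxt_val {k : ℕ} (i : Fin k) (h : (i:ℕ)+1 < k) : nxt i = ⟨(i:ℕ)+1, h⟩ := dif_pos h

lemma sin_rec (θ : ℝ) (p : ℕ) (hp : 1 ≤ p) :
    Real.sin ((p+1) * θ) + Real.sin (((p-1 : ℕ) : ℝ) * θ) = 2 * Real.cos θ * Real.sin (p * θ) := by
  have h : ((p - 1 : ℕ) : ℝ) = (p : ℝ) - 1 := by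
    push_cast [Nat.cast_sub hp]; ring
  rw [h]
  have e1 : ((p:ℝ)+1) * θ = p * θ + θ := by ring
  have e2 : ((p:ℝ)-1) * θ = p * θ - θ := by ring
  rw [e1, e2, Real.sin_add, Real.sin_sub]; ring

/-- The key Fejér-type inequality, in abstract "chain" form. -/
lemma chain_bound {ι : Type*} [Fintype ι] [DecidableEq ι] (L : ℕ) (hL : 1 ≤ L)
    (pos : ι → ℕ) (h1 : ∀ i, 1 ≤ pos i) (h2 : ∀ i, pos i ≤ L)
    (E : Finset ι) (σ : ι → ι)
    (hσ : ∀ i ∈ E, pos (σ i) = pos i + 1)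
    (hinj : Set.InjOn σ E)
    (a : ι → ℝ) (ha : ∀ i, 0 ≤ a i) :
    ∑ i ∈ E, a i * a (σ i) ≤ Real.cos (Real.pi / (L + 1)) * ∑ i, a i ^ 2 := by
  set θ := Real.pi / (L + 1) with hθ
  have hθpos : 0 < θ := by positivity
  have htot : ((L:ℝ) + 1) * θ = Real.pi := by
    rw [hθ]; field_simp
  set s : ℕ → ℝ := fun p => Real.sin (p * θ) with hs
  have hs_nonneg : ∀ p : ℕ, p ≤ L + 1 → 0 ≤ s p := by
    intro p hp
    apply Real.sin_nonneg_of_nonneg_of_le_pi (by positivity)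
    rw [← htot]
    have : (p : ℝ) ≤ (L : ℝ) + 1 := by exact_mod_cast hp
    nlinarith
  have hs_pos : ∀ p : ℕ, 1 ≤ p → p ≤ L → 0 < s p := by
    intro p hp1 hpL
    apply Real.sin_pos_of_pos_of_lt_pi
    · have : (1:ℝ) ≤ (p:ℝ) := by exact_mod_cast hp1
      nlinarith
    · rw [← htot]
      have : (p : ℝ) ≤ (L : ℝ) := by exact_mod_cast hpL
      nlinarith
  set f : ι → ℝ := fun i => s (pos i + 1) / (2 * s (pos i)) * a i ^ 2 with hf
  set g : ι → ℝ := fun j => s (pos j - 1) / (2 * s (pos j)) * a j ^ 2 with hg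
  have hf_nonneg : ∀ i, 0 ≤ f i := by
    intro i
    have u1 := hs_nonneg (pos i + 1) (by have := h2 i; omega)
    have u2 := (hs_pos (pos i) (h1 i) (h2 i)).le
    have := ha i
    simp only [hf]
    positivity
  have hg_nonneg : ∀ i, 0 ≤ g i := by
    intro i
    have u1 := hs_nonneg (pos i - 1) (by have := h2 i; omega)
    have u2 := (hs_pos (pos i) (h1 i) (h2 i)).le
    simp only [hg]
    positivity
  have step1 : ∀ i ∈ E, a i * a (σ i) ≤ f i + g (σ i) := by
    intro i hi
    have hp := hσ i hi
    have hpL : pos i + 1 ≤ L := hp ▸ h2 (σ i)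
    have hsp : 0 < s (pos i) := hs_pos _ (h1 i) (by omega)
    have hsp1 : 0 < s (pos i + 1) := hs_pos _ (by omega) hpL
    have hgσ : g (σ i) = s (pos i) / (2 * s (pos i + 1)) * a (σ i) ^ 2 := by
      simp only [hg, hp, Nat.add_sub_cancel]
    rw [hgσ]
    simp only [hf]
    rw [div_mul_eq_mul_div, div_mul_eq_mul_div,
      div_add_div _ _ (ne_of_gt (by linarith)) (ne_of_gt (by linarith)),
      le_div_iff₀ (by nlinarith [mul_pos hsp hsp1])]
    nlinarith [sq_nonneg (s (pos i + 1) * a i - s (pos i) * a (σ i)), mul_pos hsp hsp1,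
      ha i, ha (σ i)]
  calc ∑ i ∈ E, a i * a (σ i) ≤ ∑ i ∈ E, (f i + g (σ i)) := Finset.sum_le_sum step1
    _ = ∑ i ∈ E, f i + ∑ i ∈ E, g (σ i) := Finset.sum_add_distrib
    _ ≤ ∑ i, f i + ∑ j ∈ E.image σ, g j := by
        refine add_le_add ?_ (le_of_eq ?_)
        · exact Finset.sum_le_sum_of_subset_of_nonneg (Finset.subset_univ E)
            (fun i _ _ => hf_nonneg i)
        · exact (Finset.sum_image (fun x hx y hy h => hinj hx hy h)).symm
    _ ≤ ∑ i, f i + ∑ j, g j := by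
        refine add_le_add le_rfl ?_
        exact Finset.sum_le_sum_of_subset_of_nonneg (Finset.subset_univ _)
          (fun i _ _ => hg_nonneg i)
    _ = ∑ i, (f i + g i) := Finset.sum_add_distrib.symm
    _ = ∑ i, Real.cos θ * a i ^ 2 := by
        apply Finset.sum_congr rfl
        intro i _
        have hsp : 0 < s (pos i) := hs_pos _ (h1 i) (h2 i)
        have hrec' : s (pos i + 1) + s (pos i - 1) = 2 * Real.cos θ * s (pos i) := by
          have := sin_rec θ (pos i) (h1 i)
          simp only [hs]
          push_cast
          convert this using 3
        simp only [hf, hg, div_mul_eq_mul_div, ← add_div,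
          div_eq_iff (ne_of_gt (by linarith : (0:ℝ) < 2 * s (pos i)))]
        linear_combination a i ^ 2 * hrec'
    _ = Real.cos θ * ∑ i, a i ^ 2 := by rw [Finset.mul_sum]

/-- Quadratic form of a 0-1 "shift" matrix. -/
lemma quad_single {ι : Type*} [Fintype ι] [DecidableEq ι] (A : Matrix ι ι ℂ)
    (P : ι → Prop) [DecidablePred P] (σ : ι → ι)
    (hA : ∀ i j, A i j = if P i ∧ j = σ i then 1 else 0) (x : EuclideanSpace ℂ ι) :
    ⟪x, Matrix.toEuclideanLin A x⟫_ℂ =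
      ∑ i ∈ Finset.univ.filter (fun i => P i), (starRingEnd ℂ) (x i) * x (σ i) := by
  have expand : ⟪x, Matrix.toEuclideanLin A x⟫_ℂ
      = ∑ i, (starRingEnd ℂ) (x i) * ∑ j, A i j * x j := by
    simp [PiLp.inner_apply, Matrix.toEuclideanLin_apply, Matrix.mulVec, dotProduct,
      mul_comm]
  rw [expand, Finset.sum_filter]
  apply Finset.sum_congr rfl
  intro i _
  have hinner : ∑ j, A i j * x j = if P i then x (σ i) else 0 := by
    by_cases hP : P i
    · rw [if_pos hP]
      rw [Finset.sum_eq_single (σ i)]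
      · rw [hA, if_pos ⟨hP, rfl⟩, one_mul]
      · intro j _ hj
        rw [hA, if_neg (fun h => hj h.2), zero_mul]
      · intro h; exact absurd (Finset.mem_univ _) h
    · rw [if_neg hP]
      apply Finset.sum_eq_zero
      intro j _
      rw [hA, if_neg (fun h => hP h.1), zero_mul]
  rw [hinner]
  by_cases hP : P i
  · rw [if_pos hP, if_pos hP]
  · rw [if_neg hP, if_neg hP, mul_zero]

lemma quad_jordan (k : ℕ) (x : EuclideanSpace ℂ (Fin k)) :
    ⟪x, Matrix.toEuclideanLin (Jordan k) x⟫_ℂ =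
      ∑ i ∈ Finset.univ.filter (fun i : Fin k => (i:ℕ)+1 < k),
        (starRingEnd ℂ) (x i) * x (nxt i) := by
  apply quad_single
  intro i j
  simp only [Jordan]
  by_cases h : (i:ℕ) + 1 < k
  · rw [nxt_val i h]
    by_cases hj : (i:ℕ)+1 = (j:ℕ)
    · rw [if_pos hj, if_pos ⟨h, by ext; exact hj.symm⟩]
    · rw [if_neg hj, if_neg (fun hc => hj (by rw [hc.2]))]
  · have : ¬((i:ℕ)+1 = (j:ℕ)) := fun hc => h (hc ▸ j.isLt)
    rw [if_neg this, if_neg (fun hc => absurd hc.1 h)]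

lemma quad_kron (n m : ℕ) (x : EuclideanSpace ℂ (Fin n × Fin m)) :
    ⟪x, Matrix.toEuclideanLin (Jordan n ⊗ₖ Jordan m) x⟫_ℂ =
      ∑ p ∈ Finset.univ.filter (fun p : Fin n × Fin m => (p.1:ℕ)+1 < n ∧ (p.2:ℕ)+1 < m),
        (starRingEnd ℂ) (x p) * x (nxt p.1, nxt p.2) := by
  apply quad_single (P := fun p : Fin n × Fin m => (p.1:ℕ)+1 < n ∧ (p.2:ℕ)+1 < m)
    (σ := fun p => (nxt p.1, nxt p.2))
  intro p q
  simp only [Matrix.kroneckerMap_apply, Jordan]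
  by_cases h1 : (p.1:ℕ) + 1 < n
  · by_cases h2 : (p.2:ℕ) + 1 < m
    · rw [nxt_val p.1 h1, nxt_val p.2 h2]
      by_cases hq1 : (p.1:ℕ)+1 = (q.1:ℕ)
      · by_cases hq2 : (p.2:ℕ)+1 = (q.2:ℕ)
        · rw [if_pos hq1, if_pos hq2, one_mul,
            if_pos ⟨⟨h1, h2⟩, by ext <;> simp [hq1.symm, hq2.symm]⟩]
        · rw [if_neg hq2, mul_zero, if_neg (fun hc => hq2 (by rw [hc.2]))]
      · rw [if_neg hq1, zero_mul, if_neg (fun hc => hq1 (by rw [hc.2]))]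
    · have : ¬((p.2:ℕ)+1 = (q.2:ℕ)) := fun hc => h2 (hc ▸ q.2.isLt)
      rw [if_neg this, mul_zero, if_neg (fun hc => absurd hc.1.2 h2)]
  · have : ¬((p.1:ℕ)+1 = (q.1:ℕ)) := fun hc => h1 (hc ▸ q.1.isLt)
    rw [if_neg this, zero_mul, if_neg (fun hc => absurd hc.1.1 h1)]

lemma norm_sq_sum {ι : Type*} [Fintype ι] (x : EuclideanSpace ℂ ι) (h : ‖x‖ = 1) :
    ∑ i, ‖x i‖^2 = 1 := by
  have h1 := EuclideanSpace.norm_eq x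
  rw [h] at h1
  nlinarith [Real.sq_sqrt (by positivity : (0:ℝ) ≤ ∑ i, ‖x i‖^2)]

lemma norm_one_of_sum {ι : Type*} [Fintype ι] (x : EuclideanSpace ℂ ι)
    (h : ∑ i, ‖x i‖^2 = 1) : ‖x‖ = 1 := by
  rw [EuclideanSpace.norm_eq, h, Real.sqrt_one]

/-- abstract upper bound on the absolute value of the quadratic form -/
lemma quad_abs_le {ι : Type*} [Fintype ι] [DecidableEq ι] (L : ℕ) (hL : 1 ≤ L)
    (pos : ι → ℕ) (h1 : ∀ i, 1 ≤ pos i) (h2 : ∀ i, pos i ≤ L)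
    (E : Finset ι) (σ : ι → ι)
    (hσ : ∀ i ∈ E, pos (σ i) = pos i + 1)
    (hinj : Set.InjOn σ E)
    (x : EuclideanSpace ℂ ι) (hx : ‖x‖ = 1) :
    ‖∑ i ∈ E, (starRingEnd ℂ) (x i) * x (σ i)‖ ≤ Real.cos (Real.pi / (L + 1)) := by
  calc ‖∑ i ∈ E, (starRingEnd ℂ) (x i) * x (σ i)‖
      ≤ ∑ i ∈ E, ‖(starRingEnd ℂ) (x i) * x (σ i)‖ := norm_sum_le E _
    _ = ∑ i ∈ E, ‖x i‖ * ‖x (σ i)‖ := by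
        apply Finset.sum_congr rfl
        intro i _
        rw [norm_mul, Complex.norm_conj]
    _ ≤ Real.cos (Real.pi / (L + 1)) * ∑ i, ‖x i‖ ^ 2 :=
        chain_bound L hL pos h1 h2 E σ hσ hinj (fun i => ‖x i‖) (fun i => norm_nonneg _)
    _ = Real.cos (Real.pi / (L + 1)) := by rw [norm_sq_sum x hx, mul_one]

lemma jordan_abs_le (k : ℕ) (hk : 1 ≤ k) (x : EuclideanSpace ℂ (Fin k)) (hx : ‖x‖ = 1) :
    ‖∑ i ∈ Finset.univ.filter (fun i : Fin k => (i:ℕ)+1 < k),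
      (starRingEnd ℂ) (x i) * x (nxt i)‖ ≤ Real.cos (Real.pi / (k + 1)) := by
  refine quad_abs_le (ι := Fin k) k hk (fun i => (i:ℕ)+1) (fun i => Nat.le_add_left 1 _)
    (fun i => i.isLt) _ _ ?_ ?_ x hx
  · intro i hi
    rw [Finset.mem_filter] at hi
    rw [nxt_val i hi.2]
  · intro i hi j hj hij
    simp only [Finset.coe_filter, Finset.mem_univ, true_and, Set.mem_setOf_eq] at hi hj
    rw [nxt_val i hi, nxt_val j hj] at hij
    have := congrArg Fin.val hij
    simp only at this
    exact Fin.ext (by omega)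

lemma kron_abs_le (n m : ℕ) (hn : 1 ≤ n) (hm : 1 ≤ m)
    (x : EuclideanSpace ℂ (Fin n × Fin m)) (hx : ‖x‖ = 1) :
    ‖∑ p ∈ Finset.univ.filter
        (fun p : Fin n × Fin m => (p.1:ℕ)+1 < n ∧ (p.2:ℕ)+1 < m),
      (starRingEnd ℂ) (x p) * x (nxt p.1, nxt p.2)‖ ≤
      Real.cos (Real.pi / (min n m + 1)) := by
  refine quad_abs_le (ι := Fin n × Fin m) (min n m) (le_min hn hm)
    (fun p => min (p.1:ℕ) (p.2:ℕ) + 1) (fun p => Nat.le_add_left 1 _)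
    (fun p => Nat.succ_le_of_lt (lt_min_iff.mpr
      ⟨lt_of_le_of_lt (min_le_left _ _) p.1.isLt, lt_of_le_of_lt (min_le_right _ _) p.2.isLt⟩))
    _ _ ?_ ?_ x hx
  · intro p hp
    rw [Finset.mem_filter] at hp
    obtain ⟨-, hp1, hp2⟩ := hp
    show min ((nxt p.1 : Fin n) : ℕ) ((nxt p.2 : Fin m) : ℕ) + 1 = _
    rw [nxt_val p.1 hp1, nxt_val p.2 hp2]
    show min ((p.1:ℕ)+1) ((p.2:ℕ)+1) + 1 = _
    rw [Nat.succ_min_succ]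
  · intro p hp q hq hpq
    simp only [Finset.coe_filter, Finset.mem_univ, true_and, Set.mem_setOf_eq] at hp hq
    have e1 : nxt p.1 = nxt q.1 := congrArg Prod.fst hpq
    have e2 : nxt p.2 = nxt q.2 := congrArg Prod.snd hpq
    rw [nxt_val p.1 hp.1, nxt_val q.1 hq.1] at e1
    rw [nxt_val p.2 hp.2, nxt_val q.2 hq.2] at e2
    have v1 := congrArg Fin.val e1
    have v2 := congrArg Fin.val e2
    simp only at v1 v2
    exact Prod.ext (Fin.ext (by omega)) (Fin.ext (by omega))

/-- the sine eigenvector -/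
noncomputable def sv (k : ℕ) (p : Fin k) : ℝ := Real.sin (((p:ℕ)+1) * (Real.pi/(k+1)))

lemma sine_identity (k : ℕ) (hk : 1 ≤ k) :
    ∑ p ∈ Finset.univ.filter (fun p : Fin k => (p:ℕ)+1 < k), sv k p * sv k (nxt p)
      = Real.cos (Real.pi/(k+1)) * ∑ p : Fin k, sv k p ^ 2 := by
  set θ := Real.pi / (k + 1) with hθ
  set s : ℕ → ℝ := fun q => Real.sin (q * θ) with hs
  have htot : ((k:ℝ) + 1) * θ = Real.pi := by rw [hθ]; field_simp
  have hs0 : s 0 = 0 := by simp [hs]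
  have hsk1 : s (k+1) = 0 := by
    simp only [hs]; push_cast; rw [htot, Real.sin_pi]
  have hrec : ∀ i : ℕ, s (i+2) = 2 * Real.cos θ * s (i+1) - s i := by
    intro i
    simp only [hs]
    push_cast
    have e1 : ((i:ℝ)+2)*θ = ((i:ℝ)+1)*θ + θ := by ring
    have e2 : ((i:ℝ))*θ = ((i:ℝ)+1)*θ - θ := by ring
    rw [e1, e2, Real.sin_add, Real.sin_sub]; ring
  have hsv : ∀ p : Fin k, sv k p = s ((p:ℕ)+1) := by
    intro p; simp only [sv, hs, hθ]; push_cast; ring_nf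
  have lhs_eq : ∑ p ∈ Finset.univ.filter (fun p : Fin k => (p:ℕ)+1 < k), sv k p * sv k (nxt p)
      = ∑ i ∈ Finset.range k, s (i+1) * s (i+2) := by
    rw [Finset.sum_filter]
    have step : ∀ p : Fin k, (if (p:ℕ)+1 < k then sv k p * sv k (nxt p) else 0)
        = (fun i : ℕ => if i+1 < k then s (i+1) * s (i+2) else 0) ((p:ℕ)) := by
      intro p
      show _ = if (p:ℕ)+1 < k then s ((p:ℕ)+1) * s ((p:ℕ)+2) else 0
      by_cases h : (p:ℕ)+1 < k
      · rw [if_pos h, if_pos h, nxt_val p h, hsv, hsv]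
      · rw [if_neg h, if_neg h]
    rw [Finset.sum_congr rfl (fun p _ => step p),
      Fin.sum_univ_eq_sum_range (fun i => if i+1 < k then s (i+1) * s (i+2) else 0) k]
    apply Finset.sum_congr rfl
    intro i hi
    rw [Finset.mem_range] at hi
    by_cases h : i+1 < k
    · rw [if_pos h]
    · have hik : i + 1 = k := by omega
      rw [if_neg h, hik, show i + 2 = k + 1 by omega, hsk1, mul_zero]
  have rhs_eq : ∑ p : Fin k, sv k p ^ 2 = ∑ i ∈ Finset.range k, s (i+1) ^ 2 := by
    rw [← Fin.sum_univ_eq_sum_range (fun i => s (i+1) ^ 2) k]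
    exact Finset.sum_congr rfl (fun p _ => by rw [hsv])
  rw [lhs_eq, rhs_eq]
  obtain ⟨j, rfl⟩ : ∃ j, k = j + 1 := ⟨k - 1, by omega⟩
  have hshift : ∑ i ∈ Finset.range (j+1), s i * s (i+1)
      = ∑ i ∈ Finset.range (j+1), s (i+1) * s (i+2) := by
    rw [Finset.sum_range_succ' (fun i => s i * s (i+1)) j,
      Finset.sum_range_succ (fun i => s (i+1) * s (i+2)) j, hs0, hsk1]
    simp
  have expand : ∑ i ∈ Finset.range (j+1), s (i+1) * s (i+2)
      = 2 * Real.cos θ * ∑ i ∈ Finset.range (j+1), s (i+1)^2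
        - ∑ i ∈ Finset.range (j+1), s i * s (i+1) := by
    rw [Finset.mul_sum, ← Finset.sum_sub_distrib]
    apply Finset.sum_congr rfl
    intro i _
    rw [hrec i]
    ring
  linarith [expand, hshift]

lemma sv_nonneg (k : ℕ) (p : Fin k) : 0 ≤ sv k p := by
  have hπ := Real.pi_pos
  apply Real.sin_nonneg_of_nonneg_of_le_pi
  · positivity
  · have h : ((p:ℕ):ℝ) + 1 ≤ (k:ℝ) + 1 := by
      have := p.isLt
      have : ((p:ℕ):ℝ) + 1 ≤ (k:ℝ) := by exact_mod_cast this
      linarith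
    calc (((p:ℕ):ℝ)+1) * (Real.pi/((k:ℝ)+1)) ≤ ((k:ℝ)+1) * (Real.pi/((k:ℝ)+1)) :=
          mul_le_mul_of_nonneg_right h (by positivity)
      _ = Real.pi := by field_simp

lemma sv_zero_pos (k : ℕ) (hk : 0 < k) : 0 < sv k ⟨0, hk⟩ := by
  have hπ := Real.pi_pos
  apply Real.sin_pos_of_pos_of_lt_pi
  · simp only [sv]
    positivity
  · simp only [sv]
    norm_num
    rw [div_lt_iff₀ (by positivity : (0:ℝ) < (k:ℝ)+1)]
    have : (1:ℝ) ≤ (k:ℝ) := by exact_mod_cast hk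
    nlinarith

lemma N_pos (k : ℕ) (hk : 1 ≤ k) : 0 < ∑ p : Fin k, sv k p ^ 2 := by
  apply Finset.sum_pos' (fun p _ => sq_nonneg _)
  exact ⟨⟨0, hk⟩, Finset.mem_univ _, by have := sv_zero_pos k hk; positivity⟩

lemma real_attain (k : ℕ) (hk : 1 ≤ k) (t : ℝ) (ht0 : 0 ≤ t)
    (htr : t ≤ Real.cos (Real.pi/(k+1))) :
    ∃ y : Fin k → ℝ, (∑ i, y i ^ 2) = 1 ∧
      (∑ i ∈ Finset.univ.filter (fun i : Fin k => (i:ℕ)+1 < k), y i * y (nxt i)) = t := by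
  have hπ := Real.pi_pos
  set E := Finset.univ.filter (fun i : Fin k => (i:ℕ)+1 < k) with hE
  set N := ∑ p : Fin k, sv k p ^ 2 with hN
  have hNpos : 0 < N := N_pos k hk
  set u : Fin k → ℝ := fun p => sv k p / Real.sqrt N with hu
  have hu0 : ∀ p, 0 ≤ u p := fun p => div_nonneg (sv_nonneg k p) (Real.sqrt_nonneg _)
  have husq : ∑ p, u p ^ 2 = 1 := by
    have : ∀ p : Fin k, u p ^ 2 = sv k p ^ 2 / N := by
      intro p
      simp only [hu]
      rw [div_pow, Real.sq_sqrt hNpos.le]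
    rw [Finset.sum_congr rfl (fun p _ => this p), ← Finset.sum_div, ← hN, div_self hNpos.ne']
  have huq : ∑ p ∈ E, u p * u (nxt p) = Real.cos (Real.pi/(k+1)) := by
    have : ∀ p : Fin k, u p * u (nxt p) = sv k p * sv k (nxt p) / N := by
      intro p
      simp only [hu]
      rw [div_mul_div_comm, Real.mul_self_sqrt hNpos.le]
    rw [Finset.sum_congr rfl (fun p _ => this p), ← Finset.sum_div, sine_identity k hk,
      ← hN, mul_div_assoc, div_self hNpos.ne', mul_one]
  set z : Fin k := ⟨0, hk⟩ with hz
  set e0 : Fin k → ℝ := fun p => if p = z then 1 else 0 with he0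
  have he0sq : ∑ p, e0 p ^ 2 = 1 := by
    rw [Finset.sum_eq_single z]
    · simp [he0]
    · intro p _ hp; simp [he0, hp]
    · intro h; exact absurd (Finset.mem_univ _) h
  have he0u : ∑ p, e0 p * u p = u z := by
    rw [Finset.sum_eq_single z]
    · simp [he0]
    · intro p _ hp; simp [he0, hp]
    · intro h; exact absurd (Finset.mem_univ _) h
  have he0nxt : ∀ p ∈ E, e0 (nxt p) = 0 := by
    intro p hp
    rw [hE, Finset.mem_filter] at hp
    rw [nxt_val p hp.2, he0]
    simp only [if_neg]
    rw [if_neg]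
    intro hc
    rw [hz] at hc
    have : (p:ℕ) + 1 = 0 := congrArg Fin.val hc
    omega
  set y : ℝ → Fin k → ℝ := fun α p => Real.cos α * e0 p + Real.sin α * u p with hy
  set n2 : ℝ → ℝ := fun α => ∑ p, y α p ^ 2 with hn2def
  set qf : ℝ → ℝ := fun α => ∑ p ∈ E, y α p * y α (nxt p) with hqfdef
  have hn2 : ∀ α, n2 α = 1 + 2 * Real.cos α * Real.sin α * u z := by
    intro α
    simp only [hn2def, hy]
    have expand : ∀ p : Fin k, (Real.cos α * e0 p + Real.sin α * u p) ^ 2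
        = Real.cos α ^ 2 * e0 p ^ 2 + (2 * Real.cos α * Real.sin α) * (e0 p * u p)
          + Real.sin α ^ 2 * u p ^ 2 := fun p => by ring
    rw [Finset.sum_congr rfl (fun p _ => expand p), Finset.sum_add_distrib,
      Finset.sum_add_distrib, ← Finset.mul_sum, ← Finset.mul_sum, ← Finset.mul_sum,
      he0sq, he0u, husq]
    linear_combination Real.sin_sq_add_cos_sq α
  have hn2pos : ∀ α ∈ Set.Icc (0:ℝ) (Real.pi/2), (0:ℝ) < n2 α := by
    intro α hα
    rw [hn2]
    have hc : 0 ≤ Real.cos α := Real.cos_nonneg_of_mem_Icc ⟨by linarith [hα.1], hα.2⟩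
    have hsn : 0 ≤ Real.sin α := Real.sin_nonneg_of_nonneg_of_le_pi hα.1 (by linarith [hα.2])
    have h3 : 0 ≤ 2 * Real.cos α * Real.sin α * u z :=
      mul_nonneg (mul_nonneg (by linarith) hsn) (hu0 z)
    linarith
  have hn2_0 : n2 0 = 1 := by rw [hn2]; simp
  have hn2_h : n2 (Real.pi/2) = 1 := by rw [hn2]; simp
  have hq0 : qf 0 = 0 := by
    simp only [hqfdef]
    apply Finset.sum_eq_zero
    intro p hp
    simp only [hy, Real.cos_zero, Real.sin_zero, zero_mul, add_zero, one_mul]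
    rw [he0nxt p hp, mul_zero]
  have hqh : qf (Real.pi/2) = Real.cos (Real.pi/(k+1)) := by
    simp only [hqfdef, hy, Real.cos_pi_div_two, Real.sin_pi_div_two, zero_mul, one_mul, zero_add]
    exact huq
  have hcy : ∀ p : Fin k, Continuous (fun α => y α p) := by
    intro p
    simp only [hy]
    fun_prop
  have hcq : Continuous qf := by
    simp only [hqfdef]
    apply continuous_finset_sum
    intro p _
    exact (hcy p).mul (hcy (nxt p))
  have hcn : Continuous n2 := by
    simp only [hn2def]
    apply continuous_finset_sum
    intro p _
    exact (hcy p).pow 2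
  set F : ℝ → ℝ := fun α => qf α / n2 α with hF
  have hcontF : ContinuousOn F (Set.Icc 0 (Real.pi/2)) :=
    (hcq.continuousOn.div hcn.continuousOn (fun α hα => (hn2pos α hα).ne'))
  have hF0 : F 0 = 0 := by rw [hF]; simp only [hq0, hn2_0]; norm_num
  have hFh : F (Real.pi/2) = Real.cos (Real.pi/(k+1)) := by
    rw [hF]; simp only [hqh, hn2_h]; norm_num
  have hIVT := intermediate_value_Icc (by positivity : (0:ℝ) ≤ Real.pi/2) hcontF
  have htmem : t ∈ Set.Icc (F 0) (F (Real.pi/2)) := by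
    rw [hF0, hFh]; exact ⟨ht0, htr⟩
  obtain ⟨α, hα, hFα⟩ := hIVT htmem
  have hn2α := hn2pos α hα
  refine ⟨fun p => y α p / Real.sqrt (n2 α), ?_, ?_⟩
  · have : ∀ p : Fin k, (y α p / Real.sqrt (n2 α)) ^ 2 = y α p ^ 2 / n2 α := by
      intro p
      rw [div_pow, Real.sq_sqrt hn2α.le]
    rw [Finset.sum_congr rfl (fun p _ => this p), ← Finset.sum_div]
    show n2 α / n2 α = 1
    exact div_self hn2α.ne'
  · have : ∀ p : Fin k, (y α p / Real.sqrt (n2 α)) * (y α (nxt p) / Real.sqrt (n2 α))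
        = y α p * y α (nxt p) / n2 α := by
      intro p
      rw [div_mul_div_comm, Real.mul_self_sqrt hn2α.le]
    rw [Finset.sum_congr rfl (fun p _ => this p), ← Finset.sum_div]
    exact hFα

end Aux

/-- Attainment of arbitrary complex values in the disc, via phase rotation. -/
lemma complex_attain (k : ℕ) (hk : 1 ≤ k) (z : ℂ)
    (hz : ‖z‖ ≤ Real.cos (Real.pi/(k+1))) :
    ∃ x : EuclideanSpace ℂ (Fin k), ‖x‖ = 1 ∧
      ∑ i ∈ Finset.univ.filter (fun i : Fin k => (i:ℕ)+1 < k),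
        (starRingEnd ℂ) (x i) * x (nxt i) = z := by
  obtain ⟨y, hy1, hy2⟩ := real_attain k hk ‖z‖ (norm_nonneg z) hz
  set φ := Complex.arg z with hφ
  refine ⟨WithLp.toLp 2 (fun i => (y i : ℂ) * Complex.exp ((((i:ℕ) * φ : ℝ) : ℂ) * Complex.I)), ?_, ?_⟩
  · apply norm_one_of_sum
    simp only [PiLp.toLp_apply]
    have hpt : ∀ i : Fin k,
        ‖(y i : ℂ) * Complex.exp ((((i:ℕ) * φ : ℝ) : ℂ) * Complex.I)‖^2 = y i ^ 2 := by
      intro i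
      rw [norm_mul, Complex.norm_exp_ofReal_mul_I,
        mul_one, Complex.norm_real, Real.norm_eq_abs, sq_abs]
    rw [Finset.sum_congr rfl (fun i _ => hpt i), hy1]
  · simp only [PiLp.toLp_apply]
    have hterm : ∀ i ∈ Finset.univ.filter (fun i : Fin k => (i:ℕ)+1 < k),
        (starRingEnd ℂ) ((y i : ℂ) * Complex.exp ((((i:ℕ) * φ : ℝ) : ℂ) * Complex.I)) *
          ((y (nxt i) : ℂ) * Complex.exp ((((((nxt i : Fin k)):ℕ) * φ : ℝ) : ℂ) * Complex.I))
        = ((y i * y (nxt i) : ℝ) : ℂ) * Complex.exp ((φ:ℂ) * Complex.I) := by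
      intro i hi
      rw [Finset.mem_filter] at hi
      have hnv : ((nxt i : Fin k) : ℕ) = (i:ℕ)+1 := by rw [nxt_val i hi.2]
      rw [hnv]
      have c1 : (starRingEnd ℂ) (Complex.exp ((((i:ℕ) * φ : ℝ) : ℂ) * Complex.I))
          = Complex.exp (-((((i:ℕ) * φ : ℝ) : ℂ) * Complex.I)) := by
        rw [← Complex.exp_conj, map_mul, Complex.conj_ofReal, Complex.conj_I]
        ring_nf
      rw [map_mul, Complex.conj_ofReal, c1, mul_mul_mul_comm, ← Complex.exp_add,
        Complex.ofReal_mul]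
      congr 1
      · push_cast
        ring
      · exact congrArg Complex.exp (by push_cast; ring)
    rw [Finset.sum_congr rfl hterm, ← Finset.sum_mul]
    have : (∑ i ∈ Finset.univ.filter (fun i : Fin k => (i:ℕ)+1 < k),
        ((y i * y (nxt i) : ℝ) : ℂ)) = ((‖z‖ : ℝ) : ℂ) := by
      rw [← Complex.ofReal_sum]
      exact_mod_cast congrArg (Complex.ofReal) hy2
    rw [this, hφ, Complex.norm_mul_exp_arg_mul_I]

lemma numRange_jordan (k : ℕ) (hk : 1 ≤ k) :
    numRange (Jordan k) = Metric.closedBall 0 (Real.cos (Real.pi/(k+1))) := by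
  ext w
  constructor
  · rintro ⟨x, hx, rfl⟩
    rw [Metric.mem_closedBall, dist_zero_right, quad_jordan]
    exact jordan_abs_le k hk x hx
  · intro hw
    rw [Metric.mem_closedBall, dist_zero_right] at hw
    obtain ⟨x, hx, hq⟩ := complex_attain k hk w hw
    exact ⟨x, hx, by rw [quad_jordan, hq]⟩

lemma numRadius_of_ball {k : Type*} [Fintype k] [DecidableEq k] (A : Matrix k k ℂ) (c : ℝ)
    (hc : 0 ≤ c) (h : numRange A = Metric.closedBall 0 c) : numRadius A = c := by
  have hset : {r : ℝ | ∃ x : EuclideanSpace ℂ k, ‖x‖ = 1 ∧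
      r = ‖⟪x, Matrix.toEuclideanLin A x⟫_ℂ‖} = Set.Icc 0 c := by
    ext r
    constructor
    · rintro ⟨x, hx, rfl⟩
      have hz : ⟪x, Matrix.toEuclideanLin A x⟫_ℂ ∈ numRange A := ⟨x, hx, rfl⟩
      rw [h, Metric.mem_closedBall, dist_zero_right] at hz
      exact ⟨norm_nonneg _, hz⟩
    · rintro ⟨h0, h1⟩
      have hmem : (r:ℂ) ∈ numRange A := by
        rw [h, Metric.mem_closedBall, dist_zero_right, Complex.norm_real, Real.norm_eq_abs,
          abs_of_nonneg h0]
        exact h1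
      obtain ⟨x, hx, hxr⟩ := hmem
      exact ⟨x, hx, by rw [← hxr, Complex.norm_real, Real.norm_eq_abs, abs_of_nonneg h0]⟩
  rw [numRadius, hset, csSup_Icc hc]

lemma rj_nonneg (k : ℕ) (hk : 1 ≤ k) : 0 ≤ Real.cos (Real.pi/(k+1)) := by
  have hπ := Real.pi_pos
  apply Real.cos_nonneg_of_mem_Icc
  constructor
  · have : (0:ℝ) ≤ Real.pi/((k:ℝ)+1) := by positivity
    linarith
  · have h2 : (2:ℝ) ≤ (k:ℝ)+1 := by
      have : (1:ℝ) ≤ (k:ℝ) := by exact_mod_cast hk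
      linarith
    calc Real.pi/((k:ℝ)+1) ≤ Real.pi/2 := by
          apply div_le_div_of_nonneg_left hπ.le (by norm_num) h2
      _ = Real.pi/2 := rfl

lemma rj_mono {a b : ℕ} (ha : 1 ≤ a) (hab : a ≤ b) :
    Real.cos (Real.pi/(a+1)) ≤ Real.cos (Real.pi/(b+1)) := by
  have hπ := Real.pi_pos
  have hcast : (a:ℝ) ≤ (b:ℝ) := by exact_mod_cast hab
  apply Real.cos_le_cos_of_nonneg_of_le_pi
  · positivity
  · calc Real.pi/((a:ℝ)+1) ≤ Real.pi/1 := by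
          apply div_le_div_of_nonneg_left hπ.le (by norm_num) (by
            have : (1:ℝ) ≤ (a:ℝ) := by exact_mod_cast ha
            linarith)
      _ = Real.pi := by norm_num
  · apply div_le_div_of_nonneg_left hπ.le (by positivity) (by linarith)

lemma range_jordan_subset_kron (n m : ℕ) (hn : 1 ≤ n) (hm : 1 ≤ m) :
    numRange (Jordan (min n m)) ⊆ numRange (Jordan n ⊗ₖ Jordan m) := by
  rintro w ⟨x, hx, rfl⟩
  have hLn : min n m ≤ n := min_le_left n m
  have hLm : min n m ≤ m := min_le_right n m
  have h0L : 0 < min n m := lt_min hn hm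
  set ι : Fin (min n m) → Fin n × Fin m := fun p =>
    (⟨(p:ℕ), lt_of_lt_of_le p.isLt hLn⟩, ⟨(p:ℕ), lt_of_lt_of_le p.isLt hLm⟩) with hι
  have hιinj : ∀ p ∈ (Finset.univ : Finset (Fin (min n m))), ∀ q ∈ Finset.univ,
      ι p = ι q → p = q := by
    intro p _ q _ h
    have := congrArg (fun w : Fin n × Fin m => (w.1 : ℕ)) h
    simp only [hι] at this
    exact Fin.ext this
  set y : EuclideanSpace ℂ (Fin n × Fin m) := WithLp.toLp 2 (fun q =>
    if (q.1:ℕ) = (q.2:ℕ) then x ⟨(q.1:ℕ) % (min n m), Nat.mod_lt _ h0L⟩ else 0) with hy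
  have hyval : ∀ q : Fin n × Fin m, y q =
      if (q.1:ℕ) = (q.2:ℕ) then x ⟨(q.1:ℕ) % (min n m), Nat.mod_lt _ h0L⟩ else 0 :=
    fun q => rfl
  have hyι : ∀ p : Fin (min n m), y (ι p) = x p := by
    intro p
    rw [hyval, if_pos rfl]
    apply congrArg x.ofLp
    apply Fin.ext
    exact Nat.mod_eq_of_lt p.isLt
  have hy0 : ∀ q : Fin n × Fin m, q ∉ Finset.univ.image ι → y q = 0 := by
    intro q hq
    rw [hyval, if_neg]
    intro hc
    apply hq
    rw [Finset.mem_image]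
    have hq1 : (q.1:ℕ) < min n m := lt_min q.1.isLt (hc ▸ q.2.isLt)
    exact ⟨⟨(q.1:ℕ), hq1⟩, Finset.mem_univ _, by
      simp only [hι]
      exact Prod.ext (Fin.ext rfl) (Fin.ext hc)⟩
  refine ⟨y, ?_, ?_⟩
  · apply norm_one_of_sum
    rw [← Finset.sum_subset (Finset.subset_univ (Finset.univ.image ι))
        (fun q _ hq => by rw [hy0 q hq]; simp)]
    rw [Finset.sum_image hιinj]
    calc ∑ p, ‖y (ι p)‖^2 = ∑ p, ‖x p‖^2 :=
          Finset.sum_congr rfl fun p _ => by rw [hyι]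
      _ = 1 := norm_sq_sum x hx
  · rw [quad_kron, quad_jordan]
    rw [Finset.sum_filter, Finset.sum_filter]
    rw [← Finset.sum_subset (Finset.subset_univ (Finset.univ.image ι))
        (fun q _ hq => by rw [hy0 q hq]; simp)]
    rw [Finset.sum_image hιinj]
    apply Finset.sum_congr rfl
    intro p _
    by_cases h : (p:ℕ)+1 < min n m
    · have h1 : ((ι p).1 : ℕ)+1 < n := by simp only [hι]; omega
      have h2 : ((ι p).2 : ℕ)+1 < m := by simp only [hι]; omega
      rw [if_pos h, if_pos ⟨h1, h2⟩]
      congr 1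
      · rw [hyι]
      · rw [nxt_val (ι p).1 h1, nxt_val (ι p).2 h2, nxt_val p h]
        have hcond : (((⟨((ι p).1:ℕ)+1, h1⟩ : Fin n)):ℕ) = (((⟨((ι p).2:ℕ)+1, h2⟩ : Fin m)):ℕ) :=
          rfl
        rw [hyval, if_pos hcond]
        apply congrArg x.ofLp
        apply Fin.ext
        exact (Nat.mod_eq_of_lt h).symm
    · have hne : ¬(((ι p).1 : ℕ)+1 < n ∧ ((ι p).2 : ℕ)+1 < m) := by
        simp only [hι]
        omega
      rw [if_neg h, if_neg hne]

theorem stmt9 (n m : ℕ) (hn : 1 ≤ n) (hm : 1 ≤ m) :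
    numRange (Jordan n ⊗ₖ Jordan m) = numRange (Jordan (min n m)) ∧
      numRadius (Jordan n ⊗ₖ Jordan m) = Real.cos (Real.pi / (min n m + 1)) ∧
      numRadius (Jordan n ⊗ₖ Jordan m) = min (numRadius (Jordan n)) (numRadius (Jordan m)) := by
  have hL : 1 ≤ min n m := le_min hn hm
  have hball := numRange_jordan (min n m) hL
  have hsub : numRange (Jordan n ⊗ₖ Jordan m) ⊆
      Metric.closedBall 0 (Real.cos (Real.pi/(min n m+1))) := by
    rintro w ⟨x, hx, rfl⟩
    rw [Metric.mem_closedBall, dist_zero_right, quad_kron]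
    exact kron_abs_le n m hn hm x hx
  have hmain : numRange (Jordan n ⊗ₖ Jordan m)
      = Metric.closedBall 0 (Real.cos (Real.pi/(min n m+1))) := by
    apply Set.Subset.antisymm hsub
    rw [← hball]
    exact range_jordan_subset_kron n m hn hm
  have h1 : numRange (Jordan n ⊗ₖ Jordan m) = numRange (Jordan (min n m)) := by
    rw [hmain, hball]
  have hrad : numRadius (Jordan n ⊗ₖ Jordan m) = Real.cos (Real.pi/(min n m+1)) :=
    numRadius_of_ball _ _ (rj_nonneg (min n m) hL) hmain
  refine ⟨h1, hrad, ?_⟩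
  have hn' : numRadius (Jordan n) = Real.cos (Real.pi/(n+1)) :=
    numRadius_of_ball _ _ (rj_nonneg n hn) (numRange_jordan n hn)
  have hm' : numRadius (Jordan m) = Real.cos (Real.pi/(m+1)) :=
    numRadius_of_ball _ _ (rj_nonneg m hm) (numRange_jordan m hm)
  rw [hrad, hn', hm']
  rcases le_total n m with h | h
  · rw [min_eq_left h, min_eq_left (rj_mono hn h)]
  · rw [min_eq_right h, min_eq_right (rj_mono hm h)]
end

section
/- If A is an n-by-n complex matrix with ‖A‖ = ‖A^k‖ = 1 for some k ≥ 1, then w(A) ≥ cos(π/(k+2)). -/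
open scoped Kronecker InnerProductSpace

open ContinuousLinearMap in
lemma aux_isometric {E : Type*} [NormedAddCommGroup E] [InnerProductSpace ℂ E] [CompleteSpace E]
    (T : E →L[ℂ] E) (hT : ‖T‖ ≤ 1) (u : E) (hu : ‖T u‖ = ‖u‖) (v : E) :
    ⟪T u, T v⟫_ℂ = ⟪u, v⟫_ℂ := by
  have hfix : ContinuousLinearMap.adjoint T (T u) = u := by
    set w := ContinuousLinearMap.adjoint T (T u) with hw
    have hwn : ‖w‖ ≤ ‖u‖ := by
      calc ‖w‖ ≤ ‖ContinuousLinearMap.adjoint T‖ * ‖T u‖ := le_opNorm _ _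
        _ = ‖T‖ * ‖T u‖ := by rw [LinearIsometryEquiv.norm_map]
        _ ≤ 1 * ‖u‖ := mul_le_mul hT (hu.le) (norm_nonneg _) zero_le_one
        _ = ‖u‖ := one_mul _
    have hre : RCLike.re ⟪w, u⟫_ℂ = ‖u‖ ^ 2 := by
      rw [hw, adjoint_inner_left, ← hu]
      exact inner_self_eq_norm_sq (𝕜 := ℂ) (T u)
    have hsq : ‖w - u‖ ^ 2 ≤ 0 := by
      rw [norm_sub_sq (𝕜 := ℂ) w u, hre]
      nlinarith [norm_nonneg w, norm_nonneg u]
    have h0 : ‖w - u‖ = 0 := by nlinarith [norm_nonneg (w - u)]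
    exact sub_eq_zero.mp (norm_eq_zero.mp h0)
  calc ⟪T u, T v⟫_ℂ = ⟪ContinuousLinearMap.adjoint T (T u), v⟫_ℂ :=
        (adjoint_inner_left _ _ _).symm
    _ = ⟪u, v⟫_ℂ := by rw [hfix]

lemma aux_attain {E : Type*} [NormedAddCommGroup E] [NormedSpace ℂ E]
    [FiniteDimensional ℂ E] [Nontrivial E] (T : E →L[ℂ] E) :
    ∃ x : E, ‖x‖ = 1 ∧ ‖T x‖ = ‖T‖ := by
  have hsph : IsCompact (Metric.sphere (0:E) 1) := isCompact_sphere _ _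
  have hne : (Metric.sphere (0:E) 1).Nonempty := NormedSpace.sphere_nonempty.mpr zero_le_one
  obtain ⟨x, hx, hmax⟩ := hsph.exists_isMaxOn hne
    ((continuous_norm.comp T.continuous).continuousOn)
  have hx1 : ‖x‖ = 1 := mem_sphere_zero_iff_norm.mp hx
  refine ⟨x, hx1, le_antisymm (by simpa [hx1] using T.le_opNorm x) ?_⟩
  refine T.opNorm_le_bound (norm_nonneg _) fun y => ?_
  rcases eq_or_ne y 0 with rfl | hy
  · simp
  · have hyn : ‖y‖ ≠ 0 := norm_ne_zero_iff.mpr hy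
    have hmem : (‖y‖⁻¹ • y) ∈ Metric.sphere (0:E) 1 := by
      simp [mem_sphere_zero_iff_norm, norm_smul, abs_of_nonneg (inv_nonneg.mpr (norm_nonneg y)),
        inv_mul_cancel₀ hyn]
    have hle := hmax hmem
    simp only [Function.comp_apply, Set.mem_setOf_eq] at hle
    have hTsmul : T (‖y‖⁻¹ • y) = ‖y‖⁻¹ • T y := T.map_smul_of_tower _ _
    rw [hTsmul, norm_smul, norm_inv, norm_norm] at hle
    have h : ‖y‖⁻¹ * ‖T y‖ ≤ ‖T x‖ := hle
    calc ‖T y‖ = ‖y‖ * (‖y‖⁻¹ * ‖T y‖) := by field_simp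
      _ ≤ ‖y‖ * ‖T x‖ := mul_le_mul_of_nonneg_left h (norm_nonneg y)
      _ = ‖T x‖ * ‖y‖ := mul_comm _ _

lemma aux_root_sum {N : ℕ} (hN : 0 < N) (ζ : ℂ) (hζ : IsPrimitiveRoot ζ N) (i j : ℕ)
    (hi : i < N) (hj : j < N) :
    ∑ l ∈ Finset.range N, (starRingEnd ℂ) (ζ ^ (l*i)) * ζ ^ (l*j)
      = if i = j then (N:ℂ) else 0 := by
  have habs : (starRingEnd ℂ) ζ * ζ = 1 := by
    have h1 : ‖ζ‖ = 1 := hζ.norm'_eq_one hN.ne'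
    rw [mul_comm, Complex.mul_conj, Complex.normSq_eq_norm_sq, h1]
    norm_num
  have hterm : ∀ l, (starRingEnd ℂ) (ζ ^ (l*i)) * ζ ^ (l*j)
      = (((starRingEnd ℂ) ζ) ^ i * ζ ^ j) ^ l := by
    intro l
    rw [map_pow, mul_pow, ← pow_mul, ← pow_mul, mul_comm i l, mul_comm j l]
  simp only [hterm]
  set z := ((starRingEnd ℂ) ζ) ^ i * ζ ^ j with hz
  by_cases hij : i = j
  · subst hij
    have : z = 1 := by rw [hz, ← mul_pow, habs, one_pow]
    simp [this]
  · have hzN : z ^ N = 1 := by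
      rw [hz, mul_pow, ← pow_mul, ← pow_mul, mul_comm i N, mul_comm j N, pow_mul, pow_mul,
        ← map_pow, hζ.pow_eq_one, map_one, one_pow, one_pow, one_mul]
    have hz1 : z ≠ 1 := by
      intro h
      apply hij
      have h2 : ζ ^ i * z = ζ ^ i := by rw [h, mul_one]
      rw [hz, ← mul_assoc, ← mul_pow, mul_comm ζ ((starRingEnd ℂ) ζ), habs, one_pow, one_mul] at h2
      exact (hζ.pow_inj hj hi h2).symm
    rw [if_neg hij, geom_sum_eq hz1, hzN, sub_self, zero_div]

lemma aux_trig (k : ℕ) (θ : ℝ) (h : Real.sin (((k:ℝ)+2)*θ) = 0) :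
    ∑ j ∈ Finset.range k, Real.sin (((j:ℝ)+2)*θ) * Real.sin (((j:ℝ)+1)*θ)
      = Real.cos θ * ∑ j ∈ Finset.range (k+1), (Real.sin (((j:ℝ)+1)*θ))^2 := by
  have hrec : ∀ j : ℕ, Real.sin (((j:ℝ)+2)*θ) + Real.sin ((j:ℝ)*θ)
      = 2 * Real.cos θ * Real.sin (((j:ℝ)+1)*θ) := by
    intro j
    have h1 : ((j:ℝ)+2)*θ = ((j:ℝ)+1)*θ + θ := by ring
    have h2 : (j:ℝ)*θ = ((j:ℝ)+1)*θ - θ := by ring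
    rw [h1, h2, Real.sin_add, Real.sin_sub]; ring
  have e1 : 2 * (Real.cos θ * ∑ j ∈ Finset.range (k+1), (Real.sin (((j:ℝ)+1)*θ))^2)
      = ∑ j ∈ Finset.range (k+1),
          Real.sin (((j:ℝ)+1)*θ) * (Real.sin (((j:ℝ)+2)*θ) + Real.sin ((j:ℝ)*θ)) := by
    rw [Finset.mul_sum, Finset.mul_sum]
    refine Finset.sum_congr rfl fun j _ => ?_
    rw [hrec j]; ring
  have e2 : ∑ j ∈ Finset.range (k+1),
      Real.sin (((j:ℝ)+1)*θ) * (Real.sin (((j:ℝ)+2)*θ) + Real.sin ((j:ℝ)*θ))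
      = 2 * ∑ j ∈ Finset.range k, Real.sin (((j:ℝ)+2)*θ) * Real.sin (((j:ℝ)+1)*θ) := by
    rw [Finset.sum_congr rfl (fun (j : ℕ) (_ : j ∈ Finset.range (k+1)) => mul_add
      (Real.sin (((j:ℝ)+1)*θ)) (Real.sin (((j:ℝ)+2)*θ)) (Real.sin ((j:ℝ)*θ))),
      Finset.sum_add_distrib]
    have eA : ∑ j ∈ Finset.range (k+1), Real.sin (((j:ℝ)+1)*θ) * Real.sin (((j:ℝ)+2)*θ)
        = ∑ j ∈ Finset.range k, Real.sin (((j:ℝ)+2)*θ) * Real.sin (((j:ℝ)+1)*θ) := by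
      rw [Finset.sum_range_succ, h, mul_zero, add_zero]
      exact Finset.sum_congr rfl fun j _ => mul_comm _ _
    have eB : ∑ j ∈ Finset.range (k+1), Real.sin (((j:ℝ)+1)*θ) * Real.sin ((j:ℝ)*θ)
        = ∑ j ∈ Finset.range k, Real.sin (((j:ℝ)+2)*θ) * Real.sin (((j:ℝ)+1)*θ) := by
      rw [Finset.sum_range_succ']
      push_cast
      simp only [Real.sin_zero, mul_zero, zero_mul, add_zero]
      refine Finset.sum_congr rfl fun j _ => ?_
      have : (j:ℝ) + 1 + 1 = (j:ℝ) + 2 := by ring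
      rw [this]
    rw [eA, eB]; ring
  linarith [e1, e2]

set_option maxHeartbeats 2000000 in
theorem stmt10 (n k : ℕ) (hk : 1 ≤ k) (A : Matrix (Fin n) (Fin n) ℂ)
    (h1 : opNorm A = 1) (h2 : opNorm (A ^ k) = 1) :
    Real.cos (Real.pi / (k + 2)) ≤ numRadius A := by
  classical
  set T : EuclideanSpace ℂ (Fin n) →L[ℂ] EuclideanSpace ℂ (Fin n) :=
    Matrix.toEuclideanCLM (𝕜 := ℂ) A with hTdef
  have hT1 : ‖T‖ = 1 := h1
  have hTk : ‖T ^ k‖ = 1 := by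
    have e : Matrix.toEuclideanCLM (𝕜 := ℂ) (A ^ k) = T ^ k := map_pow _ _ _
    have h2' : ‖Matrix.toEuclideanCLM (𝕜 := ℂ) (A ^ k)‖ = 1 := h2
    rwa [e] at h2'
  rcases Nat.eq_zero_or_pos n with rfl | hn
  · exfalso
    have hsub : Subsingleton (EuclideanSpace ℂ (Fin 0)) := by infer_instance
    have : ‖T‖ ≤ 0 := by
      refine T.opNorm_le_bound le_rfl fun z => ?_
      have : T z = 0 := Subsingleton.elim _ _
      simp [this]
    rw [hT1] at this; linarith
  haveI : Nonempty (Fin n) := ⟨⟨0, hn⟩⟩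
  haveI : Nontrivial (EuclideanSpace ℂ (Fin n)) := by infer_instance
  have hpow : ∀ m : ℕ, ‖T ^ m‖ ≤ 1 := by
    intro m
    induction m with
    | zero => simpa [pow_zero, ContinuousLinearMap.one_def] using
        ContinuousLinearMap.norm_id_le (E := EuclideanSpace ℂ (Fin n))
    | succ m ih =>
      calc ‖T ^ (m+1)‖ = ‖T ^ m * T‖ := by rw [pow_succ]
        _ ≤ ‖T ^ m‖ * ‖T‖ := norm_mul_le _ _
        _ ≤ 1 * 1 := mul_le_mul ih (le_of_eq hT1) (norm_nonneg _) zero_le_one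
        _ = 1 := one_mul _
  obtain ⟨x, hx1, hxk⟩ := aux_attain (T ^ k)
  rw [hTk] at hxk
  have hnorm : ∀ j, j ≤ k → ‖(T ^ j) x‖ = 1 := by
    intro j hj
    have hle : ‖(T ^ j) x‖ ≤ 1 := by
      calc ‖(T ^ j) x‖ ≤ ‖T ^ j‖ * ‖x‖ := ContinuousLinearMap.le_opNorm _ _
        _ ≤ 1 := by rw [hx1, mul_one]; exact hpow j
    have hcomp : (T ^ (k - j)) ((T ^ j) x) = (T ^ k) x := by
      rw [← ContinuousLinearMap.mul_apply, ← pow_add, Nat.sub_add_cancel hj]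
    have hge : (1:ℝ) ≤ ‖(T ^ j) x‖ := by
      calc (1:ℝ) = ‖(T ^ k) x‖ := hxk.symm
        _ = ‖(T ^ (k - j)) ((T ^ j) x)‖ := by rw [hcomp]
        _ ≤ ‖T ^ (k - j)‖ * ‖(T ^ j) x‖ := ContinuousLinearMap.le_opNorm _ _
        _ ≤ 1 * ‖(T ^ j) x‖ := mul_le_mul_of_nonneg_right (hpow _) (norm_nonneg _)
        _ = ‖(T ^ j) x‖ := one_mul _
    linarith
  have hstep : ∀ i, i + 1 ≤ k → ∀ v, ⟪T ((T ^ i) x), T v⟫_ℂ = ⟪(T ^ i) x, v⟫_ℂ := by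
    intro i hi v
    apply aux_isometric T (le_of_eq hT1) _ _ v
    have e : T ((T ^ i) x) = (T ^ (i+1)) x := by
      rw [pow_succ', ContinuousLinearMap.mul_apply]
    rw [e, hnorm (i+1) hi, hnorm i (le_trans (Nat.le_succ i) hi)]
  have hshift : ∀ i, i ≤ k → ∀ j, ⟪(T ^ i) x, (T ^ (i + j)) x⟫_ℂ = ⟪x, (T ^ j) x⟫_ℂ := by
    intro i
    induction i with
    | zero => intro _ j; simp
    | succ i ih =>
      intro hi j
      have e1 : (T ^ (i+1)) x = T ((T ^ i) x) := by
        rw [pow_succ', ContinuousLinearMap.mul_apply]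
      have e2 : (T ^ (i+1+j)) x = T ((T ^ (i+j)) x) := by
        rw [show i+1+j = (i+j)+1 by ring, pow_succ', ContinuousLinearMap.mul_apply]
      rw [e1, e2, hstep i hi _, ih (le_trans (Nat.le_succ i) hi) j]
  -- setup
  set θ : ℝ := Real.pi / ((k:ℝ) + 2) with hθdef
  set t : ℕ → ℝ := fun j => Real.sin (((j:ℝ)+1) * θ) with htdef
  set ζ : ℂ := Complex.exp (2 * (Real.pi:ℂ) * Complex.I / (((k:ℕ)+2 : ℕ) : ℂ)) with hζdef
  have hζprim : IsPrimitiveRoot ζ (k+2) := Complex.isPrimitiveRoot_exp (k+2) (by omega)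
  have habsζ : ‖ζ‖ = 1 := hζprim.norm'_eq_one (by omega)
  set y : ℕ → EuclideanSpace ℂ (Fin n) := fun l => ∑ j ∈ Finset.range (k+1),
    (((t j : ℝ) : ℂ) * ζ ^ (l*j)) • ((T ^ j) x) with hydef
  have hexp1 : ∀ l, ⟪y l, y l⟫_ℂ = ∑ i ∈ Finset.range (k+1), ∑ j ∈ Finset.range (k+1),
      (((t i : ℝ):ℂ) * ((t j : ℝ):ℂ)) * ((starRingEnd ℂ) (ζ^(l*i)) * ζ^(l*j))
        * ⟪(T ^ i) x, (T ^ j) x⟫_ℂ := by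
    intro l
    rw [hydef]
    rw [sum_inner]
    refine Finset.sum_congr rfl fun i _ => ?_
    rw [inner_sum]
    refine Finset.sum_congr rfl fun j _ => ?_
    rw [inner_smul_left, inner_smul_right, map_mul, Complex.conj_ofReal]
    ring
  have hexp2 : ∀ l, ζ^l * ⟪y l, T (y l)⟫_ℂ = ∑ i ∈ Finset.range (k+1), ∑ j ∈ Finset.range (k+1),
      (((t i : ℝ):ℂ) * ((t j : ℝ):ℂ)) * ((starRingEnd ℂ) (ζ^(l*i)) * ζ^(l*(j+1)))
        * ⟪(T ^ i) x, (T ^ (j+1)) x⟫_ℂ := by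
    intro l
    have hTy : T (y l) = ∑ j ∈ Finset.range (k+1),
        (((t j : ℝ):ℂ) * ζ ^ (l*j)) • ((T ^ (j+1)) x) := by
      rw [hydef, map_sum]
      refine Finset.sum_congr rfl fun j _ => ?_
      rw [ContinuousLinearMap.map_smul]
      congr 1
      rw [pow_succ', ContinuousLinearMap.mul_apply]
    conv_lhs => rw [hydef]
    rw [hTy, sum_inner, Finset.mul_sum]
    refine Finset.sum_congr rfl fun i _ => ?_
    rw [inner_sum, Finset.mul_sum]
    refine Finset.sum_congr rfl fun j _ => ?_
    rw [inner_smul_left, inner_smul_right, map_mul, Complex.conj_ofReal]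
    rw [show l*(j+1) = l*j + l by ring, pow_add]
    ring
  have hone : ∀ i, i ≤ k → ⟪(T ^ i) x, (T ^ i) x⟫_ℂ = 1 := by
    intro i hi
    rw [inner_self_eq_norm_sq_to_K, hnorm i hi]
    norm_num
  have hS1 : ∑ l ∈ Finset.range (k+2), ⟪y l, y l⟫_ℂ
      = ((k+2 : ℕ) : ℂ) * ((∑ j ∈ Finset.range (k+1), (t j)^2 : ℝ) : ℂ) := by
    calc ∑ l ∈ Finset.range (k+2), ⟪y l, y l⟫_ℂ
        = ∑ l ∈ Finset.range (k+2), ∑ i ∈ Finset.range (k+1), ∑ j ∈ Finset.range (k+1),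
            (((t i : ℝ):ℂ) * ((t j : ℝ):ℂ)) * ((starRingEnd ℂ) (ζ^(l*i)) * ζ^(l*j))
              * ⟪(T ^ i) x, (T ^ j) x⟫_ℂ := Finset.sum_congr rfl fun l _ => hexp1 l
      _ = ∑ i ∈ Finset.range (k+1), ∑ j ∈ Finset.range (k+1),
            (((t i : ℝ):ℂ) * ((t j : ℝ):ℂ))
              * (∑ l ∈ Finset.range (k+2), (starRingEnd ℂ) (ζ^(l*i)) * ζ^(l*j))
              * ⟪(T ^ i) x, (T ^ j) x⟫_ℂ := by
          rw [Finset.sum_comm]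
          refine Finset.sum_congr rfl fun i _ => ?_
          rw [Finset.sum_comm]
          refine Finset.sum_congr rfl fun j _ => ?_
          rw [Finset.mul_sum, Finset.sum_mul]
      _ = ∑ i ∈ Finset.range (k+1), ∑ j ∈ Finset.range (k+1),
            (((t i : ℝ):ℂ) * ((t j : ℝ):ℂ))
              * (if i = j then ((k+2:ℕ):ℂ) else 0) * ⟪(T ^ i) x, (T ^ j) x⟫_ℂ := by
          refine Finset.sum_congr rfl fun i hi => Finset.sum_congr rfl fun j hj => ?_
          rw [aux_root_sum (by omega) ζ hζprim i j
            (by have := Finset.mem_range.mp hi; omega)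
            (by have := Finset.mem_range.mp hj; omega)]
      _ = ∑ i ∈ Finset.range (k+1), (((t i : ℝ):ℂ) * ((t i : ℝ):ℂ)) * ((k+2:ℕ):ℂ) := by
          refine Finset.sum_congr rfl fun i hi => ?_
          rw [Finset.sum_eq_single_of_mem i hi (fun j hj hne => by
            rw [if_neg (Ne.symm hne)]; ring)]
          rw [if_pos rfl, hone i (by have := Finset.mem_range.mp hi; omega)]
          ring
      _ = ((k+2 : ℕ) : ℂ) * ((∑ j ∈ Finset.range (k+1), (t j)^2 : ℝ) : ℂ) := by
          push_cast
          rw [Finset.mul_sum]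
          exact Finset.sum_congr rfl fun i _ => by ring
  have hS2 : ∑ l ∈ Finset.range (k+2), ζ^l * ⟪y l, T (y l)⟫_ℂ
      = ((k+2 : ℕ) : ℂ) * ((∑ j ∈ Finset.range k, t (j+1) * t j : ℝ) : ℂ) := by
    calc ∑ l ∈ Finset.range (k+2), ζ^l * ⟪y l, T (y l)⟫_ℂ
        = ∑ l ∈ Finset.range (k+2), ∑ i ∈ Finset.range (k+1), ∑ j ∈ Finset.range (k+1),
            (((t i : ℝ):ℂ) * ((t j : ℝ):ℂ)) * ((starRingEnd ℂ) (ζ^(l*i)) * ζ^(l*(j+1)))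
              * ⟪(T ^ i) x, (T ^ (j+1)) x⟫_ℂ := Finset.sum_congr rfl fun l _ => hexp2 l
      _ = ∑ i ∈ Finset.range (k+1), ∑ j ∈ Finset.range (k+1),
            (((t i : ℝ):ℂ) * ((t j : ℝ):ℂ))
              * (∑ l ∈ Finset.range (k+2), (starRingEnd ℂ) (ζ^(l*i)) * ζ^(l*(j+1)))
              * ⟪(T ^ i) x, (T ^ (j+1)) x⟫_ℂ := by
          rw [Finset.sum_comm]
          refine Finset.sum_congr rfl fun i _ => ?_
          rw [Finset.sum_comm]
          refine Finset.sum_congr rfl fun j _ => ?_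
          rw [Finset.mul_sum, Finset.sum_mul]
      _ = ∑ j ∈ Finset.range (k+1), ∑ i ∈ Finset.range (k+1),
            (((t i : ℝ):ℂ) * ((t j : ℝ):ℂ))
              * (if i = j+1 then ((k+2:ℕ):ℂ) else 0) * ⟪(T ^ i) x, (T ^ (j+1)) x⟫_ℂ := by
          rw [Finset.sum_comm]
          refine Finset.sum_congr rfl fun j hj => Finset.sum_congr rfl fun i hi => ?_
          rw [aux_root_sum (by omega) ζ hζprim i (j+1)
            (by have := Finset.mem_range.mp hi; omega)
            (by have := Finset.mem_range.mp hj; omega)]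
      _ = ∑ j ∈ Finset.range k, (((t (j+1) : ℝ):ℂ) * ((t j : ℝ):ℂ)) * ((k+2:ℕ):ℂ) := by
          rw [Finset.sum_range_succ]
          have hlast : ∑ i ∈ Finset.range (k+1),
              (((t i : ℝ):ℂ) * ((t k : ℝ):ℂ))
                * (if i = k+1 then ((k+2:ℕ):ℂ) else 0) * ⟪(T ^ i) x, (T ^ (k+1)) x⟫_ℂ = 0 :=
            Finset.sum_eq_zero fun i hi => by
              rw [if_neg (by have := Finset.mem_range.mp hi; omega)]
              ring
          rw [hlast, add_zero]
          refine Finset.sum_congr rfl fun j hj => ?_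
          have hjk : j < k := Finset.mem_range.mp hj
          rw [Finset.sum_eq_single_of_mem (j+1) (Finset.mem_range.mpr (by omega))
            (fun i hi hne => by rw [if_neg hne]; ring)]
          rw [if_pos rfl, hone (j+1) (by omega)]
          ring
      _ = ((k+2 : ℕ) : ℂ) * ((∑ j ∈ Finset.range k, t (j+1) * t j : ℝ) : ℂ) := by
          push_cast
          rw [Finset.mul_sum]
          exact Finset.sum_congr rfl fun i _ => by ring
  have hθpos : 0 < θ := by rw [hθdef]; positivity
  have hθltpi : θ < Real.pi := by
    rw [hθdef]
    have h2 : (1:ℝ) < (k:ℝ)+2 := by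
      have : (0:ℝ) ≤ (k:ℝ) := Nat.cast_nonneg k
      linarith
    exact div_lt_self Real.pi_pos h2
  have htpos0 : 0 < t 0 := by
    have : t 0 = Real.sin θ := by rw [htdef]; norm_num
    rw [this]
    exact Real.sin_pos_of_pos_of_lt_pi hθpos hθltpi
  have hsum_pos : 0 < ∑ j ∈ Finset.range (k+1), (t j)^2 :=
    lt_of_lt_of_le (pow_pos htpos0 2)
      (Finset.single_le_sum (f := fun j => (t j)^2) (fun j _ => sq_nonneg _)
        (Finset.mem_range.mpr (by omega)))
  have htrig : ∑ j ∈ Finset.range k, t (j+1) * t j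
      = Real.cos θ * ∑ j ∈ Finset.range (k+1), (t j)^2 := by
    have hsk : Real.sin (((k:ℝ)+2)*θ) = 0 := by
      rw [hθdef, show ((k:ℝ)+2)*(Real.pi/((k:ℝ)+2)) = Real.pi by
        field_simp]
      exact Real.sin_pi
    have haux := aux_trig k θ hsk
    calc ∑ j ∈ Finset.range k, t (j+1) * t j
        = ∑ j ∈ Finset.range k, Real.sin (((j:ℝ)+2)*θ) * Real.sin (((j:ℝ)+1)*θ) := by
          refine Finset.sum_congr rfl fun j _ => ?_
          simp only [htdef]
          have e : (((j+1:ℕ)):ℝ)+1 = (j:ℝ)+2 := by push_cast; ring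
          rw [e]
      _ = Real.cos θ * ∑ j ∈ Finset.range (k+1), (Real.sin (((j:ℝ)+1)*θ))^2 := haux
      _ = Real.cos θ * ∑ j ∈ Finset.range (k+1), (t j)^2 := rfl
  set D : ℕ → ℝ := fun l => (ζ^l * ⟪y l, T (y l)⟫_ℂ).re - Real.cos θ * ‖y l‖^2 with hDdef
  have hnorm_re : ∀ l, ‖y l‖^2 = (⟪y l, y l⟫_ℂ).re := by
    intro l
    have := inner_self_eq_norm_sq (𝕜 := ℂ) (y l)
    simpa [RCLike.re_to_complex] using this.symm
  have hsum_norm : ∑ l ∈ Finset.range (k+2), ‖y l‖^2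
      = ((k:ℝ)+2) * ∑ j ∈ Finset.range (k+1), (t j)^2 := by
    have e : ∑ l ∈ Finset.range (k+2), ‖y l‖^2
        = (∑ l ∈ Finset.range (k+2), ⟪y l, y l⟫_ℂ).re := by
      rw [Complex.re_sum]
      exact Finset.sum_congr rfl fun l _ => hnorm_re l
    rw [e, hS1, show ((k+2:ℕ):ℂ) * ((∑ j ∈ Finset.range (k+1), (t j)^2 : ℝ):ℂ)
      = ((((k:ℝ)+2) * ∑ j ∈ Finset.range (k+1), (t j)^2 : ℝ):ℂ) by push_cast; ring,
      Complex.ofReal_re]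
  have hsum_re : ∑ l ∈ Finset.range (k+2), (ζ^l * ⟪y l, T (y l)⟫_ℂ).re
      = ((k:ℝ)+2) * ∑ j ∈ Finset.range k, t (j+1) * t j := by
    rw [← Complex.re_sum, hS2, show ((k+2:ℕ):ℂ) * ((∑ j ∈ Finset.range k, t (j+1) * t j : ℝ):ℂ)
      = ((((k:ℝ)+2) * ∑ j ∈ Finset.range k, t (j+1) * t j : ℝ):ℂ) by push_cast; ring,
      Complex.ofReal_re]
  have hDsum : ∑ l ∈ Finset.range (k+2), D l = 0 := by
    simp only [hDdef]
    rw [Finset.sum_sub_distrib, ← Finset.mul_sum, hsum_re, hsum_norm, htrig]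
    ring
  have hex : ∃ l ∈ Finset.range (k+2), 0 ≤ D l ∧ 0 < ‖y l‖ := by
    by_contra hcon
    push_neg at hcon
    have hDle : ∀ l ∈ Finset.range (k+2), D l ≤ 0 := by
      intro l hl
      rcases le_or_gt (D l) 0 with h | h
      · exact h
      · exfalso
        have hy0 : ‖y l‖ ≤ 0 := hcon l hl h.le
        have hyl : y l = 0 := norm_le_zero_iff.mp hy0
        have hD0 : D l = 0 := by simp [hDdef, hyl]
        linarith
    have hall := (Finset.sum_eq_zero_iff_of_nonpos hDle).mp hDsum
    have hy0 : ∀ l ∈ Finset.range (k+2), ‖y l‖ ^ 2 = 0 := by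
      intro l hl
      have hle0 := hcon l hl (le_of_eq (hall l hl).symm)
      have h0 : ‖y l‖ = 0 := le_antisymm hle0 (norm_nonneg _)
      rw [h0]; ring
    have hz : ∑ l ∈ Finset.range (k+2), ‖y l‖^2 = 0 := Finset.sum_eq_zero hy0
    rw [hsum_norm] at hz
    nlinarith [hsum_pos]
  obtain ⟨l, hl, hDl, hylpos⟩ := hex
  set c : ℝ := ‖y l‖ with hcdef
  have hc : 0 < c := hylpos
  set u : EuclideanSpace ℂ (Fin n) := ((c⁻¹ : ℝ) : ℂ) • y l with hudef
  have hu1 : ‖u‖ = 1 := by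
    rw [hudef, norm_smul, Complex.norm_real, Real.norm_eq_abs, abs_of_pos (inv_pos.mpr hc), ← hcdef,
      inv_mul_cancel₀ (ne_of_gt hc)]
  have hTu : T u = ((c⁻¹ : ℝ) : ℂ) • T (y l) := by rw [hudef, ContinuousLinearMap.map_smul]
  have hinner_u : ⟪u, T u⟫_ℂ = ((c⁻¹:ℝ):ℂ)^2 * ⟪y l, T (y l)⟫_ℂ := by
    rw [hudef, hTu, inner_smul_left, inner_smul_right, Complex.conj_ofReal]; ring
  have habs_u : ‖⟪u, T u⟫_ℂ‖ = (c⁻¹)^2 * ‖⟪y l, T (y l)⟫_ℂ‖ := by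
    rw [hinner_u, norm_mul, norm_pow, Complex.norm_real, Real.norm_eq_abs, abs_of_pos (inv_pos.mpr hc)]
  have hkey : Real.cos θ * c^2 ≤ ‖⟪y l, T (y l)⟫_ℂ‖ := by
    have h1 : Real.cos θ * c^2 ≤ (ζ^l * ⟪y l, T (y l)⟫_ℂ).re := by
      have hd := hDl
      simp only [hDdef] at hd
      rw [← hcdef] at hd
      linarith
    have h2 : (ζ^l * ⟪y l, T (y l)⟫_ℂ).re ≤ ‖ζ^l * ⟪y l, T (y l)⟫_ℂ‖ :=
      Complex.re_le_norm _
    have h3 : ‖ζ^l * ⟪y l, T (y l)⟫_ℂ‖ = ‖⟪y l, T (y l)⟫_ℂ‖ := by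
      rw [norm_mul, norm_pow, habsζ, one_pow, one_mul]
    linarith
  have hfinal : Real.cos θ ≤ ‖⟪u, T u⟫_ℂ‖ := by
    have e : (c⁻¹)^2 * (Real.cos θ * c^2) = Real.cos θ := by field_simp
    calc Real.cos θ = (c⁻¹)^2 * (Real.cos θ * c^2) := e.symm
      _ ≤ (c⁻¹)^2 * ‖⟪y l, T (y l)⟫_ℂ‖ :=
          mul_le_mul_of_nonneg_left hkey (by positivity)
      _ = ‖⟪u, T u⟫_ℂ‖ := habs_u.symm
  have hLin : Matrix.toEuclideanLin A u = T u := by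
    rw [hTdef, ← Matrix.coe_toEuclideanCLM_eq_toEuclideanLin]
    rfl
  have hmem : ‖⟪u, Matrix.toEuclideanLin A u⟫_ℂ‖ ∈
      {r : ℝ | ∃ x' : EuclideanSpace ℂ (Fin n), ‖x'‖ = 1 ∧
        r = ‖⟪x', Matrix.toEuclideanLin A x'⟫_ℂ‖} := ⟨u, hu1, rfl⟩
  have hbdd : BddAbove {r : ℝ | ∃ x' : EuclideanSpace ℂ (Fin n), ‖x'‖ = 1 ∧
      r = ‖⟪x', Matrix.toEuclideanLin A x'⟫_ℂ‖} := by
    refine ⟨1, fun r hr => ?_⟩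
    obtain ⟨x', hx', hr⟩ := hr
    have hLin' : Matrix.toEuclideanLin A x' = T x' := by
      rw [hTdef, ← Matrix.coe_toEuclideanCLM_eq_toEuclideanLin]
      rfl
    rw [hr, hLin']
    calc ‖⟪x', T x'⟫_ℂ‖ ≤ ‖x'‖ * ‖T x'‖ := norm_inner_le_norm _ _
      _ ≤ ‖x'‖ * (‖T‖ * ‖x'‖) := mul_le_mul_of_nonneg_left (T.le_opNorm x') (norm_nonneg _)
      _ = 1 := by rw [hx', hT1]; ring
  have hres : Real.cos θ ≤ numRadius A := by
    rw [numRadius]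
    refine le_csSup_of_le hbdd hmem ?_
    rw [hLin]
    exact hfinal
  exact hres
end
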